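/- arXiv:1607.00414 — 7 statements merged into one kernel-verified Lean document; each statement's English description precedes it below -/
import Mathlib

section
/- Suppose τ(t)/t → q as t → ∞ for some q ∈ [0,1), t − τ(t) → ∞ as t → ∞, and a > b·(1/(1−q))^γ > 0. Suppose g satisfies: g(0) = 0; g(x) > 0 for all x > 0; g is continuous on [0,∞); g is increasing on (0,δ₁) for some δ₁ > 0; and there is γ ≥ 1 such that g∘G⁻¹ ∈ RV_∞(−γ). If x is a solution of the delay equation with x(t) → 0 as t → ∞, then 0 < liminf_{t→∞} G(x(t))/t ≤ limsup_{t→∞} G(x(t))/t < +∞. -/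
open Filter Set Real MeasureTheory

/-- `f` is regularly varying at infinity with index `α`. -/
def RVatTop (f : ℝ → ℝ) (α : ℝ) : Prop :=
  ∀ lam : ℝ, 0 < lam →
    Filter.Tendsto (fun t => f (lam * t) / f t) Filter.atTop (nhds (lam ^ α))

/-- `G(y) = ∫_y^1 du / g(u)`. -/
noncomputable def Gfun (g : ℝ → ℝ) : ℝ → ℝ := fun y => ∫ u in y..(1:ℝ), 1 / g u

set_option maxHeartbeats 1000000 in
theorem stmt2
    (a b q γ τb δ₁ : ℝ) (τ g ψ x Ginv : ℝ → ℝ)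
    (hb : 0 < b) (hab : b < a) (hτb : 0 < τb)
    (hτcont : ContinuousOn τ (Set.Ici 0))
    (hτnn : ∀ t : ℝ, 0 ≤ t → 0 ≤ τ t)
    (hτinf : IsGLB {y : ℝ | ∃ t : ℝ, 0 ≤ t ∧ y = t - τ t} (-τb))
    -- delay growth hypotheses
    (hq0 : 0 ≤ q) (hq1 : q < 1)
    (hτq : Filter.Tendsto (fun t => τ t / t) Filter.atTop (nhds q))
    (httau : Filter.Tendsto (fun t => t - τ t) Filter.atTop Filter.atTop)
    -- size condition on a and b
    (hγ : 1 ≤ γ)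
    (hbqpos : 0 < b * (1 / (1 - q)) ^ γ)
    (habq : b * (1 / (1 - q)) ^ γ < a)
    -- hypotheses on g
    (hg0 : g 0 = 0)
    (hgpos : ∀ y : ℝ, 0 < y → 0 < g y)
    (hgcont : ContinuousOn g (Set.Ici 0))
    (hδ₁ : 0 < δ₁)
    (hginc : StrictMonoOn g (Set.Ioo 0 δ₁))
    -- the inverse of G
    (hGinv_left : ∀ y ∈ Set.Ioc (0:ℝ) 1, Ginv (Gfun g y) = y)
    (hGinv_right : ∀ z : ℝ, 0 ≤ z → Ginv z ∈ Set.Ioc (0:ℝ) 1 ∧ Gfun g (Ginv z) = z)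
    (hRV : RVatTop (fun z => g (Ginv z)) (-γ))
    -- x is a solution of the delay equation
    (hψcont : ContinuousOn ψ (Set.Icc (-τb) 0))
    (hψpos : ∀ t ∈ Set.Icc (-τb) 0, 0 < ψ t)
    (hxcont : ContinuousOn x (Set.Ici (-τb)))
    (hxpos : ∀ t : ℝ, -τb ≤ t → 0 < x t)
    (hxinit : ∀ t ∈ Set.Icc (-τb) 0, x t = ψ t)
    (hode : ∀ t : ℝ, 0 < t →
      HasDerivAt x (-a * g (x t) + b * g (x (t - τ t))) t)
    (hx0 : Filter.Tendsto x Filter.atTop (nhds 0)) :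
    0 < Filter.liminf (fun t => ((Gfun g (x t) / t : ℝ) : EReal)) Filter.atTop ∧
    Filter.liminf (fun t => ((Gfun g (x t) / t : ℝ) : EReal)) Filter.atTop ≤
      Filter.limsup (fun t => ((Gfun g (x t) / t : ℝ) : EReal)) Filter.atTop ∧
    Filter.limsup (fun t => ((Gfun g (x t) / t : ℝ) : EReal)) Filter.atTop < ⊤ := by
  have h1q : 0 < 1 - q := by linarith
  set y : ℝ → ℝ := fun t => Gfun g (x t) with hy
  -- basic positivity
  have hlb : ∀ t : ℝ, 0 ≤ t → -τb ≤ t - τ t := fun t ht => hτinf.1 ⟨t, ht, rfl⟩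
  have hxpos' : ∀ t : ℝ, 0 ≤ t → 0 < x t := fun t ht => hxpos t (by linarith)
  have hxdel : ∀ t : ℝ, 0 ≤ t → 0 < x (t - τ t) := fun t ht => hxpos _ (hlb t ht)
  -- continuity of 1/g on (0,∞)
  have hcont_inv : ContinuousOn (fun u : ℝ => 1 / g u) (Ioi 0) := by
    apply ContinuousOn.div continuousOn_const (hgcont.mono (fun u (hu : u ∈ Ioi (0:ℝ)) => mem_Ici.mpr (le_of_lt hu)))
    exact fun u hu => (hgpos u hu).ne'
  have hII : ∀ p r : ℝ, 0 < p → 0 < r → IntervalIntegrable (fun u => 1 / g u) volume p r := by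
    intro p r hp hr
    apply ContinuousOn.intervalIntegrable
    apply hcont_inv.mono
    intro u hu
    rcases le_total p r with h | h
    · rw [uIcc_of_le h] at hu; exact lt_of_lt_of_le hp hu.1
    · rw [uIcc_of_ge h] at hu; exact lt_of_lt_of_le hr hu.1
  -- G is strictly decreasing on (0,∞)
  have hGanti : ∀ y1 y2 : ℝ, 0 < y1 → y1 < y2 → Gfun g y2 < Gfun g y1 := by
    intro y1 y2 h1 h12
    have h2 : 0 < y2 := h1.trans h12
    have hsplit := intervalIntegral.integral_add_adjacent_intervals
      (hII y1 y2 h1 h2) (hII y2 1 h2 one_pos)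
    have hpos : 0 < ∫ u in y1..y2, 1 / g u := by
      apply intervalIntegral.intervalIntegral_pos_of_pos_on (hII y1 y2 h1 h2) _ h12
      intro u hu; exact div_pos one_pos (hgpos u (h1.trans hu.1))
    have he : Gfun g y1 = (∫ u in y1..y2, 1 / g u) + Gfun g y2 := by
      simp only [Gfun]; linarith [hsplit]
    linarith
  have hG1 : Gfun g 1 = 0 := intervalIntegral.integral_same
  have hle1 : ∀ u : ℝ, 0 < u → 0 ≤ Gfun g u → u ≤ 1 := by
    intro u hu h0
    by_contra h; push_neg at h
    have := hGanti 1 u one_pos h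
    rw [hG1] at this; linarith
  -- chain rule: derivative of y
  have hyderiv : ∀ t : ℝ, 0 < t →
      HasDerivAt y (a - b * (g (x (t - τ t)) / g (x t))) t := by
    intro t ht
    have hxt := hxpos' t ht.le
    have hgxt := hgpos _ hxt
    have hGd : HasDerivAt (Gfun g) (-(1 / g (x t))) (x t) := by
      exact intervalIntegral.integral_hasDerivAt_left (hII (x t) 1 hxt one_pos)
        (hcont_inv.stronglyMeasurableAtFilter isOpen_Ioi (x t) hxt)
        (hcont_inv.continuousAt (Ioi_mem_nhds hxt))
    have hc := hGd.comp t (hode t ht)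
    have : (-(1 / g (x t))) * (-a * g (x t) + b * g (x (t - τ t)))
        = a - b * (g (x (t - τ t)) / g (x t)) := by
      field_simp
      ring
    rw [this] at hc
    exact hc
  have hycont : ∀ t : ℝ, 0 < t → ContinuousAt y t := fun t ht =>
    (hyderiv t ht).continuousAt
  -- y tends to infinity
  have hytop : Tendsto y atTop atTop := by
    rw [tendsto_atTop]
    intro M
    obtain ⟨hmem, heqM⟩ := hGinv_right (max M 0) (le_max_right _ _)
    have hxsmall : ∀ᶠ t in atTop, x t < Ginv (max M 0) :=
      hx0.eventually (eventually_lt_nhds hmem.1)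
    filter_upwards [hxsmall, eventually_ge_atTop (0:ℝ)] with t h1 h2
    have := hGanti _ _ (hxpos' t h2) h1
    rw [heqM] at this
    exact le_trans (le_max_left _ _) this.le
  -- upper bound : y t ≤ y 1 + a (t - 1) for t ≥ 1
  have hub : ∀ t : ℝ, 1 ≤ t → y t ≤ y 1 + a * (t - 1) := by
    have hF : ∀ t : ℝ, 0 < t →
        HasDerivAt (fun s => a * s - y s) (a - (a - b * (g (x (t - τ t)) / g (x t)))) t :=
      fun t ht => (((hasDerivAt_id t).const_mul a).sub (hyderiv t ht)).congr_deriv (by ring)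
    have hmono : MonotoneOn (fun s => a * s - y s) (Ici 1) := by
      apply monotoneOn_of_deriv_nonneg (convex_Ici 1)
      · intro t ht
        exact ((continuousAt_const.mul continuousAt_id).sub
          (hycont t (lt_of_lt_of_le one_pos ht))).continuousWithinAt
      · intro t ht
        rw [interior_Ici] at ht
        exact ((hF t (lt_trans one_pos ht)).differentiableAt).differentiableWithinAt
      · intro t ht
        rw [interior_Ici] at ht
        have ht0 : 0 < t := lt_trans one_pos ht
        rw [(hF t ht0).deriv]
        have : 0 ≤ b * (g (x (t - τ t)) / g (x t)) := by
          apply mul_nonneg hb.le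
          exact div_nonneg (hgpos _ (hxdel t ht0.le)).le (hgpos _ (hxpos' t ht0.le)).le
        linarith
    intro t ht
    have := hmono (self_mem_Ici) (mem_Ici.mpr ht) ht
    simp only at this
    linarith
  -- limsup < ⊤
  have hlimsup_lt : Filter.limsup (fun t => ((y t / t : ℝ) : EReal)) Filter.atTop
      < (⊤ : EReal) := by
    refine lt_of_le_of_lt (Filter.limsup_le_of_le (by isBoundedDefault) ?_)
      (EReal.coe_lt_top (a + |y 1 - a|))
    filter_upwards [eventually_ge_atTop (1:ℝ)] with t ht
    rw [EReal.coe_le_coe_iff]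
    have ht0 : 0 < t := lt_of_lt_of_le one_pos ht
    rw [div_le_iff₀ ht0]
    have h1 := hub t ht
    have h2 : |y 1 - a| ≥ y 1 - a := le_abs_self _
    nlinarith [mul_le_mul_of_nonneg_left ht (abs_nonneg (y 1 - a))]
  -- choose ε
  have hbq' : b * (1 - q) ^ (-γ) < a := by
    have : (1 / (1 - q) : ℝ) ^ γ = (1 - q) ^ (-γ) := by
      rw [one_div, Real.inv_rpow h1q.le, ← Real.rpow_neg h1q.le]
    rwa [this] at habq
  obtain ⟨ε, hεpos, hε1q, hεa⟩ :
      ∃ ε : ℝ, 0 < ε ∧ ε < 1 - q ∧ b * ((1 - q - ε) ^ (-γ) + ε) < a := by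
    have hcont : Tendsto (fun ε : ℝ => b * ((1 - q - ε) ^ (-γ) + ε)) (nhdsWithin 0 (Ioi 0))
        (nhds (b * ((1 - q) ^ (-γ) + 0))) := by
      have h1 : Tendsto (fun ε : ℝ => 1 - q - ε) (nhds 0) (nhds (1 - q)) := by
        have hcc : Continuous (fun ε : ℝ => 1 - q - ε) := by continuity
        simpa using hcc.tendsto (0:ℝ)
      have hrp : Tendsto (fun ε : ℝ => (1 - q - ε) ^ (-γ)) (nhds 0)
          (nhds ((1 - q) ^ (-γ))) :=
        ((Real.continuousAt_rpow_const (1 - q) (-γ) (Or.inl h1q.ne')).tendsto).comp h1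
      have hid : Tendsto (fun ε : ℝ => ε) (nhds (0:ℝ)) (nhds (0:ℝ)) := tendsto_id
      exact ((hrp.add hid).const_mul b).mono_left nhdsWithin_le_nhds
    have hlt : b * ((1 - q) ^ (-γ) + 0) < a := by simpa using hbq'
    have h2 : ∀ᶠ ε in nhdsWithin (0:ℝ) (Ioi 0), b * ((1 - q - ε) ^ (-γ) + ε) < a :=
      hcont.eventually_lt_const hlt
    have h3 : ∀ᶠ ε in nhdsWithin (0:ℝ) (Ioi 0), ε < 1 - q :=
      Filter.eventually_iff_exists_mem.mpr ⟨Iio (1 - q),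
        nhdsWithin_le_nhds (Iio_mem_nhds h1q), fun ε hε => hε⟩
    have h4 : ∀ᶠ ε in nhdsWithin (0:ℝ) (Ioi 0), (0:ℝ) < ε := eventually_mem_nhdsWithin
    obtain ⟨ε, h2, h3, h4⟩ := (h2.and (h3.and h4)).exists
    exact ⟨ε, h4, h3, h2⟩
  set lam : ℝ := 1 - q - ε with hlam
  have hlampos : 0 < lam := by simp only [hlam]; linarith
  have hlamlt1 : lam < 1 := by simp only [hlam]; linarith
  set η : ℝ := (a - b * (lam ^ (-γ) + ε)) / 2 with hη
  have hηpos : 0 < η := by simp only [hη]; linarith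
  -- RV threshold
  obtain ⟨U, hU⟩ : ∃ U : ℝ, ∀ u : ℝ, U ≤ u →
      g (Ginv (lam * u)) / g (Ginv u) ≤ lam ^ (-γ) + ε := by
    have := (hRV lam hlampos).eventually_lt_const (show lam ^ (-γ) < lam ^ (-γ) + ε by linarith)
    obtain ⟨U, hU⟩ := eventually_atTop.mp this
    exact ⟨U, fun u hu => (hU u hu).le⟩
  -- monotonicity of g ∘ Ginv for large arguments
  set c : ℝ := min δ₁ 1 / 2 with hc
  have hcpos : 0 < c := by simp only [hc]; positivity
  have hc1 : c < 1 := by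
    simp only [hc]
    have := min_le_right δ₁ 1; linarith
  have hcδ : c < δ₁ := by
    simp only [hc]
    have := min_le_left δ₁ 1; linarith
  set Z₁ : ℝ := Gfun g c with hZ₁
  have hZ₁pos : 0 < Z₁ := by
    have := hGanti c 1 hcpos hc1
    rw [hG1] at this; exact this
  have hGinv_le_c : ∀ z : ℝ, Z₁ ≤ z → Ginv z ≤ c := by
    intro z hz
    have hz0 : 0 ≤ z := le_trans hZ₁pos.le hz
    by_contra h; push_neg at h
    have := hGanti c (Ginv z) hcpos h
    rw [(hGinv_right z hz0).2] at this
    simp only [hZ₁] at hz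
    linarith
  have hGinv_anti : ∀ z1 z2 : ℝ, 0 ≤ z1 → z1 ≤ z2 → Ginv z2 ≤ Ginv z1 := by
    intro z1 z2 h0 h12
    by_contra h; push_neg at h
    have := hGanti (Ginv z1) (Ginv z2) (hGinv_right z1 h0).1.1 h
    rw [(hGinv_right z1 h0).2, (hGinv_right z2 (h0.trans h12)).2] at this
    linarith
  have hgmono : ∀ z1 z2 : ℝ, Z₁ ≤ z1 → z1 ≤ z2 → g (Ginv z2) ≤ g (Ginv z1) := by
    intro z1 z2 h1 h12
    have hz10 : 0 ≤ z1 := le_trans hZ₁pos.le h1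
    have hle := hGinv_anti z1 z2 hz10 h12
    rcases eq_or_lt_of_le hle with h | h
    · rw [h]
    · refine le_of_lt (hginc ?_ ?_ h)
      · exact ⟨(hGinv_right z2 (hz10.trans h12)).1.1,
          lt_of_le_of_lt (hGinv_le_c z2 (h1.trans h12)) hcδ⟩
      · exact ⟨(hGinv_right z1 hz10).1.1, lt_of_le_of_lt (hGinv_le_c z1 h1) hcδ⟩
  -- thresholds
  have hτev : ∀ᶠ t in atTop, τ t ≤ (q + ε) * t := by
    have h1 : ∀ᶠ t in atTop, τ t / t < q + ε :=
      hτq.eventually_lt_const (by linarith)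
    filter_upwards [h1, eventually_gt_atTop (0:ℝ)] with t h1 h2
    rw [div_lt_iff₀ h2] at h1
    linarith
  set M₀ : ℝ := max (max U (Z₁ / lam)) (max Z₁ 1) with hM₀
  obtain ⟨T0, hT0⟩ := eventually_atTop.mp (hτev.and (hytop.eventually_ge_atTop M₀))
  set T : ℝ := max T0 1 with hT
  have hTpos : 0 < T := lt_of_lt_of_le one_pos (le_max_right _ _)
  have hTprop : ∀ t : ℝ, T ≤ t → τ t ≤ (q + ε) * t ∧ M₀ ≤ y t := by
    intro t ht; exact hT0 t (le_trans (le_max_left _ _) ht)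
  set T₄ : ℝ := T / lam with hT₄
  have hTT₄ : T ≤ T₄ := by
    rw [hT₄, le_div_iff₀ hlampos]
    exact mul_le_of_le_one_right hTpos.le hlamlt1.le
  have hTltT₄ : T < T₄ := by
    rw [hT₄, lt_div_iff₀ hlampos]
    exact mul_lt_of_lt_one_right hTpos hlamlt1
  -- the compact minimum for κ
  have hyIcc_cont : ContinuousOn (fun s => y s / s) (Icc T T₄) := by
    intro s hs
    have hs0 : 0 < s := lt_of_lt_of_le hTpos hs.1
    exact ((hycont s hs0).div continuousAt_id hs0.ne').continuousWithinAt
  obtain ⟨sm, hsmmem, hsmmin⟩ := isCompact_Icc.exists_isMinOn (nonempty_Icc.mpr hTT₄) hyIcc_cont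
  have hsm0 : 0 < sm := lt_of_lt_of_le hTpos hsmmem.1
  have hysm : 0 < y sm / sm := by
    apply div_pos _ hsm0
    have := (hTprop sm hsmmem.1).2
    have hM1 : (1:ℝ) ≤ M₀ := le_trans (le_max_right _ _) (le_max_right _ _)
    linarith
  set κ : ℝ := min η (y sm / sm) with hκ
  have hκpos : 0 < κ := lt_min hηpos hysm
  have hκη : κ ≤ η := min_le_left _ _
  have hκIcc : ∀ s : ℝ, s ∈ Icc T T₄ → κ * s ≤ y s := by
    intro s hs
    have hs0 : 0 < s := lt_of_lt_of_le hTpos hs.1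
    have h1 : y sm / sm ≤ y s / s := hsmmin hs
    have h2 : κ ≤ y s / s := le_trans (min_le_right _ _) h1
    rw [le_div_iff₀ hs0] at h2
    linarith
  -- useful facts about M₀
  have hM₀U : U ≤ M₀ := le_trans (le_max_left _ _) (le_max_left _ _)
  have hM₀Z : Z₁ / lam ≤ M₀ := le_trans (le_max_right _ _) (le_max_left _ _)
  have hM₀Z₁ : Z₁ ≤ M₀ := le_trans (le_max_left _ _) (le_max_right _ _)
  have hM₀1 : (1:ℝ) ≤ M₀ := le_trans (le_max_right _ _) (le_max_right _ _)
  -- MAIN CLAIM: y t ≥ κ t for t ≥ T₄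
  have hmain : ∀ t : ℝ, T₄ ≤ t → κ * t ≤ y t := by
    by_contra hcon; push_neg at hcon
    set S : Set ℝ := {t : ℝ | T₄ ≤ t ∧ y t < κ * t} with hS
    have hSne : S.Nonempty := by
      obtain ⟨t, ht1, ht2⟩ := hcon; exact ⟨t, ht1, ht2⟩
    have hSbdd : BddBelow S := ⟨T₄, fun s hs => hs.1⟩
    set t₂ : ℝ := sInf S with ht₂def
    have ht₂ge : T₄ ≤ t₂ := le_csInf hSne (fun s hs => hs.1)
    have ht₂T : T < t₂ := lt_of_lt_of_le hTltT₄ ht₂ge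
    have ht₂pos : 0 < t₂ := lt_trans hTpos ht₂T
    -- before t₂, above the barrier
    have hbefore : ∀ s : ℝ, T ≤ s → s < t₂ → κ * s ≤ y s := by
      intro s hs hst
      by_cases hsT₄ : T₄ ≤ s
      · by_contra h; push_neg at h
        exact absurd (csInf_le hSbdd ⟨hsT₄, h⟩) (not_le.mpr hst)
      · exact hκIcc s ⟨hs, le_of_not_ge hsT₄⟩
    -- y t₂ = κ t₂
    have hge2 : κ * t₂ ≤ y t₂ := by
      have hev : ∀ᶠ s in nhdsWithin t₂ (Iio t₂), κ * s ≤ y s := by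
        filter_upwards [Ioo_mem_nhdsLT_of_mem (show t₂ ∈ Ioc T t₂ from ⟨ht₂T, le_refl _⟩)]
          with s hs
        exact hbefore s hs.1.le hs.2
      have hT2 : Tendsto (fun s => y s - κ * s) (nhdsWithin t₂ (Iio t₂))
          (nhds (y t₂ - κ * t₂)) := by
        apply Tendsto.mono_left _ nhdsWithin_le_nhds
        exact ((hycont t₂ ht₂pos).sub (continuousAt_const.mul continuousAt_id))
      have : (0:ℝ) ≤ y t₂ - κ * t₂ := by
        apply ge_of_tendsto hT2
        filter_upwards [hev] with s hs; linarith
      linarith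
    have hle2 : y t₂ ≤ κ * t₂ := by
      by_contra h; push_neg at h
      have hcontat : ContinuousAt (fun s => y s - κ * s) t₂ :=
        (hycont t₂ ht₂pos).sub (continuousAt_const.mul continuousAt_id)
      have hev : ∀ᶠ s in nhds t₂, 0 < y s - κ * s :=
        hcontat.eventually (eventually_gt_nhds (by linarith : (0:ℝ) < y t₂ - κ * t₂))
      obtain ⟨δ, hδpos, hδ⟩ := Metric.eventually_nhds_iff.mp hev
      have hlow : t₂ + δ / 2 ≤ sInf S := by
        apply le_csInf hSne
        intro s hs
        by_contra hcon2; push_neg at hcon2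
        have hst₂ : t₂ ≤ s := csInf_le hSbdd hs
        have : dist s t₂ < δ := by
          rw [Real.dist_eq, abs_of_nonneg (by linarith)]
          linarith
        have := hδ this
        exact absurd hs.2 (by linarith)
      rw [← ht₂def] at hlow
      linarith
    have heq2 : y t₂ = κ * t₂ := le_antisymm hle2 hge2
    -- the delayed point
    set s₂ : ℝ := t₂ - τ t₂ with hs₂def
    have hτt₂ := (hTprop t₂ ht₂T.le).1
    have hyt₂M := (hTprop t₂ ht₂T.le).2
    have hs₂ge : lam * t₂ ≤ s₂ := by
      have he : lam * t₂ = t₂ - (q + ε) * t₂ := by rw [hlam]; ring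
      rw [he, hs₂def]
      linarith
    have hs₂geT : T ≤ s₂ := by
      have h1 : lam * T₄ = T := by
        rw [hT₄]; field_simp
      calc T = lam * T₄ := h1.symm
        _ ≤ lam * t₂ := mul_le_mul_of_nonneg_left ht₂ge hlampos.le
        _ ≤ s₂ := hs₂ge
    have hs₂pos : 0 < s₂ := lt_of_lt_of_le hTpos hs₂geT
    have hs₂le : s₂ ≤ t₂ := by
      simp only [hs₂def]
      have := hτnn t₂ ht₂pos.le; linarith
    have hys₂ : κ * s₂ ≤ y s₂ := by
      rcases lt_or_eq_of_le hs₂le with h | h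
      · exact hbefore s₂ hs₂geT h
      · rw [h, heq2]
    -- key ratio inequality
    have hkey1 : lam * y t₂ ≤ y s₂ := by
      rw [heq2]
      calc lam * (κ * t₂) = κ * (lam * t₂) := by ring
        _ ≤ κ * s₂ := mul_le_mul_of_nonneg_left hs₂ge hκpos.le
        _ ≤ y s₂ := hys₂
    have hyt₂pos : 0 < y t₂ := lt_of_lt_of_le (lt_of_lt_of_le one_pos hM₀1) hyt₂M
    have hys₂pos : 0 < y s₂ := lt_of_lt_of_le (mul_pos hκpos hs₂pos) hys₂
    -- identify x values with Ginv
    have hxt₂mem : x t₂ ∈ Ioc (0:ℝ) 1 :=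
      ⟨hxpos' t₂ ht₂pos.le, hle1 _ (hxpos' t₂ ht₂pos.le) hyt₂pos.le⟩
    have hxs₂mem : x s₂ ∈ Ioc (0:ℝ) 1 :=
      ⟨hxpos' s₂ hs₂pos.le, hle1 _ (hxpos' s₂ hs₂pos.le) hys₂pos.le⟩
    have hxt₂eq : Ginv (y t₂) = x t₂ := hGinv_left _ hxt₂mem
    have hxs₂eq : Ginv (y s₂) = x s₂ := hGinv_left _ hxs₂mem
    -- bounds
    have hZlam : Z₁ ≤ lam * y t₂ := by
      have : Z₁ / lam ≤ y t₂ := le_trans hM₀Z hyt₂M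
      rw [div_le_iff₀ hlampos] at this
      linarith [this]
    have h1 : g (Ginv (y s₂)) ≤ g (Ginv (lam * y t₂)) := hgmono _ _ hZlam hkey1
    have hgGpos : 0 < g (Ginv (y t₂)) := hgpos _ (hGinv_right (y t₂) hyt₂pos.le).1.1
    have h2 : g (Ginv (lam * y t₂)) ≤ (lam ^ (-γ) + ε) * g (Ginv (y t₂)) := by
      have := hU (y t₂) (le_trans hM₀U hyt₂M)
      rw [div_le_iff₀ hgGpos] at this
      linarith
    have hratio : g (x s₂) / g (x t₂) ≤ lam ^ (-γ) + ε := by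
      rw [← hxs₂eq, ← hxt₂eq, div_le_iff₀ hgGpos]
      exact h1.trans h2
    -- derivative at t₂ is at least 2η
    have hdlow : 2 * η ≤ a - b * (g (x s₂) / g (x t₂)) := by
      have hb1 : b * (g (x s₂) / g (x t₂)) ≤ b * (lam ^ (-γ) + ε) :=
        mul_le_mul_of_nonneg_left hratio hb.le
      simp only [hη]; linarith
    -- derivative at t₂ is at most κ (slope from the left)
    have hd := hyderiv t₂ ht₂pos
    have hslope := hasDerivAt_iff_tendsto_slope.mp hd
    have hdup : a - b * (g (x (t₂ - τ t₂)) / g (x t₂)) ≤ κ := by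
      have hmono' : Tendsto (slope y t₂) (nhdsWithin t₂ (Iio t₂))
          (nhds (a - b * (g (x (t₂ - τ t₂)) / g (x t₂)))) := by
        apply hslope.mono_left
        apply nhdsWithin_mono
        intro s hs
        simp only [mem_compl_iff, mem_singleton_iff]
        exact ne_of_lt hs
      apply le_of_tendsto hmono'
      filter_upwards [Ioo_mem_nhdsLT_of_mem (show t₂ ∈ Ioc T t₂ from ⟨ht₂T, le_refl _⟩)]
        with s hs
      have hsy : κ * s ≤ y s := hbefore s hs.1.le hs.2
      have hst : s - t₂ < 0 := by linarith [hs.2]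
      rw [slope_def_field]
      rw [div_le_iff_of_neg hst]
      rw [heq2]
      have hexp : κ * (s - t₂) = κ * s - κ * t₂ := by ring
      linarith [hexp, hsy]
    have : 2 * η ≤ κ := by
      rw [hs₂def] at hdlow
      linarith
    linarith
  -- conclude
  have hliminf_pos : (0 : EReal) <
      Filter.liminf (fun t => ((y t / t : ℝ) : EReal)) Filter.atTop := by
    have hev : ∀ᶠ t in atTop, ((κ : ℝ) : EReal) ≤ ((y t / t : ℝ) : EReal) := by
      filter_upwards [eventually_ge_atTop T₄] with t ht
      rw [EReal.coe_le_coe_iff, le_div_iff₀ (lt_of_lt_of_le (lt_of_lt_of_le hTpos hTT₄) ht)]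
      linarith [hmain t ht]
    have := Filter.le_liminf_of_le (by isBoundedDefault) hev
    exact lt_of_lt_of_le (EReal.coe_pos.mpr hκpos) this
  refine ⟨hliminf_pos, Filter.liminf_le_limsup, hlimsup_lt⟩
end

section
/- Suppose t − τ(t) → ∞ and τ(t)/t → q ∈ (0,1) as t → ∞. Suppose g satisfies: g(0) = 0; g : [0,∞) → [0,∞) is increasing; g is C¹ and strictly positive on (0,∞); and g ∈ RV_0(β) for some β > 1. If x is a solution of the delay equation with x(t) → 0 as t → ∞, then it is NOT the case that lim_{t→∞} G(x(t))/t = a − b. -/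
open Filter Set Real MeasureTheory

/-- `f` is regularly varying at `0` (from the right) with index `β`. -/
def RVatZero (f : ℝ → ℝ) (β : ℝ) : Prop :=
  ∀ lam : ℝ, 0 < lam →
    Filter.Tendsto (fun y => f (lam * y) / f y) (nhdsWithin 0 (Set.Ioi 0))
      (nhds (lam ^ β))

set_option maxHeartbeats 1000000 in
theorem stmt6
    (a b β q τb : ℝ) (τ g ψ x : ℝ → ℝ)
    (hb : 0 < b) (hab : b < a) (hτb : 0 < τb)
    (hτcont : ContinuousOn τ (Set.Ici 0))
    (hτnn : ∀ t : ℝ, 0 ≤ t → 0 ≤ τ t)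
    (hτinf : IsGLB {y : ℝ | ∃ t : ℝ, 0 ≤ t ∧ y = t - τ t} (-τb))
    -- delay growth hypotheses
    (httau : Filter.Tendsto (fun t => t - τ t) Filter.atTop Filter.atTop)
    (hq0 : 0 < q) (hq1 : q < 1)
    (hτq : Filter.Tendsto (fun t => τ t / t) Filter.atTop (nhds q))
    -- hypotheses on g
    (hg0 : g 0 = 0)
    (hginc : StrictMonoOn g (Set.Ici 0))
    (hgnn : ∀ y : ℝ, 0 ≤ y → 0 ≤ g y)
    (hgC1 : ContDiffOn ℝ 1 g (Set.Ioi 0))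
    (hgpos : ∀ y : ℝ, 0 < y → 0 < g y)
    (hβ : 1 < β)
    (hgRV : RVatZero g β)
    -- x is a solution of the delay equation
    (hψcont : ContinuousOn ψ (Set.Icc (-τb) 0))
    (hψpos : ∀ t ∈ Set.Icc (-τb) 0, 0 < ψ t)
    (hxcont : ContinuousOn x (Set.Ici (-τb)))
    (hxpos : ∀ t : ℝ, -τb ≤ t → 0 < x t)
    (hxinit : ∀ t ∈ Set.Icc (-τb) 0, x t = ψ t)
    (hode : ∀ t : ℝ, 0 < t →
      HasDerivAt x (-a * g (x t) + b * g (x (t - τ t))) t)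
    (hx0 : Filter.Tendsto x Filter.atTop (nhds 0)) :
    ¬ Filter.Tendsto (fun t => Gfun g (x t) / t) Filter.atTop (nhds (a - b)) := by
  intro h
  set f : ℝ → ℝ := fun s => 1 / g s with hf
  have hab' : 0 < a - b := sub_pos.2 hab
  have hgcont : ContinuousOn g (Ioi 0) := hgC1.continuousOn
  have hfc : ContinuousOn f (Ioi 0) :=
    continuousOn_const.div hgcont (fun s hs => (hgpos s hs).ne')
  have hfnn : ∀ s : ℝ, 0 < s → 0 ≤ f s := fun s hs =>
    le_of_lt (one_div_pos.2 (hgpos s hs))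
  have hInt : ∀ p r : ℝ, 0 < p → 0 < r → IntervalIntegrable f volume p r := by
    intro p r hp hr
    apply (hfc.mono ?_).intervalIntegrable
    intro s hs
    exact lt_of_lt_of_le (lt_min hp hr) hs.1
  -- derivative of G
  have hG' : ∀ p : ℝ, 0 < p → HasDerivAt (Gfun g) (-(f p)) p := by
    intro p hp
    have H : HasDerivAt (fun r => ∫ s in (1:ℝ)..r, f s) (f p) p :=
      intervalIntegral.integral_hasDerivAt_right (hInt 1 p one_pos hp)
        (hfc.stronglyMeasurableAtFilter isOpen_Ioi p hp)
        (hfc.continuousAt (isOpen_Ioi.mem_nhds hp))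
    have : HasDerivAt (fun r => -∫ s in (1:ℝ)..r, f s) (-(f p)) p := H.neg
    convert this using 2 with r
    rw [Gfun, intervalIntegral.integral_symm]
  -- G p - G r = ∫ p..r f
  have hGsub : ∀ p r : ℝ, 0 < p → 0 < r →
      Gfun g p - Gfun g r = ∫ s in p..r, f s := by
    intro p r hp hr
    have := intervalIntegral.integral_add_adjacent_intervals
      (hInt p r hp hr) (hInt r 1 hr one_pos)
    simp only [Gfun]
    have h1 : (∫ s in p..(1:ℝ), 1 / g s) = ∫ s in p..(1:ℝ), f s := rfl
    have h2 : (∫ s in r..(1:ℝ), 1 / g s) = ∫ s in r..(1:ℝ), f s := rfl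
    rw [h1, h2]
    linarith
  -- lower bound for G
  have hGlow : ∀ p : ℝ, 0 < p → 2 * p ≤ 1 → p / g (2 * p) ≤ Gfun g p := by
    intro p hp hp1
    have h2p : 0 < 2 * p := by linarith
    have hsplit := intervalIntegral.integral_add_adjacent_intervals
      (hInt p (2*p) hp h2p) (hInt (2*p) 1 h2p one_pos)
    have hA : p * (1 / g (2*p)) ≤ ∫ s in p..(2*p), f s := by
      have hmono := intervalIntegral.integral_mono_on (μ := volume)
        (f := fun _ => 1 / g (2*p)) (g := f)
        (by linarith : p ≤ 2*p) intervalIntegrable_const (hInt p (2*p) hp h2p) ?_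
      · calc p * (1 / g (2*p)) = (2*p - p) • (1 / g (2*p)) := by
              rw [smul_eq_mul]; ring
          _ = ∫ _s in p..(2*p), (1 / g (2*p)) := (intervalIntegral.integral_const _).symm
          _ ≤ _ := hmono
      · intro s hs
        have hs0 : 0 < s := lt_of_lt_of_le hp hs.1
        have : g s ≤ g (2*p) := hginc.monotoneOn (le_of_lt hs0) (le_of_lt h2p) hs.2
        exact one_div_le_one_div_of_le (hgpos s hs0) this
    have hB : 0 ≤ ∫ s in (2*p)..1, f s :=
      intervalIntegral.integral_nonneg hp1 (fun s hs => hfnn s (lt_of_lt_of_le h2p hs.1))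
    have : Gfun g p = (∫ s in p..(2*p), f s) + ∫ s in (2*p)..1, f s := by
      rw [Gfun]; exact hsplit.symm
    rw [this]
    have : p / g (2*p) = p * (1 / g (2*p)) := by ring
    rw [this]
    linarith
  -- upper bound for increments of G
  have hGub : ∀ p r : ℝ, 0 < p → p ≤ r →
      (∫ s in p..r, f s) ≤ (r - p) * (1 / g p) := by
    intro p r hp hpr
    have hr : 0 < r := lt_of_lt_of_le hp hpr
    have hmono := intervalIntegral.integral_mono_on (μ := volume)
      (f := f) (g := fun _ => 1 / g p) hpr (hInt p r hp hr) intervalIntegrable_const ?_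
    · calc (∫ s in p..r, f s) ≤ ∫ _s in p..r, (1 / g p) := hmono
        _ = (r - p) • (1 / g p) := intervalIntegral.integral_const _
        _ = (r - p) * (1 / g p) := by rw [smul_eq_mul]
    · intro s hs
      have hs0 : 0 < s := lt_of_lt_of_le hp hs.1
      have : g p ≤ g s := hginc.monotoneOn (le_of_lt hp) (le_of_lt hs0) hs.1
      exact one_div_le_one_div_of_le (hgpos p hp) this
  -- positivity facts along atTop
  have hlbw : ∀ t : ℝ, 0 ≤ t → -τb ≤ t - τ t := fun t ht => hτinf.1 ⟨t, ht, rfl⟩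
  have hvpos : ∀ᶠ t in atTop, 0 < x t :=
    (eventually_ge_atTop (-τb)).mono (fun t ht => hxpos t ht)
  have hupos : ∀ᶠ t in atTop, 0 < x (t - τ t) :=
    (eventually_ge_atTop 0).mono (fun t ht => hxpos _ (hlbw t ht))
  have hv0 : Tendsto x atTop (nhdsWithin 0 (Ioi 0)) :=
    tendsto_nhdsWithin_iff.2 ⟨hx0, hvpos⟩
  have hu0 : Tendsto (fun t => x (t - τ t)) atTop (nhds 0) := hx0.comp httau
  have hvsmall : ∀ᶠ t in atTop, x t < 1/2 :=
    hx0.eventually_lt_const (by norm_num)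
  have husmall : ∀ᶠ t in atTop, x (t - τ t) < 1/2 :=
    hu0.eventually_lt_const (by norm_num)
  have hwpos : ∀ᶠ t in atTop, 0 < t - τ t := httau.eventually_gt_atTop 0
  -- regular-variation bounds
  have h2β : (0:ℝ) < 2 ^ β + 1 := by positivity
  have hR2 : Tendsto (fun t => g (2 * x t) / g (x t)) atTop (nhds ((2:ℝ) ^ β)) :=
    (hgRV 2 two_pos).comp hv0
  have hE2 : ∀ᶠ t in atTop, g (2 * x t) ≤ ((2:ℝ) ^ β + 1) * g (x t) := by
    filter_upwards [hR2.eventually_lt_const (lt_add_one _), hvpos] with t h1 h2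
    have := (div_lt_iff₀ (hgpos _ h2)).1 h1
    linarith [this]
  set c : ℝ := q / (4 * ((2:ℝ) ^ β + 1)) with hcdef
  have hc : 0 < c := by positivity
  set lam : ℝ := 1 + c with hlamdef
  have hlam1 : 1 < lam := by linarith
  have hlam0 : 0 < lam := by linarith
  have hlamβ : 1 < lam ^ β :=
    (Real.one_lt_rpow_iff_of_pos hlam0).2 (Or.inl ⟨hlam1, by linarith⟩)
  set δ : ℝ := (lam ^ β - 1) / 2 with hδdef
  have hδ : 0 < δ := by simp only [hδdef]; linarith
  have h1δ : 1 + δ < lam ^ β := by simp only [hδdef]; linarith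
  have hRlam : Tendsto (fun t => g (lam * x t) / g (x t)) atTop (nhds (lam ^ β)) :=
    (hgRV lam hlam0).comp hv0
  have hE3 : ∀ᶠ t in atTop, (1 + δ) * g (x t) ≤ g (lam * x t) := by
    filter_upwards [hRlam.eventually_const_lt h1δ, hvpos] with t h1 h2
    have := (lt_div_iff₀ (hgpos _ h2)).1 h1
    linarith [this]
  -- limits for Y
  have h2 : Tendsto (fun t => Gfun g (x (t - τ t)) / (t - τ t)) atTop (nhds (a - b)) :=
    h.comp httau
  have h3 : Tendsto (fun t => (t - τ t) / t) atTop (nhds (1 - q)) := by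
    apply (tendsto_const_nhds.sub hτq).congr'
    filter_upwards [eventually_gt_atTop 0] with t ht
    rw [sub_div, div_self ht.ne']
  have h4 : Tendsto (fun t => Gfun g (x (t - τ t)) / t) atTop
      (nhds ((a - b) * (1 - q))) := by
    apply (h2.mul h3).congr'
    filter_upwards [hwpos, eventually_gt_atTop 0] with t hw ht
    field_simp
  have h5 : Tendsto (fun t => (Gfun g (x t) - Gfun g (x (t - τ t))) / t) atTop
      (nhds ((a - b) - (a - b) * (1 - q))) := by
    apply (h.sub h4).congr
    intro t
    rw [sub_div]
  have hkey : (a - b) * q / 2 < (a - b) - (a - b) * (1 - q) := by nlinarith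
  have hE5 : ∀ᶠ t in atTop,
      (a - b) * q / 2 * t ≤ Gfun g (x t) - Gfun g (x (t - τ t)) := by
    filter_upwards [h5.eventually_const_lt hkey, eventually_gt_atTop 0] with t h1 ht
    have := (lt_div_iff₀ ht).1 h1
    linarith [this]
  have hE6 : ∀ᶠ t in atTop, Gfun g (x t) ≤ 2 * (a - b) * t := by
    filter_upwards [h.eventually_lt_const (by linarith : a - b < 2 * (a - b)),
      eventually_gt_atTop 0] with t h1 ht
    have := (div_lt_iff₀ ht).1 h1
    linarith [this]
  -- the main eventual derivative bound
  set K : ℝ := a - b * (1 + δ) with hKdef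
  have bigE : ∀ᶠ t in atTop, ∃ D : ℝ,
      HasDerivAt (fun s => Gfun g (x s)) D t ∧ D ≤ K := by
    filter_upwards [hvpos, hupos, hvsmall, husmall, hE2, hE3, hE5, hE6,
      eventually_gt_atTop 0] with t hv hu hvs hus e2 e3 e5 e6 ht
    set v : ℝ := x t with hvdef
    set u : ℝ := x (t - τ t) with hudef
    have hgv : 0 < g v := hgpos v hv
    have hg2v : 0 < g (2 * v) := hgpos _ (by linarith)
    -- lower bound on the integral
    have key1 : c * (v / g v) ≤ ∫ s in v..u, f s := by
      rw [← hGsub v u hv hu]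
      have b1 : (a - b) * q / 2 * t ≤ Gfun g v - Gfun g u := e5
      have b2 : q / 4 * Gfun g v ≤ (a - b) * q / 2 * t := by nlinarith
      have b3 : v / g (2 * v) ≤ Gfun g v := hGlow v hv (by linarith)
      have b4 : v / (((2:ℝ) ^ β + 1) * g v) ≤ v / g (2 * v) :=
        div_le_div_of_nonneg_left (le_of_lt hv) hg2v e2
      have b5 : c * (v / g v) = q / 4 * (v / (((2:ℝ) ^ β + 1) * g v)) := by
        rw [hcdef]; field_simp
      rw [b5]
      have b6 : q / 4 * (v / (((2:ℝ) ^ β + 1) * g v)) ≤ q / 4 * Gfun g v := by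
        apply mul_le_mul_of_nonneg_left _ (by positivity)
        exact le_trans b4 b3
      linarith
    have hint_pos : 0 < ∫ s in v..u, f s := lt_of_lt_of_le (by positivity) key1
    have hvu : v < u := by
      by_contra hle
      push_neg at hle
      have : 0 ≤ ∫ s in u..v, f s :=
        intervalIntegral.integral_nonneg hle (fun s hs => hfnn s (lt_of_lt_of_le hu hs.1))
      rw [intervalIntegral.integral_symm] at hint_pos
      linarith
    have key2 : (∫ s in v..u, f s) ≤ (u - v) * (1 / g v) :=
      hGub v u hv (le_of_lt hvu)
    have key3 : lam * v ≤ u := by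
      have : c * (v / g v) ≤ (u - v) * (1 / g v) := le_trans key1 key2
      have h2 := mul_le_mul_of_nonneg_right this (le_of_lt hgv)
      have e1 : c * (v / g v) * g v = c * v := by field_simp
      have e2 : (u - v) * (1 / g v) * g v = u - v := by field_simp
      rw [e1, e2] at h2
      have e3' : lam * v = v + c * v := by rw [hlamdef]; ring
      linarith
    have key4 : (1 + δ) * g v ≤ g u := by
      refine le_trans e3 ?_
      exact hginc.monotoneOn (Set.mem_Ici.2 (by positivity)) (Set.mem_Ici.2 (le_of_lt hu)) key3
    -- derivative
    refine ⟨a - b * (g u / g v), ?_, ?_⟩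
    · have hd := (hG' v hv).comp t (hode t ht)
      have hval : -(f v) * (-a * g v + b * g u) = a - b * (g u / g v) := by
        simp only [hf]
        field_simp
        ring
      rw [← hval]
      exact hd
    · have : 1 + δ ≤ g u / g v := (le_div_iff₀ hgv).2 (by linarith [key4])
      rw [hKdef]
      nlinarith [this]
  obtain ⟨T₀, hT₀⟩ := eventually_atTop.1 bigE
  set T : ℝ := max T₀ 1 with hTdef
  set φ : ℝ → ℝ := fun t => Gfun g (x t) - K * t with hφdef
  have hφderiv : ∀ t ∈ Ici T, ∃ D : ℝ, HasDerivAt φ D t ∧ D ≤ 0 := by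
    intro t ht
    obtain ⟨D, hD, hDK⟩ := hT₀ t (le_trans (le_max_left _ _) ht)
    refine ⟨D - K, ?_, by linarith⟩
    have : HasDerivAt (fun s => K * s) K t := by
      simpa using (hasDerivAt_id t).const_mul K
    exact hD.sub this
  have hanti : AntitoneOn φ (Ici T) := by
    apply antitoneOn_of_deriv_nonpos (convex_Ici T)
    · intro t ht
      obtain ⟨D, hD, _⟩ := hφderiv t ht
      exact hD.continuousAt.continuousWithinAt
    · intro t ht
      rw [interior_Ici] at ht
      obtain ⟨D, hD, _⟩ := hφderiv t (Set.mem_Ici.2 (le_of_lt (Set.mem_Ioi.1 ht)))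
      exact hD.differentiableAt.differentiableWithinAt
    · intro t ht
      rw [interior_Ici] at ht
      obtain ⟨D, hD, hD0⟩ := hφderiv t (Set.mem_Ici.2 (le_of_lt (Set.mem_Ioi.1 ht)))
      rw [hD.deriv]
      exact hD0
  have hboundfun : Tendsto (fun t : ℝ => φ T / t + K) atTop (nhds (0 + K)) :=
    (tendsto_const_nhds.div_atTop tendsto_id).add tendsto_const_nhds
  have hle : ∀ᶠ t in atTop, Gfun g (x t) / t ≤ φ T / t + K := by
    filter_upwards [eventually_ge_atTop T, eventually_gt_atTop 0] with t htT ht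
    have hφle : φ t ≤ φ T := hanti self_mem_Ici htT (by exact htT)
    have : Gfun g (x t) ≤ φ T + K * t := by
      simp only [hφdef] at hφle ⊢
      linarith
    calc Gfun g (x t) / t ≤ (φ T + K * t) / t := by
          gcongr
      _ = φ T / t + K := by field_simp
  have hfinal : a - b ≤ 0 + K := le_of_tendsto_of_tendsto h hboundfun hle
  rw [hKdef] at hfinal
  nlinarith [hfinal, mul_pos hb hδ]
end

section
/- Suppose t − τ(t) → ∞ and τ(t)/t → q ∈ (0,1) as t → ∞, and a < b·(1/(1−q))^{β/(β−1)} (with a > b > 0). Suppose g satisfies: g(0) = 0; g(x) > 0 for all x > 0; g is continuous on [0,∞); g is C¹ on (0,δ₁) with g′(x) > 0 there, for some δ₁ > 0; and g′ ∈ RV_0(β−1) for some β > 1. If x is a solution of the delay equation with x(t) → 0 as t → ∞, then lim_{t→∞} log x(t) / log t = −(1/β)·(1/log(1/(1−q)))·log(a/b). -/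
open Filter Set Real

lemma ratioBounds (g g' : ℝ → ℝ) (β δ₁ : ℝ) (hδ₁ : 0 < δ₁)
    (hg0 : g 0 = 0) (hgcont : ContinuousOn g (Set.Ici 0))
    (hgderiv : ∀ y ∈ Set.Ioo (0:ℝ) δ₁, HasDerivAt g (g' y) y)
    (hg'pos : ∀ y ∈ Set.Ioo (0:ℝ) δ₁, 0 < g' y)
    (hg'RV : RVatZero g' (β - 1))
    (lam : ℝ) (hlam : 1 < lam) (ε : ℝ) (hε : 0 < ε) :
    ∃ δ, 0 < δ ∧ δ ≤ δ₁ ∧ ∀ u ∈ Set.Ioo (0:ℝ) δ,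
      (lam ^ β - ε) * g u ≤ g (lam * u) ∧ g (lam * u) ≤ (lam ^ β + ε) * g u := by
  have hlam0 : (0:ℝ) < lam := lt_trans one_pos hlam
  have hε' : 0 < ε / lam := div_pos hε hlam0
  have H := hg'RV lam hlam0
  have H2 : ∀ᶠ y in nhdsWithin 0 (Set.Ioi 0),
      |g' (lam * y) / g' y - lam ^ (β - 1)| < ε / lam := by
    have := Metric.tendsto_nhds.mp H (ε / lam) hε'
    simpa [Real.dist_eq] using this
  rw [eventually_nhdsWithin_iff, Metric.eventually_nhds_iff] at H2
  obtain ⟨δ₀, hδ₀, hP⟩ := H2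
  refine ⟨min δ₀ (δ₁ / lam), lt_min hδ₀ (div_pos hδ₁ hlam0), ?_, ?_⟩
  · exact le_trans (min_le_right _ _) (le_of_lt (div_lt_self hδ₁ hlam))
  intro u hu
  obtain ⟨hu0, huδ⟩ := hu
  have huδ₀ : u < δ₀ := lt_of_lt_of_le huδ (min_le_left _ _)
  have huδ₁ : u < δ₁ := lt_trans (lt_of_lt_of_le huδ (min_le_right _ _))
    (div_lt_self hδ₁ hlam)
  have huδ₁l : lam * u < δ₁ := by
    have h : u < δ₁ / lam := lt_of_lt_of_le huδ (min_le_right _ _)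
    calc lam * u < lam * (δ₁ / lam) := mul_lt_mul_of_pos_left h hlam0
      _ = δ₁ := by field_simp
  have hyIoo : ∀ y ∈ Set.Ioo (0:ℝ) u, y ∈ Set.Ioo (0:ℝ) δ₁ := by
    intro y hy; exact ⟨hy.1, lt_trans hy.2 huδ₁⟩
  have key : ∀ y ∈ Set.Ioo (0:ℝ) u,
      (lam ^ (β-1) - ε / lam) * g' y < g' (lam * y) ∧
      g' (lam * y) < (lam ^ (β-1) + ε / lam) * g' y := by
    intro y hy
    have hy0 : 0 < y := hy.1
    have hyδ₀ : dist y 0 < δ₀ := by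
      rw [Real.dist_eq, sub_zero, abs_of_pos hy0]; exact lt_trans hy.2 huδ₀
    have habs := abs_lt.mp (hP hyδ₀ hy0)
    have hgy : 0 < g' y := hg'pos y (hyIoo y hy)
    constructor
    · have h2 : lam ^ (β-1) - ε / lam < g' (lam * y) / g' y := by linarith [habs.1]
      exact (lt_div_iff₀ hgy).mp h2
    · have h3 : g' (lam * y) / g' y < lam ^ (β-1) + ε / lam := by linarith [habs.2]
      exact (div_lt_iff₀ hgy).mp h3
  have hcont1 : ContinuousOn (fun v => g (lam * v)) (Set.Icc (0:ℝ) u) := by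
    apply hgcont.comp (Continuous.continuousOn (by continuity))
    intro v hv; exact mul_nonneg (le_of_lt hlam0) hv.1
  have hcont2 : ContinuousOn g (Set.Icc (0:ℝ) u) := hgcont.mono (fun v hv => hv.1)
  have hlampow : lam * lam ^ (β - 1) = lam ^ β := by
    rw [Real.rpow_sub_one (ne_of_gt hlam0)]; field_simp
  have hderivs : ∀ y ∈ Set.Ioo (0:ℝ) u,
      HasDerivAt (fun v => g (lam * v)) (g' (lam * y) * lam) y := by
    intro y hy
    have hly : lam * y ∈ Set.Ioo (0:ℝ) δ₁ := by
      constructor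
      · exact mul_pos hlam0 hy.1
      · calc lam * y < lam * u := mul_lt_mul_of_pos_left hy.2 hlam0
          _ < δ₁ := huδ₁l
    have h1 : HasDerivAt (fun v : ℝ => lam * v) lam y := by
      simpa using (hasDerivAt_id y).const_mul lam
    exact HasDerivAt.comp y (hgderiv (lam * y) hly) h1
  constructor
  · set φ : ℝ → ℝ := fun v => g (lam * v) - (lam ^ β - ε) * g v with hφ
    have hφcont : ContinuousOn φ (Set.Icc 0 u) :=
      hcont1.sub (continuousOn_const.mul hcont2)
    have hφderiv : ∀ y ∈ Set.Ioo (0:ℝ) u,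
        HasDerivAt φ (g' (lam * y) * lam - (lam ^ β - ε) * g' y) y := fun y hy =>
      (hderivs y hy).sub ((hgderiv y (hyIoo y hy)).const_mul _)
    have hmono : MonotoneOn φ (Set.Icc 0 u) := by
      apply monotoneOn_of_deriv_nonneg (convex_Icc 0 u) hφcont
      · intro y hy
        rw [interior_Icc] at hy
        exact (hφderiv y hy).differentiableAt.differentiableWithinAt
      · intro y hy
        rw [interior_Icc] at hy
        rw [(hφderiv y hy).deriv]
        have hk := (key y hy).1
        have hgy : 0 < g' y := hg'pos y (hyIoo y hy)
        have e0 : ε / lam * lam = ε := div_mul_cancel₀ ε (ne_of_gt hlam0)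
        have e1 : (lam ^ (β-1) - ε / lam) * g' y * lam = (lam ^ β - ε) * g' y := by
          linear_combination g' y * hlampow - g' y * e0
        have hk2 := mul_lt_mul_of_pos_right hk hlam0
        rw [e1] at hk2
        linarith
    have h := hmono (Set.left_mem_Icc.mpr (le_of_lt hu0))
      (Set.mem_Icc.mpr ⟨le_of_lt hu0, le_refl u⟩) (le_of_lt hu0)
    simp only [hφ, mul_zero, hg0, sub_zero] at h
    linarith
  · set φ : ℝ → ℝ := fun v => g (lam * v) - (lam ^ β + ε) * g v with hφ
    have hφcont : ContinuousOn φ (Set.Icc 0 u) :=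
      hcont1.sub (continuousOn_const.mul hcont2)
    have hφderiv : ∀ y ∈ Set.Ioo (0:ℝ) u,
        HasDerivAt φ (g' (lam * y) * lam - (lam ^ β + ε) * g' y) y := fun y hy =>
      (hderivs y hy).sub ((hgderiv y (hyIoo y hy)).const_mul _)
    have hmono : AntitoneOn φ (Set.Icc 0 u) := by
      apply antitoneOn_of_deriv_nonpos (convex_Icc 0 u) hφcont
      · intro y hy
        rw [interior_Icc] at hy
        exact (hφderiv y hy).differentiableAt.differentiableWithinAt
      · intro y hy
        rw [interior_Icc] at hy
        rw [(hφderiv y hy).deriv]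
        have hk := (key y hy).2
        have hgy : 0 < g' y := hg'pos y (hyIoo y hy)
        have e0 : ε / lam * lam = ε := div_mul_cancel₀ ε (ne_of_gt hlam0)
        have e1 : (lam ^ (β-1) + ε / lam) * g' y * lam = (lam ^ β + ε) * g' y := by
          linear_combination g' y * hlampow + g' y * e0
        have hk2 := mul_lt_mul_of_pos_right hk hlam0
        rw [e1] at hk2
        linarith
    have h := hmono (Set.left_mem_Icc.mpr (le_of_lt hu0))
      (Set.mem_Icc.mpr ⟨le_of_lt hu0, le_refl u⟩) (le_of_lt hu0)
    simp only [hφ, mul_zero, hg0, sub_zero] at h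
    linarith

lemma powLower (g : ℝ → ℝ) (γ δA : ℝ) (hδA : 0 < δA)
    (hgpos : ∀ y : ℝ, 0 < y → 0 < g y)
    (hgcont : ContinuousOn g (Set.Ici 0))
    (hγ0 : 0 < γ)
    (hratio : ∀ u ∈ Set.Ioo (0:ℝ) δA, g (2 * u) ≤ (2:ℝ) ^ γ * g u) :
    ∃ C, 0 < C ∧ ∀ u ∈ Set.Ioc (0:ℝ) (δA / 2), C * u ^ γ ≤ g u := by
  set x₀ : ℝ := δA / 2 with hx₀
  have hx₀0 : 0 < x₀ := by positivity
  have hne : (Set.Icc (x₀/2) x₀).Nonempty := ⟨x₀, by constructor <;> linarith⟩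
  obtain ⟨z, hz, hzmin⟩ := isCompact_Icc.exists_isMinOn hne
    (hgcont.mono (fun v hv => le_trans (by positivity) hv.1))
  have hz0 : 0 < z := lt_of_lt_of_le (by positivity) hz.1
  have hgz : 0 < g z := hgpos z hz0
  have h2γ : (0:ℝ) < (2:ℝ) ^ γ := Real.rpow_pos_of_pos (by norm_num) γ
  have Q : ∀ n : ℕ, ∀ u : ℝ, x₀ / 2 ^ (n+1) < u → u ≤ x₀ / 2 ^ n →
      g z * (2:ℝ) ^ (-((n:ℝ) * γ)) ≤ g u := by
    intro n
    induction n with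
    | zero =>
      intro u h1 h2
      simp only [pow_zero, div_one, pow_one] at h1 h2
      have : g z ≤ g u := hzmin ⟨le_of_lt (by simpa using h1), h2⟩
      simpa using this
    | succ n ih =>
      intro u h1 h2
      have hu0 : 0 < u := lt_trans (by positivity) h1
      have h2u1 : x₀ / 2 ^ (n+1) < 2 * u := by
        rw [div_lt_iff₀ (by positivity)] at h1 ⊢
        rw [pow_succ] at h1; linarith
      have h2u2 : 2 * u ≤ x₀ / 2 ^ n := by
        rw [le_div_iff₀ (by positivity)] at h2 ⊢
        rw [pow_succ] at h2; linarith
      have hih := ih (2*u) h2u1 h2u2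
      have huδ : u ∈ Set.Ioo (0:ℝ) δA := by
        refine ⟨hu0, ?_⟩
        have h3 : u ≤ x₀ / 2 ^ 1 := by
          calc u ≤ x₀ / 2 ^ (n+1) := h2
            _ ≤ x₀ / 2 ^ 1 := by
              apply div_le_div_of_nonneg_left (le_of_lt hx₀0) (by positivity)
              exact pow_le_pow_right₀ (by norm_num) (by omega)
        have : u ≤ δA / 4 := by rw [pow_one, hx₀] at h3; linarith
        linarith
      have hr := hratio u huδ
      have hBsucc : (2:ℝ) ^ (-(((n:ℕ)+1:ℝ) * γ)) = (2:ℝ) ^ (-((n:ℝ) * γ)) * ((2:ℝ) ^ γ)⁻¹ := by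
        rw [← Real.rpow_neg (by norm_num : (0:ℝ) ≤ 2)]
        rw [← Real.rpow_add (by norm_num : (0:ℝ) < 2)]
        ring_nf
      have key : g z * (2:ℝ) ^ (-((n:ℝ) * γ)) ≤ (2:ℝ) ^ γ * g u := le_trans hih hr
      have : g z * ((2:ℝ) ^ (-((n:ℝ) * γ)) * ((2:ℝ) ^ γ)⁻¹) ≤ g u := by
        rw [← mul_assoc, mul_inv_le_iff₀ h2γ]
        linarith [key]
      calc g z * (2:ℝ) ^ (-((((n:ℕ)+1:ℕ):ℝ) * γ)) =
          g z * ((2:ℝ) ^ (-((n:ℝ) * γ)) * ((2:ℝ) ^ γ)⁻¹) := by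
            rw [← hBsucc]; push_cast; ring_nf
        _ ≤ g u := this
  refine ⟨g z / x₀ ^ γ, by positivity, ?_⟩
  intro u hu
  obtain ⟨hu0, hux₀⟩ := hu
  have hex : ∃ n : ℕ, x₀ / 2 ^ (n+1) < u := by
    obtain ⟨n, hn⟩ := pow_unbounded_of_one_lt (x₀ / u) (by norm_num : (1:ℝ) < 2)
    refine ⟨n, ?_⟩
    rw [div_lt_iff₀ (by positivity)] at hn ⊢
    rw [pow_succ]
    nlinarith [hu0, pow_pos (by norm_num : (0:ℝ) < 2) n]
  classical
  set n := Nat.find hex with hndef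
  have hn1 : x₀ / 2 ^ (n+1) < u := Nat.find_spec hex
  have hn2 : u ≤ x₀ / 2 ^ n := by
    rcases Nat.eq_zero_or_pos n with h0 | hpos
    · rw [h0]; simpa using hux₀
    · obtain ⟨m, hm⟩ := Nat.exists_eq_succ_of_ne_zero (Nat.pos_iff_ne_zero.mp hpos)
      have h5 := Nat.find_min hex (m := m) (by omega)
      rw [← hndef] at *
      rw [hm]
      exact not_lt.mp h5
  have hQ := Q n u hn1 hn2
  have hle : u ^ γ ≤ (x₀ / 2 ^ n) ^ γ := Real.rpow_le_rpow hu0.le hn2 hγ0.le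
  have heq : (x₀ / 2 ^ n) ^ γ = x₀ ^ γ * (2:ℝ) ^ (-((n:ℝ) * γ)) := by
    rw [Real.div_rpow hx₀0.le (by positivity), ← Real.rpow_natCast (2:ℝ) n,
      ← Real.rpow_mul (by norm_num : (0:ℝ) ≤ 2),
      Real.rpow_neg (by norm_num : (0:ℝ) ≤ 2), div_eq_mul_inv]
  calc g z / x₀ ^ γ * u ^ γ ≤ g z / x₀ ^ γ * (x₀ ^ γ * (2:ℝ) ^ (-((n:ℝ) * γ))) := by
        apply mul_le_mul_of_nonneg_left _ (by positivity)
        rw [← heq]; exact hle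
    _ = g z * (2:ℝ) ^ (-((n:ℝ) * γ)) := by
        field_simp
    _ ≤ g u := hQ

lemma rpow_base_anti {x y e : ℝ} (hx : 0 < x) (hxy : x ≤ y) (he : e ≤ 0) : y ^ e ≤ x ^ e := by
  have hy : 0 < y := lt_of_lt_of_le hx hxy
  have h1 : x ^ (-e) ≤ y ^ (-e) := Real.rpow_le_rpow hx.le hxy (by linarith)
  have hx2 : 0 < x ^ (-e) := Real.rpow_pos_of_pos hx _
  calc y ^ e = (y ^ (-e))⁻¹ := by rw [← Real.rpow_neg hy.le, neg_neg]
    _ ≤ (x ^ (-e))⁻¹ := inv_anti₀ hx2 h1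
    _ = x ^ e := by rw [← Real.rpow_neg hx.le, neg_neg]

set_option maxHeartbeats 1000000 in
lemma upperClaim (a b β q c δ₁ : ℝ) (τ g g' x : ℝ → ℝ)
    (hb : 0 < b)
    (hq0 : 0 < q) (hq1 : q < 1)
    (hτq : Filter.Tendsto (fun t => τ t / t) Filter.atTop (nhds q))
    (hτnn : ∀ t : ℝ, 0 ≤ t → 0 ≤ τ t)
    (hc0 : 0 < c)
    (hcb : b * (1-q) ^ (-(c*β)) < a)
    (hcβ : c * β < c + 1)
    (hβ0 : 0 < β)
    (hδ₁ : 0 < δ₁)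
    (hg0 : g 0 = 0)
    (hgpos : ∀ y : ℝ, 0 < y → 0 < g y)
    (hgcont : ContinuousOn g (Set.Ici 0))
    (hgderiv : ∀ y ∈ Set.Ioo (0:ℝ) δ₁, HasDerivAt g (g' y) y)
    (hg'pos : ∀ y ∈ Set.Ioo (0:ℝ) δ₁, 0 < g' y)
    (hg'RV : RVatZero g' (β - 1))
    (hxposP : ∀ t : ℝ, 0 < t → 0 < x t)
    (hxcontAt : ∀ t : ℝ, 0 < t → ContinuousAt x t)
    (hode : ∀ t : ℝ, 0 < t → HasDerivAt x (-a * g (x t) + b * g (x (t - τ t))) t)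
    (hx0 : Filter.Tendsto x Filter.atTop (nhds 0)) :
    ∃ T K : ℝ, 1 ≤ T ∧ 0 < K ∧ ∀ t, T ≤ t → x t ≤ K * t ^ (-c) := by
  -- choose ρ < 1 - q with b * ρ^(-(cβ)) < a
  have h1q : 0 < 1 - q := by linarith
  have hFc : ContinuousAt (fun ρ : ℝ => b * ρ ^ (-(c*β))) (1-q) :=
    continuousAt_const.mul (Real.continuousAt_rpow_const _ _ (Or.inl (ne_of_gt h1q)))
  have hev1 : ∀ᶠ ρ in nhds (1-q), b * ρ ^ (-(c*β)) < a := hFc.eventually_lt_const hcb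
  have hev2 : ∀ᶠ ρ in nhds (1-q), 0 < ρ := eventually_gt_nhds h1q
  have hev3 : ∀ᶠ ρ in nhdsWithin (1-q) (Set.Iio (1-q)),
      (b * ρ ^ (-(c*β)) < a ∧ 0 < ρ) :=
    eventually_nhdsWithin_of_eventually_nhds (hev1.and hev2)
  obtain ⟨ρ, ⟨hρa, hρ0⟩, hρlt⟩ := (hev3.and eventually_mem_nhdsWithin).exists
  rw [Set.mem_Iio] at hρlt
  have hρ1 : ρ < 1 := by linarith
  -- delay bound
  obtain ⟨Tρ, hTρ⟩ := eventually_atTop.mp (hτq.eventually_lt_const (by linarith : q < 1 - ρ))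
  -- lam
  set lam := ρ ^ (-c) with hlamdef
  have hlam0 : 0 < lam := Real.rpow_pos_of_pos hρ0 _
  have hlam : 1 < lam := by
    rw [hlamdef, Real.one_lt_rpow_iff_of_pos hρ0]
    right; exact ⟨hρ1, by linarith⟩
  have hlamβ : lam ^ β = ρ ^ (-(c*β)) := by
    rw [hlamdef, ← Real.rpow_mul hρ0.le]; ring_nf
  have hblam : b * lam ^ β < a := by rw [hlamβ]; exact hρa
  have hlamβ0 : 0 < lam ^ β := Real.rpow_pos_of_pos hlam0 _
  set m := (a - b * lam ^ β) / 2 with hmdef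
  have hm0 : 0 < m := by rw [hmdef]; linarith
  set ε₀ := (a - b * lam ^ β) / (2*b) with hε₀def
  have hε₀ : 0 < ε₀ := div_pos (by linarith) (by linarith)
  have hbmε : b * (lam ^ β + ε₀) = a - m := by
    rw [hε₀def, hmdef]; field_simp; ring
  obtain ⟨δA, hδA0, hδAδ₁, hA⟩ :=
    ratioBounds g g' β δ₁ hδ₁ hg0 hgcont hgderiv hg'pos hg'RV lam hlam ε₀ hε₀
  -- γ
  set γ := (β + (c+1)/c)/2 with hγdef
  have hβc1 : β < (c+1)/c := by rw [lt_div_iff₀ hc0]; linarith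
  have hβγ : β < γ := by rw [hγdef]; linarith
  have hγ0 : 0 < γ := by linarith
  have hcγ : c * γ < c + 1 := by
    have e : c * γ = (c*β + (c+1))/2 := by rw [hγdef]; field_simp
    rw [e]; linarith
  -- powLower
  have h2γβ : (0:ℝ) < (2:ℝ)^γ - (2:ℝ)^β :=
    sub_pos.mpr ((Real.rpow_lt_rpow_left_iff (by norm_num : (1:ℝ) < 2)).mpr hβγ)
  obtain ⟨δB, hδB0, hδBδ₁, hB⟩ :=
    ratioBounds g g' β δ₁ hδ₁ hg0 hgcont hgderiv hg'pos hg'RV 2 (by norm_num)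
      ((2:ℝ)^γ - (2:ℝ)^β) h2γβ
  have hratio2 : ∀ u ∈ Set.Ioo (0:ℝ) δB, g (2*u) ≤ (2:ℝ)^γ * g u := by
    intro u hu
    calc g (2*u) ≤ ((2:ℝ)^β + ((2:ℝ)^γ - (2:ℝ)^β)) * g u := (hB u hu).2
      _ = (2:ℝ)^γ * g u := by ring
  obtain ⟨C, hC0, hCb⟩ := powLower g γ δB hδB0 hgpos hgcont hγ0 hratio2
  -- monotonicity of g
  have hmono : MonotoneOn g (Set.Ioo 0 δ₁) := by
    apply monotoneOn_of_deriv_nonneg (convex_Ioo 0 δ₁)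
      (hgcont.mono (fun v hv => le_of_lt hv.1))
    · intro y hy; rw [interior_Ioo] at hy
      exact (hgderiv y hy).differentiableAt.differentiableWithinAt
    · intro y hy; rw [interior_Ioo] at hy
      rw [(hgderiv y hy).deriv]; exact (hg'pos y hy).le
  -- small scales
  set δ := min δA (δB/2) with hδdef
  have hδ0 : 0 < δ := lt_min hδA0 (by linarith)
  have hδleA : δ ≤ δA := by rw [hδdef]; exact min_le_left _ _
  have hδleB : δ ≤ δB/2 := by rw [hδdef]; exact min_le_right _ _
  have hδδ₁ : δ ≤ δ₁ := le_trans (min_le_left _ _) hδAδ₁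
  have hρc1 : ρ ^ c < 1 := Real.rpow_lt_one hρ0.le hρ1 hc0
  have hρc0 : 0 < ρ ^ c := Real.rpow_pos_of_pos hρ0 _
  set δ' := δ/2 * ρ ^ c with hδ'def
  have hδ'0 : 0 < δ' := by rw [hδ'def]; positivity
  have hδ'δ : δ' < δ/2 := by
    rw [hδ'def]
    exact mul_lt_of_lt_one_right (by linarith) hρc1
  obtain ⟨M, hM⟩ := eventually_atTop.mp (hx0.eventually_lt_const hδ'0)
  set T₀ := max (max 1 Tρ) (max (M/ρ) (c * δ' / (m * C * δ' ^ γ) + 1)) with hT₀def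
  have hT₀1 : 1 ≤ T₀ := le_trans (le_max_left 1 Tρ) (le_max_left _ _)
  have hT₀0 : 0 < T₀ := lt_of_lt_of_le one_pos hT₀1
  have hT₀ρ : Tρ ≤ T₀ := le_trans (le_max_right 1 Tρ) (le_max_left _ _)
  have hT₀M : M ≤ ρ * T₀ := by
    have h1 : M/ρ ≤ T₀ := le_trans (le_max_left _ _) (le_max_right _ _)
    rw [div_le_iff₀ hρ0] at h1; linarith [h1]
  have hT₀m : c * δ' / (m * C * δ' ^ γ) < T₀ :=
    lt_of_lt_of_le (lt_add_one _) (le_trans (le_max_right _ _) (le_max_right _ _))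
  have hρT₀pos : 0 < ρ * T₀ := mul_pos hρ0 hT₀0
  have hρT₀T₀ : ρ * T₀ ≤ T₀ := mul_le_of_le_one_left hT₀0.le hρ1.le
  set K := δ' * T₀ ^ c with hKdef
  have hK0 : 0 < K := mul_pos hδ'0 (Real.rpow_pos_of_pos hT₀0 _)
  set y : ℝ → ℝ := fun t => K * t ^ (-c) with hydef
  have hy_pos : ∀ t : ℝ, 0 < t → 0 < y t := fun t ht =>
    mul_pos hK0 (Real.rpow_pos_of_pos ht _)
  have hy_anti : ∀ s t : ℝ, 0 < s → s ≤ t → y t ≤ y s := fun s t hs hst =>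
    mul_le_mul_of_nonneg_left (rpow_base_anti hs hst (by linarith)) hK0.le
  have hyT₀ : y T₀ = δ' := by
    rw [hydef]; simp only []
    rw [hKdef, mul_assoc, ← Real.rpow_add hT₀0]
    simp
  have hyρT₀ : y (ρ * T₀) = δ/2 := by
    rw [hydef]; simp only []
    rw [Real.mul_rpow hρ0.le hT₀0.le, hKdef, hδ'def]
    have e1 : ρ ^ c * ρ ^ (-c) = 1 := by rw [← Real.rpow_add hρ0]; simp
    have e2 : T₀ ^ c * T₀ ^ (-c) = 1 := by rw [← Real.rpow_add hT₀0]; simp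
    calc δ/2 * ρ^c * T₀^c * (ρ^(-c) * T₀^(-c))
        = δ/2 * ((ρ^c*ρ^(-c)) * (T₀^c*T₀^(-c))) := by ring
      _ = δ/2 := by rw [e1, e2]; ring
  have hybound : ∀ s : ℝ, ρ * T₀ ≤ s → y s ≤ δ/2 := by
    intro s hs
    rw [← hyρT₀]; exact hy_anti (ρ*T₀) s hρT₀pos hs
  have hxsmall : ∀ s : ℝ, ρ * T₀ ≤ s → x s < δ' := fun s hs => hM s (le_trans hT₀M hs)
  -- main strict claim
  have main : ∀ t, T₀ ≤ t → x t < y t := by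
    by_contra hcon
    push_neg at hcon
    obtain ⟨t₂, ht₂T, ht₂⟩ := hcon
    set S := {t : ℝ | T₀ ≤ t ∧ y t ≤ x t} with hSdef
    have hSne : S.Nonempty := ⟨t₂, ht₂T, ht₂⟩
    have hSbdd : BddBelow S := ⟨T₀, fun s hs => hs.1⟩
    have hycont : ∀ t : ℝ, 0 < t → ContinuousAt y t := by
      intro t ht
      exact continuousAt_const.mul (Real.continuousAt_rpow_const _ _ (Or.inl (ne_of_gt ht)))
    have hScl : IsClosed S := by
      have hfc : ContinuousOn (fun t => x t - y t) (Set.Ici T₀) := by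
        intro t ht
        have ht0 : 0 < t := lt_of_lt_of_le hT₀0 ht
        exact ((hxcontAt t ht0).sub (hycont t ht0)).continuousWithinAt
      have hSeq : S = Set.Ici T₀ ∩ (fun t => x t - y t) ⁻¹' (Set.Ici 0) := by
        ext t
        simp only [hSdef, Set.mem_setOf_eq, Set.mem_inter_iff, Set.mem_Ici, Set.mem_preimage,
          sub_nonneg]
      rw [hSeq]
      exact hfc.preimage_isClosed_of_isClosed isClosed_Ici isClosed_Ici
    set t₁ := sInf S with ht₁def
    have ht₁S : t₁ ∈ S := hScl.csInf_mem hSne hSbdd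
    have ht₁T₀ : T₀ ≤ t₁ := ht₁S.1
    have ht₁0 : 0 < t₁ := lt_of_lt_of_le hT₀0 ht₁T₀
    have hlt : ∀ s, T₀ ≤ s → s < t₁ → x s < y s := by
      intro s hsT hst
      by_contra hxs
      push_neg at hxs
      exact absurd (csInf_le hSbdd ⟨hsT, hxs⟩) (not_le.mpr hst)
    have hxT₀ : x T₀ < y T₀ := by rw [hyT₀]; exact hxsmall T₀ hρT₀T₀
    have ht₁gt : T₀ < t₁ := by
      rcases lt_or_eq_of_le ht₁T₀ with h | h
      · exact h
      · exfalso; rw [← h] at ht₁S; exact absurd ht₁S.2 (not_le.mpr hxT₀)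
    have hxyt₁ : x t₁ = y t₁ := by
      refine le_antisymm ?_ ht₁S.2
      have htends : Filter.Tendsto (fun t => x t - y t) (nhdsWithin t₁ (Set.Iio t₁))
          (nhds (x t₁ - y t₁)) :=
        (((hxcontAt t₁ ht₁0).sub (hycont t₁ ht₁0)).continuousWithinAt).tendsto
      have hevneg : ∀ᶠ s in nhdsWithin t₁ (Set.Iio t₁), x s - y s ≤ 0 := by
        filter_upwards [Ioo_mem_nhdsLT ht₁gt] with s hs
        exact le_of_lt (sub_neg.mpr (hlt s hs.1.le hs.2))
      have hle := le_of_tendsto htends hevneg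
      linarith
    have hbefore : ∀ s, ρ * T₀ ≤ s → s ≤ t₁ → x s ≤ y s := by
      intro s hs1 hs2
      rcases lt_or_eq_of_le hs2 with h | h
      · rcases le_or_gt T₀ s with h2 | h2
        · exact (hlt s h2 h).le
        · have h4 := hxsmall s hs1
          have h3 : y T₀ ≤ y s := hy_anti s T₀ (lt_of_lt_of_le hρT₀pos hs1) h2.le
          rw [hyT₀] at h3; linarith
      · rw [h, hxyt₁]
    set s₂ := t₁ - τ t₁ with hs₂def
    have hτt₁ : τ t₁ / t₁ < 1 - ρ := hTρ t₁ (le_trans hT₀ρ ht₁T₀)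
    have hτt₁' : τ t₁ < (1-ρ) * t₁ := by rw [div_lt_iff₀ ht₁0] at hτt₁; linarith
    have hs₂ρ : ρ * t₁ < s₂ := by rw [hs₂def]; linarith
    have hs₂le : s₂ ≤ t₁ := by have := hτnn t₁ ht₁0.le; rw [hs₂def]; linarith
    have hρt₁T₀ : ρ * T₀ ≤ ρ * t₁ := mul_le_mul_of_nonneg_left ht₁T₀ hρ0.le
    have hs₂ρT₀ : ρ * T₀ ≤ s₂ := le_trans hρt₁T₀ hs₂ρ.le
    have hs₂0 : 0 < s₂ := lt_of_lt_of_le hρT₀pos hs₂ρT₀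
    have hδ2δA : δ/2 < δA := by linarith
    have hδ2δ₁ : δ/2 < δ₁ := by linarith
    have hyt₁mem : y t₁ ∈ Set.Ioo (0:ℝ) δA :=
      ⟨hy_pos t₁ ht₁0, lt_of_le_of_lt (hybound t₁ (le_trans hρT₀T₀ ht₁T₀)) hδ2δA⟩
    have hxs₂ : x s₂ ≤ y s₂ := hbefore s₂ hs₂ρT₀ hs₂le
    have hxs₂mem : x s₂ ∈ Set.Ioo (0:ℝ) δ₁ :=
      ⟨hxposP s₂ hs₂0, lt_trans (lt_trans (hxsmall s₂ hs₂ρT₀) hδ'δ) hδ2δ₁⟩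
    have hys₂mem : y s₂ ∈ Set.Ioo (0:ℝ) δ₁ :=
      ⟨hy_pos s₂ hs₂0, lt_of_le_of_lt (hybound s₂ hs₂ρT₀) hδ2δ₁⟩
    have hyρt₁mem : y (ρ * t₁) ∈ Set.Ioo (0:ℝ) δ₁ :=
      ⟨hy_pos _ (mul_pos hρ0 ht₁0), lt_of_le_of_lt (hybound _ hρt₁T₀) hδ2δ₁⟩
    have hgxs₂ : g (x s₂) ≤ g (y s₂) := hmono hxs₂mem hys₂mem hxs₂
    have hys₂ : y s₂ ≤ y (ρ * t₁) := hy_anti (ρ*t₁) s₂ (mul_pos hρ0 ht₁0) hs₂ρ.le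
    have hgyρ : g (y s₂) ≤ g (y (ρ * t₁)) := hmono hys₂mem hyρt₁mem hys₂
    have hyρt₁ : y (ρ * t₁) = lam * y t₁ := by
      rw [hydef]; simp only []
      rw [Real.mul_rpow hρ0.le ht₁0.le, hlamdef]; ring
    have hgA : g (lam * y t₁) ≤ (lam ^ β + ε₀) * g (y t₁) := (hA (y t₁) hyt₁mem).2
    have h5 : g (x s₂) ≤ (lam ^ β + ε₀) * g (y t₁) := by
      calc g (x s₂) ≤ g (y s₂) := hgxs₂
        _ ≤ g (y (ρ * t₁)) := hgyρ
        _ = g (lam * y t₁) := by rw [hyρt₁]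
        _ ≤ _ := hgA
    have hxode : -a * g (x t₁) + b * g (x s₂) ≤ -m * g (y t₁) := by
      have h6 : b * g (x s₂) ≤ (a - m) * g (y t₁) := by
        calc b * g (x s₂) ≤ b * ((lam ^ β + ε₀) * g (y t₁)) :=
              mul_le_mul_of_nonneg_left h5 hb.le
          _ = (b * (lam ^ β + ε₀)) * g (y t₁) := by ring
          _ = (a - m) * g (y t₁) := by rw [hbmε]
      rw [hxyt₁]; linarith
    -- derivative inequality at the crossing
    have hx' := hode t₁ ht₁0
    have hy' : HasDerivAt y (K * (-c * t₁ ^ (-c - 1))) t₁ :=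
      (Real.hasDerivAt_rpow_const (Or.inl (ne_of_gt ht₁0))).const_mul K
    have hd : HasDerivAt (fun t => x t - y t)
        ((-a * g (x t₁) + b * g (x s₂)) - K * (-c * t₁ ^ (-c-1))) t₁ := hx'.sub hy'
    have hslope := hasDerivAt_iff_tendsto_slope.mp hd
    have hslope' : Filter.Tendsto (slope (fun t => x t - y t) t₁)
        (nhdsWithin t₁ (Set.Iio t₁))
        (nhds ((-a * g (x t₁) + b * g (x s₂)) - K * (-c * t₁ ^ (-c-1)))) :=
      hslope.mono_left (nhdsWithin_mono t₁ (fun s hs => ne_of_lt hs))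
    have hge : 0 ≤ (-a * g (x t₁) + b * g (x s₂)) - K * (-c * t₁ ^ (-c-1)) := by
      apply ge_of_tendsto hslope'
      filter_upwards [Ioo_mem_nhdsLT ht₁gt] with s hs
      have hxs : x s - y s < 0 := sub_neg.mpr (hlt s hs.1.le hs.2)
      rw [slope_def_field]
      have hnum : (x t₁ - y t₁) - (x s - y s) ≥ 0 := by
        have heq0 : x t₁ - y t₁ = 0 := by rw [hxyt₁]; ring
        linarith
      have hden : t₁ - s > 0 := by linarith [hs.2]
      have h13 : (x s - y s - (x t₁ - y t₁)) / (s - t₁)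
          = ((x t₁ - y t₁) - (x s - y s)) / (t₁ - s) := by
        rw [← neg_div_neg_eq]; ring_nf
      rw [h13]
      exact div_nonneg hnum (le_of_lt hden)
    -- final numeric inequality
    have hyt₁Ioc : y t₁ ∈ Set.Ioc (0:ℝ) (δB/2) := by
      refine ⟨hy_pos t₁ ht₁0, le_trans (hybound t₁ (le_trans hρT₀T₀ ht₁T₀)) ?_⟩
      linarith
    have hgC : C * (y t₁) ^ γ ≤ g (y t₁) := hCb (y t₁) hyt₁Ioc
    have hyγ : (y t₁) ^ γ = K ^ γ * t₁ ^ (-(c*γ)) := by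
      rw [hydef]; simp only []
      rw [Real.mul_rpow hK0.le (Real.rpow_nonneg ht₁0.le _),
        ← Real.rpow_mul ht₁0.le]
      ring_nf
    have hδ'γ0 : 0 < δ' ^ γ := Real.rpow_pos_of_pos hδ'0 _
    have hfactor : c * K ^ (1-γ) * t₁ ^ (c*γ - c - 1) < m * C := by
      have h8 : t₁ ^ (c*γ - c - 1) ≤ T₀ ^ (c*γ - c - 1) :=
        rpow_base_anti hT₀0 ht₁T₀ (by linarith)
      have hK1γ : K ^ (1-γ) = δ' ^ (1-γ) * T₀ ^ (c*(1-γ)) := by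
        rw [hKdef, Real.mul_rpow hδ'0.le (Real.rpow_nonneg hT₀0.le _),
          ← Real.rpow_mul hT₀0.le]
      have h9 : T₀ ^ (c*(1-γ)) * T₀ ^ (c*γ-c-1) = T₀ ^ (-(1:ℝ)) := by
        rw [← Real.rpow_add hT₀0]; ring_nf
      have hδ'1γ : δ' ^ (1-γ) = δ' / δ' ^ γ := by
        rw [Real.rpow_sub hδ'0, Real.rpow_one]
      have h10 : c * δ' < (m * C * T₀) * δ' ^ γ := by
        have h12 := (div_lt_iff₀ (by positivity : (0:ℝ) < m * C * δ' ^ γ)).mp hT₀m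
        linarith [h12]
      have h11 : c * (δ' / δ' ^ γ) * T₀ ^ (-(1:ℝ)) < m * C := by
        rw [Real.rpow_neg_one]
        have e : c * (δ' / δ' ^ γ) * T₀⁻¹ = c * δ' / (δ' ^ γ * T₀) := by
          field_simp
        rw [e, div_lt_iff₀ (by positivity)]
        linarith [h10]
      calc c * K ^ (1-γ) * t₁ ^ (c*γ - c - 1)
          ≤ c * K ^ (1-γ) * T₀ ^ (c*γ - c - 1) := by
            apply mul_le_mul_of_nonneg_left h8 (by positivity)
        _ = c * (δ' / δ' ^ γ) * (T₀ ^ (c*(1-γ)) * T₀ ^ (c*γ-c-1)) := by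
            rw [hK1γ, hδ'1γ]; ring
        _ = c * (δ' / δ' ^ γ) * T₀ ^ (-(1:ℝ)) := by rw [h9]
        _ < m * C := h11
    have hfin : c * K * t₁ ^ (-c-1) < m * g (y t₁) := by
      have hpos2 : (0:ℝ) < K ^ γ * t₁ ^ (-(c*γ)) := by positivity
      have hsplit : c * K * t₁ ^ (-c-1)
          = (c * K ^ (1-γ) * t₁ ^ (c*γ - c - 1)) * (K ^ γ * t₁ ^ (-(c*γ))) := by
        have e1 : K ^ (1-γ) * K ^ γ = K := by
          rw [← Real.rpow_add hK0]; simp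
        have e2 : t₁ ^ (c*γ - c - 1) * t₁ ^ (-(c*γ)) = t₁ ^ (-c-1) := by
          rw [← Real.rpow_add ht₁0]; ring_nf
        calc c * K * t₁ ^ (-c-1) = c * (K ^ (1-γ) * K ^ γ) * (t₁ ^ (c*γ-c-1) * t₁ ^ (-(c*γ))) := by
              rw [e1, e2]
          _ = (c * K ^ (1-γ) * t₁ ^ (c*γ - c - 1)) * (K ^ γ * t₁ ^ (-(c*γ))) := by ring
      calc c * K * t₁ ^ (-c-1)
          = (c * K ^ (1-γ) * t₁ ^ (c*γ - c - 1)) * (K ^ γ * t₁ ^ (-(c*γ))) := hsplit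
        _ < (m * C) * (K ^ γ * t₁ ^ (-(c*γ))) := mul_lt_mul_of_pos_right hfactor hpos2
        _ = m * (C * (y t₁) ^ γ) := by rw [hyγ]; ring
        _ ≤ m * g (y t₁) := mul_le_mul_of_nonneg_left hgC hm0.le
    linarith [hge, hxode, hfin]
  refine ⟨T₀, K, hT₀1, hK0, fun t ht => (main t ht).le⟩

set_option maxHeartbeats 1000000 in
lemma lowerClaim (a b β q c δ₁ : ℝ) (τ g g' x : ℝ → ℝ)
    (hb : 0 < b)
    (hq0 : 0 < q) (hq1 : q < 1)
    (hτq : Filter.Tendsto (fun t => τ t / t) Filter.atTop (nhds q))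
    (hτnn : ∀ t : ℝ, 0 ≤ t → 0 ≤ τ t)
    (hc0 : 0 < c)
    (hcb : a < b * (1-q) ^ (-(c*β)))
    (hβ0 : 0 < β)
    (hδ₁ : 0 < δ₁)
    (hg0 : g 0 = 0)
    (hgpos : ∀ y : ℝ, 0 < y → 0 < g y)
    (hgcont : ContinuousOn g (Set.Ici 0))
    (hgderiv : ∀ y ∈ Set.Ioo (0:ℝ) δ₁, HasDerivAt g (g' y) y)
    (hg'pos : ∀ y ∈ Set.Ioo (0:ℝ) δ₁, 0 < g' y)
    (hg'RV : RVatZero g' (β - 1))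
    (hxposP : ∀ t : ℝ, 0 < t → 0 < x t)
    (hxcontAt : ∀ t : ℝ, 0 < t → ContinuousAt x t)
    (hode : ∀ t : ℝ, 0 < t → HasDerivAt x (-a * g (x t) + b * g (x (t - τ t))) t)
    (hx0 : Filter.Tendsto x Filter.atTop (nhds 0)) :
    ∃ T K : ℝ, 1 ≤ T ∧ 0 < K ∧ ∀ t, T ≤ t → K * t ^ (-c) ≤ x t := by
  have h1q : 0 < 1 - q := by linarith
  -- choose σ ∈ (1-q, 1) with a < b * σ^(-(cβ))
  have hFc : ContinuousAt (fun σ : ℝ => b * σ ^ (-(c*β))) (1-q) :=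
    continuousAt_const.mul (Real.continuousAt_rpow_const _ _ (Or.inl (ne_of_gt h1q)))
  have hev1 : ∀ᶠ σ in nhds (1-q), a < b * σ ^ (-(c*β)) := hFc.eventually_const_lt hcb
  have hev2 : ∀ᶠ σ in nhds (1-q), σ < 1 := eventually_lt_nhds (by linarith)
  have hev3 : ∀ᶠ σ in nhdsWithin (1-q) (Set.Ioi (1-q)),
      (a < b * σ ^ (-(c*β)) ∧ σ < 1) :=
    eventually_nhdsWithin_of_eventually_nhds (hev1.and hev2)
  obtain ⟨σ, ⟨hσa, hσ1⟩, hσgt⟩ := (hev3.and eventually_mem_nhdsWithin).exists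
  rw [Set.mem_Ioi] at hσgt
  have hσ0 : 0 < σ := by linarith
  set ρ := (1-q)/2 with hρdef
  have hρ0 : 0 < ρ := by rw [hρdef]; linarith
  have hρ1 : ρ < 1 := by rw [hρdef]; linarith
  have hρσ : ρ < σ := by rw [hρdef]; linarith
  -- delay bounds
  obtain ⟨Tρ, hTρ⟩ := eventually_atTop.mp
    (hτq.eventually_lt_const (by rw [hρdef]; linarith : q < 1 - ρ))
  obtain ⟨Tσ, hTσ⟩ := eventually_atTop.mp
    (hτq.eventually_const_lt (by linarith : 1 - σ < q))
  -- lam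
  set lam := σ ^ (-c) with hlamdef
  have hlam0 : 0 < lam := Real.rpow_pos_of_pos hσ0 _
  have hlam : 1 < lam := by
    rw [hlamdef, Real.one_lt_rpow_iff_of_pos hσ0]
    right; exact ⟨hσ1, by linarith⟩
  have hlamβ : lam ^ β = σ ^ (-(c*β)) := by
    rw [hlamdef, ← Real.rpow_mul hσ0.le]; ring_nf
  have hblam : a < b * lam ^ β := by rw [hlamβ]; exact hσa
  set m := (b * lam ^ β - a) / 2 with hmdef
  have hm0 : 0 < m := by rw [hmdef]; linarith
  set ε₀ := (b * lam ^ β - a) / (2*b) with hε₀def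
  have hε₀ : 0 < ε₀ := div_pos (by linarith) (by linarith)
  have hbmε : b * (lam ^ β - ε₀) = a + m := by
    rw [hε₀def, hmdef]; field_simp; ring
  obtain ⟨δA, hδA0, hδAδ₁, hA⟩ :=
    ratioBounds g g' β δ₁ hδ₁ hg0 hgcont hgderiv hg'pos hg'RV lam hlam ε₀ hε₀
  -- monotonicity of g
  have hmono : MonotoneOn g (Set.Ioo 0 δ₁) := by
    apply monotoneOn_of_deriv_nonneg (convex_Ioo 0 δ₁)
      (hgcont.mono (fun v hv => le_of_lt hv.1))
    · intro y hy; rw [interior_Ioo] at hy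
      exact (hgderiv y hy).differentiableAt.differentiableWithinAt
    · intro y hy; rw [interior_Ioo] at hy
      rw [(hgderiv y hy).deriv]; exact (hg'pos y hy).le
  obtain ⟨M, hM⟩ := eventually_atTop.mp (hx0.eventually_lt_const (by linarith : (0:ℝ) < δA/2))
  set T₀ := max (max 1 Tρ) (max Tσ (M/ρ)) with hT₀def
  have hT₀1 : 1 ≤ T₀ := le_trans (le_max_left 1 Tρ) (le_max_left _ _)
  have hT₀0 : 0 < T₀ := lt_of_lt_of_le one_pos hT₀1
  have hT₀ρ : Tρ ≤ T₀ := le_trans (le_max_right 1 Tρ) (le_max_left _ _)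
  have hT₀σ : Tσ ≤ T₀ := le_trans (le_max_left Tσ (M/ρ)) (le_max_right _ _)
  have hT₀M : M ≤ ρ * T₀ := by
    have h1 : M/ρ ≤ T₀ := le_trans (le_max_right Tσ (M/ρ)) (le_max_right _ _)
    rw [div_le_iff₀ hρ0] at h1; linarith [h1]
  have hρT₀pos : 0 < ρ * T₀ := mul_pos hρ0 hT₀0
  have hρT₀T₀ : ρ * T₀ ≤ T₀ := mul_le_of_le_one_left hT₀0.le hρ1.le
  have hxsmall : ∀ s : ℝ, ρ * T₀ ≤ s → x s < δA/2 := fun s hs => hM s (le_trans hT₀M hs)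
  -- minimum of x on [ρT₀, T₀]
  have hxcont' : ContinuousOn x (Set.Icc (ρ*T₀) T₀) := fun t ht =>
    (hxcontAt t (lt_of_lt_of_le hρT₀pos ht.1)).continuousWithinAt
  obtain ⟨z, hz, hzmin⟩ := isCompact_Icc.exists_isMinOn ⟨T₀, hρT₀T₀, le_refl T₀⟩ hxcont'
  set xmin := x z with hxmindef
  have hxmin0 : 0 < xmin := hxposP z (lt_of_lt_of_le hρT₀pos hz.1)
  have hxminsmall : xmin < δA/2 := hxsmall z hz.1
  have hρT₀c0 : 0 < (ρ*T₀) ^ c := Real.rpow_pos_of_pos hρT₀pos _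
  set K := xmin * (ρ*T₀) ^ c with hKdef
  have hK0 : 0 < K := mul_pos hxmin0 hρT₀c0
  set y : ℝ → ℝ := fun t => K * t ^ (-c) with hydef
  have hy_pos : ∀ t : ℝ, 0 < t → 0 < y t := fun t ht =>
    mul_pos hK0 (Real.rpow_pos_of_pos ht _)
  have hy_anti : ∀ s t : ℝ, 0 < s → s ≤ t → y t ≤ y s := fun s t hs hst =>
    mul_le_mul_of_nonneg_left (rpow_base_anti hs hst (by linarith)) hK0.le
  have hyρT₀ : y (ρ * T₀) = xmin := by
    rw [hydef]; simp only []
    rw [hKdef, mul_assoc, ← Real.rpow_add hρT₀pos]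
    simp
  have hybound : ∀ s : ℝ, ρ * T₀ ≤ s → y s ≤ xmin := by
    intro s hs
    rw [← hyρT₀]; exact hy_anti (ρ*T₀) s hρT₀pos hs
  have hinit : ∀ s : ℝ, ρ * T₀ ≤ s → s ≤ T₀ → y s ≤ x s := by
    intro s hs1 hs2
    exact le_trans (hybound s hs1) (hzmin ⟨hs1, hs2⟩)
  have hyT₀lt : y T₀ < x T₀ := by
    have h1 : y T₀ = xmin * ρ ^ c := by
      rw [hydef]; simp only []
      rw [hKdef, Real.mul_rpow hρ0.le hT₀0.le, mul_assoc, mul_assoc,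
        ← Real.rpow_add hT₀0]
      simp
    have hρc1 : ρ ^ c < 1 := Real.rpow_lt_one hρ0.le hρ1 hc0
    have h2 : xmin * ρ ^ c < xmin := mul_lt_of_lt_one_right hxmin0 hρc1
    have h3 : xmin ≤ x T₀ := hzmin ⟨hρT₀T₀, le_refl T₀⟩
    rw [h1]; linarith
  -- main claim
  have main : ∀ t, T₀ ≤ t → y t < x t := by
    by_contra hcon
    push_neg at hcon
    obtain ⟨t₂, ht₂T, ht₂⟩ := hcon
    set S := {t : ℝ | T₀ ≤ t ∧ x t ≤ y t} with hSdef
    have hSne : S.Nonempty := ⟨t₂, ht₂T, ht₂⟩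
    have hSbdd : BddBelow S := ⟨T₀, fun s hs => hs.1⟩
    have hycont : ∀ t : ℝ, 0 < t → ContinuousAt y t := by
      intro t ht
      exact continuousAt_const.mul (Real.continuousAt_rpow_const _ _ (Or.inl (ne_of_gt ht)))
    have hScl : IsClosed S := by
      have hfc : ContinuousOn (fun t => y t - x t) (Set.Ici T₀) := by
        intro t ht
        have ht0 : 0 < t := lt_of_lt_of_le hT₀0 ht
        exact ((hycont t ht0).sub (hxcontAt t ht0)).continuousWithinAt
      have hSeq : S = Set.Ici T₀ ∩ (fun t => y t - x t) ⁻¹' (Set.Ici 0) := by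
        ext t
        simp only [hSdef, Set.mem_setOf_eq, Set.mem_inter_iff, Set.mem_Ici, Set.mem_preimage,
          sub_nonneg]
      rw [hSeq]
      exact hfc.preimage_isClosed_of_isClosed isClosed_Ici isClosed_Ici
    set t₁ := sInf S with ht₁def
    have ht₁S : t₁ ∈ S := hScl.csInf_mem hSne hSbdd
    have ht₁T₀ : T₀ ≤ t₁ := ht₁S.1
    have ht₁0 : 0 < t₁ := lt_of_lt_of_le hT₀0 ht₁T₀
    have hlt : ∀ s, T₀ ≤ s → s < t₁ → y s < x s := by
      intro s hsT hst
      by_contra hxs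
      push_neg at hxs
      exact absurd (csInf_le hSbdd ⟨hsT, hxs⟩) (not_le.mpr hst)
    have ht₁gt : T₀ < t₁ := by
      rcases lt_or_eq_of_le ht₁T₀ with h | h
      · exact h
      · exfalso; rw [← h] at ht₁S; exact absurd ht₁S.2 (not_le.mpr hyT₀lt)
    have hxyt₁ : x t₁ = y t₁ := by
      refine le_antisymm ht₁S.2 ?_
      have htends : Filter.Tendsto (fun t => x t - y t) (nhdsWithin t₁ (Set.Iio t₁))
          (nhds (x t₁ - y t₁)) :=
        (((hxcontAt t₁ ht₁0).sub (hycont t₁ ht₁0)).continuousWithinAt).tendsto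
      have hevpos : ∀ᶠ s in nhdsWithin t₁ (Set.Iio t₁), 0 ≤ x s - y s := by
        filter_upwards [Ioo_mem_nhdsLT ht₁gt] with s hs
        exact le_of_lt (sub_pos.mpr (hlt s hs.1.le hs.2))
      have hle := ge_of_tendsto htends hevpos
      linarith
    have hbefore : ∀ s, ρ * T₀ ≤ s → s ≤ t₁ → y s ≤ x s := by
      intro s hs1 hs2
      rcases lt_or_eq_of_le hs2 with h | h
      · rcases le_or_gt T₀ s with h2 | h2
        · exact (hlt s h2 h).le
        · exact hinit s hs1 h2.le
      · rw [h, hxyt₁]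
    set s₂ := t₁ - τ t₁ with hs₂def
    have hτt₁ : τ t₁ / t₁ < 1 - ρ := hTρ t₁ (le_trans hT₀ρ ht₁T₀)
    have hτt₁' : τ t₁ < (1-ρ) * t₁ := by rw [div_lt_iff₀ ht₁0] at hτt₁; linarith
    have hτt₁σ : 1 - σ < τ t₁ / t₁ := hTσ t₁ (le_trans hT₀σ ht₁T₀)
    have hτt₁σ' : (1-σ) * t₁ < τ t₁ := by rw [lt_div_iff₀ ht₁0] at hτt₁σ; linarith
    have hs₂ρ : ρ * t₁ < s₂ := by rw [hs₂def]; linarith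
    have hs₂σ : s₂ < σ * t₁ := by rw [hs₂def]; linarith
    have hs₂le : s₂ ≤ t₁ := by have := hτnn t₁ ht₁0.le; rw [hs₂def]; linarith
    have hρt₁T₀ : ρ * T₀ ≤ ρ * t₁ := mul_le_mul_of_nonneg_left ht₁T₀ hρ0.le
    have hs₂ρT₀ : ρ * T₀ ≤ s₂ := le_trans hρt₁T₀ hs₂ρ.le
    have hs₂0 : 0 < s₂ := lt_of_lt_of_le hρT₀pos hs₂ρT₀
    have hσt₁0 : 0 < σ * t₁ := mul_pos hσ0 ht₁0
    have hσt₁T₀ : ρ * T₀ ≤ σ * t₁ :=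
      le_trans (mul_le_mul_of_nonneg_right hρσ.le hT₀0.le)
        (mul_le_mul_of_nonneg_left ht₁T₀ hσ0.le)
    have hδAδ2 : δA/2 < δ₁ := by linarith
    have hyt₁mem : y t₁ ∈ Set.Ioo (0:ℝ) δA := by
      refine ⟨hy_pos t₁ ht₁0, ?_⟩
      have := hybound t₁ (le_trans hρT₀T₀ ht₁T₀)
      linarith
    have hxs₂ : y s₂ ≤ x s₂ := hbefore s₂ hs₂ρT₀ hs₂le
    have hxs₂mem : x s₂ ∈ Set.Ioo (0:ℝ) δ₁ :=
      ⟨hxposP s₂ hs₂0, by have := hxsmall s₂ hs₂ρT₀; linarith⟩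
    have hys₂mem : y s₂ ∈ Set.Ioo (0:ℝ) δ₁ :=
      ⟨hy_pos s₂ hs₂0, by have := hybound s₂ hs₂ρT₀; linarith⟩
    have hyσt₁mem : y (σ * t₁) ∈ Set.Ioo (0:ℝ) δ₁ :=
      ⟨hy_pos _ hσt₁0, by have := hybound _ hσt₁T₀; linarith⟩
    have hgxs₂ : g (y s₂) ≤ g (x s₂) := hmono hys₂mem hxs₂mem hxs₂
    have hys₂ : y (σ * t₁) ≤ y s₂ := hy_anti s₂ (σ*t₁) hs₂0 hs₂σ.le
    have hgyσ : g (y (σ * t₁)) ≤ g (y s₂) := hmono hyσt₁mem hys₂mem hys₂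
    have hyσt₁ : y (σ * t₁) = lam * y t₁ := by
      rw [hydef]; simp only []
      rw [Real.mul_rpow hσ0.le ht₁0.le, hlamdef]; ring
    have hgA : (lam ^ β - ε₀) * g (y t₁) ≤ g (lam * y t₁) := (hA (y t₁) hyt₁mem).1
    have h5 : (lam ^ β - ε₀) * g (y t₁) ≤ g (x s₂) := by
      calc (lam ^ β - ε₀) * g (y t₁) ≤ g (lam * y t₁) := hgA
        _ = g (y (σ * t₁)) := by rw [hyσt₁]
        _ ≤ g (y s₂) := hgyσ
        _ ≤ g (x s₂) := hgxs₂
    have hxode : m * g (y t₁) ≤ -a * g (x t₁) + b * g (x s₂) := by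
      have h6 : (a + m) * g (y t₁) ≤ b * g (x s₂) := by
        calc (a + m) * g (y t₁) = (b * (lam ^ β - ε₀)) * g (y t₁) := by rw [hbmε]
          _ = b * ((lam ^ β - ε₀) * g (y t₁)) := by ring
          _ ≤ b * g (x s₂) := mul_le_mul_of_nonneg_left h5 hb.le
      rw [hxyt₁]; linarith
    have hx' := hode t₁ ht₁0
    have hy' : HasDerivAt y (K * (-c * t₁ ^ (-c - 1))) t₁ :=
      (Real.hasDerivAt_rpow_const (Or.inl (ne_of_gt ht₁0))).const_mul K
    have hd : HasDerivAt (fun t => x t - y t)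
        ((-a * g (x t₁) + b * g (x s₂)) - K * (-c * t₁ ^ (-c-1))) t₁ := hx'.sub hy'
    have hslope := hasDerivAt_iff_tendsto_slope.mp hd
    have hslope' : Filter.Tendsto (slope (fun t => x t - y t) t₁)
        (nhdsWithin t₁ (Set.Iio t₁))
        (nhds ((-a * g (x t₁) + b * g (x s₂)) - K * (-c * t₁ ^ (-c-1)))) :=
      hslope.mono_left (nhdsWithin_mono t₁ (fun s hs => ne_of_lt hs))
    have hge : (-a * g (x t₁) + b * g (x s₂)) - K * (-c * t₁ ^ (-c-1)) ≤ 0 := by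
      apply le_of_tendsto hslope'
      filter_upwards [Ioo_mem_nhdsLT ht₁gt] with s hs
      have hxs : 0 < x s - y s := sub_pos.mpr (hlt s hs.1.le hs.2)
      rw [slope_def_field]
      have heq0 : x t₁ - y t₁ = 0 := by rw [hxyt₁]; ring
      have h13 : (x s - y s - (x t₁ - y t₁)) / (s - t₁)
          = ((x t₁ - y t₁) - (x s - y s)) / (t₁ - s) := by
        rw [← neg_div_neg_eq]; ring_nf
      rw [h13]
      apply div_nonpos_of_nonpos_of_nonneg
      · linarith
      · linarith [hs.2]
    have hgyt₁pos : 0 < g (y t₁) := hgpos _ (hy_pos t₁ ht₁0)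
    have hKc : 0 < K * (c * t₁ ^ (-c-1)) :=
      mul_pos hK0 (mul_pos hc0 (Real.rpow_pos_of_pos ht₁0 _))
    have e : K * (-c * t₁ ^ (-c-1)) = -(K * (c * t₁ ^ (-c-1))) := by ring
    rw [e] at hge
    linarith [mul_pos hm0 hgyt₁pos, hKc, hge, hxode]
  refine ⟨T₀, K, hT₀1, hK0, fun t ht => (main t ht).le⟩

set_option maxHeartbeats 1000000 in
theorem stmt8
    (a b β q τb δ₁ : ℝ) (τ g g' ψ x : ℝ → ℝ)
    (hb : 0 < b) (hab : b < a) (hτb : 0 < τb)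
    (hτcont : ContinuousOn τ (Set.Ici 0))
    (hτnn : ∀ t : ℝ, 0 ≤ t → 0 ≤ τ t)
    (hτinf : IsGLB {y : ℝ | ∃ t : ℝ, 0 ≤ t ∧ y = t - τ t} (-τb))
    -- delay growth hypotheses
    (httau : Filter.Tendsto (fun t => t - τ t) Filter.atTop Filter.atTop)
    (hq0 : 0 < q) (hq1 : q < 1)
    (hτq : Filter.Tendsto (fun t => τ t / t) Filter.atTop (nhds q))
    -- size condition on a and b
    (hβ : 1 < β)
    (habq : a < b * (1 / (1 - q)) ^ (β / (β - 1)))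
    -- hypotheses on g
    (hg0 : g 0 = 0)
    (hgpos : ∀ y : ℝ, 0 < y → 0 < g y)
    (hgcont : ContinuousOn g (Set.Ici 0))
    (hδ₁ : 0 < δ₁)
    (hgderiv : ∀ y ∈ Set.Ioo (0:ℝ) δ₁, HasDerivAt g (g' y) y)
    (hg'cont : ContinuousOn g' (Set.Ioo 0 δ₁))
    (hg'pos : ∀ y ∈ Set.Ioo (0:ℝ) δ₁, 0 < g' y)
    (hg'RV : RVatZero g' (β - 1))
    -- x is a solution of the delay equation
    (hψcont : ContinuousOn ψ (Set.Icc (-τb) 0))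
    (hψpos : ∀ t ∈ Set.Icc (-τb) 0, 0 < ψ t)
    (hxcont : ContinuousOn x (Set.Ici (-τb)))
    (hxpos : ∀ t : ℝ, -τb ≤ t → 0 < x t)
    (hxinit : ∀ t ∈ Set.Icc (-τb) 0, x t = ψ t)
    (hode : ∀ t : ℝ, 0 < t →
      HasDerivAt x (-a * g (x t) + b * g (x (t - τ t))) t)
    (hx0 : Filter.Tendsto x Filter.atTop (nhds 0)) :
    Filter.Tendsto (fun t => Real.log (x t) / Real.log t) Filter.atTop
      (nhds (-(1 / β) * (1 / Real.log (1 / (1 - q))) * Real.log (a / b))) := by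
  have h1q : 0 < 1 - q := by linarith
  set L := Real.log (1 / (1 - q)) with hLdef
  have h1q1 : 1 < 1 / (1 - q) := one_lt_one_div h1q (by linarith)
  have hL0 : 0 < L := Real.log_pos h1q1
  have hβ0 : 0 < β := by linarith
  have ha0 : 0 < a := lt_trans hb hab
  have hab1 : 1 < a / b := (one_lt_div hb).mpr hab
  have hlogab : 0 < Real.log (a / b) := Real.log_pos hab1
  set α := Real.log (a / b) / (β * L) with hαdef
  have hα0 : 0 < α := div_pos hlogab (mul_pos hβ0 hL0)
  -- α (β - 1) < 1
  have hαβ : α * (β - 1) < 1 := by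
    have h2 : Real.log (a / b) < (β / (β - 1)) * L := by
      have h3 : Real.log a < Real.log (b * (1 / (1 - q)) ^ (β / (β - 1))) :=
        Real.log_lt_log ha0 habq
      rw [Real.log_mul (ne_of_gt hb) (ne_of_gt (Real.rpow_pos_of_pos (by linarith) _)),
        Real.log_rpow (by linarith)] at h3
      have h4 : Real.log (a / b) = Real.log a - Real.log b :=
        Real.log_div (ne_of_gt ha0) (ne_of_gt hb)
      rw [h4]
      rw [← hLdef] at h3
      linarith
    rw [hαdef, div_mul_eq_mul_div, div_lt_one (mul_pos hβ0 hL0)]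
    have h5 : (β / (β - 1)) * L * (β - 1) = β * L := by
      field_simp [sub_ne_zero.mpr (ne_of_gt hβ)]
    calc Real.log (a / b) * (β - 1) < ((β / (β - 1)) * L) * (β - 1) := by
          apply mul_lt_mul_of_pos_right h2 (by linarith)
      _ = β * L := h5
  -- exponent characterizations
  have hLneg : L = -Real.log (1 - q) := by rw [hLdef, one_div, Real.log_inv]
  have hrw : ∀ c : ℝ, (1 - q) ^ (-(c * β)) = Real.exp (c * β * L) := by
    intro c
    rw [Real.rpow_def_of_pos h1q]
    congr 1
    rw [hLneg]; ring
  have hαchar : α * (β * L) = Real.log (a / b) := by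
    rw [hαdef]; field_simp
  have hkey : ∀ c : ℝ, c < α → b * (1 - q) ^ (-(c * β)) < a := by
    intro c hcα
    rw [hrw]
    have h2 : c * β * L < Real.log (a / b) := by
      have h3 : c * (β * L) < α * (β * L) :=
        mul_lt_mul_of_pos_right hcα (mul_pos hβ0 hL0)
      rw [hαchar] at h3; linarith [h3]
    calc b * Real.exp (c * β * L) < b * Real.exp (Real.log (a / b)) :=
          mul_lt_mul_of_pos_left (Real.exp_lt_exp.mpr h2) hb
      _ = a := by rw [Real.exp_log (by positivity)]; field_simp
  have hkey2 : ∀ c : ℝ, α < c → a < b * (1 - q) ^ (-(c * β)) := by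
    intro c hcα
    rw [hrw]
    have h2 : Real.log (a / b) < c * β * L := by
      have h3 : α * (β * L) < c * (β * L) :=
        mul_lt_mul_of_pos_right hcα (mul_pos hβ0 hL0)
      rw [hαchar] at h3; linarith [h3]
    calc a = b * Real.exp (Real.log (a / b)) := by
          rw [Real.exp_log (by positivity)]; field_simp
      _ < b * Real.exp (c * β * L) :=
          mul_lt_mul_of_pos_left (Real.exp_lt_exp.mpr h2) hb
  have hxposP : ∀ t : ℝ, 0 < t → 0 < x t := fun t ht => hxpos t (by linarith)
  have hxcontAt : ∀ t : ℝ, 0 < t → ContinuousAt x t := fun t ht =>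
    hxcont.continuousAt (Ici_mem_nhds (by linarith))
  have hU : ∀ c : ℝ, 0 < c → c < α →
      ∃ T K : ℝ, 1 ≤ T ∧ 0 < K ∧ ∀ t, T ≤ t → x t ≤ K * t ^ (-c) := by
    intro c hc hcα
    have hcβ : c * β < c + 1 := by
      have h6 : c * (β - 1) < α * (β - 1) :=
        mul_lt_mul_of_pos_right hcα (by linarith)
      nlinarith [hαβ, h6]
    exact upperClaim a b β q c δ₁ τ g g' x hb hq0 hq1 hτq hτnn hc (hkey c hcα) hcβ hβ0
      hδ₁ hg0 hgpos hgcont hgderiv hg'pos hg'RV hxposP hxcontAt hode hx0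
  have hLow : ∀ c : ℝ, α < c →
      ∃ T K : ℝ, 1 ≤ T ∧ 0 < K ∧ ∀ t, T ≤ t → K * t ^ (-c) ≤ x t := by
    intro c hcα
    exact lowerClaim a b β q c δ₁ τ g g' x hb hq0 hq1 hτq hτnn (lt_trans hα0 hcα)
      (hkey2 c hcα) hβ0 hδ₁ hg0 hgpos hgcont hgderiv hg'pos hg'RV hxposP hxcontAt hode hx0
  -- the limit value equals -α
  have hgoal : -(1 / β) * (1 / L) * Real.log (a / b) = -α := by
    rw [hαdef]; field_simp
  rw [hgoal]
  rw [Metric.tendsto_nhds]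
  intro ε hε
  set c₁ := α - min (ε / 4) (α / 2) with hc₁def
  have hminpos : 0 < min (ε / 4) (α / 2) := lt_min (by linarith) (by linarith)
  have hc₁pos : 0 < c₁ := by
    have := min_le_right (ε / 4) (α / 2)
    rw [hc₁def]; linarith
  have hc₁lt : c₁ < α := by rw [hc₁def]; linarith
  have hc₁close : α - c₁ ≤ ε / 4 := by
    have := min_le_left (ε / 4) (α / 2)
    rw [hc₁def]; linarith
  set c₂ := α + ε / 4 with hc₂def
  have hc₂gt : α < c₂ := by rw [hc₂def]; linarith
  obtain ⟨T₁, K₁, hT₁, hK₁, hU₁⟩ := hU c₁ hc₁pos hc₁lt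
  obtain ⟨T₂, K₂, hT₂, hK₂, hL₁⟩ := hLow c₂ hc₂gt
  set R := (|Real.log K₁| + |Real.log K₂| + 1) * (4 / ε) with hRdef
  filter_upwards [eventually_ge_atTop T₁, eventually_ge_atTop T₂,
    eventually_gt_atTop (1:ℝ),
    Real.tendsto_log_atTop.eventually_ge_atTop (max 1 R)] with t h1 h2 h3 h4
  have ht0 : 0 < t := by linarith
  have hLt1 : 1 ≤ Real.log t := le_trans (le_max_left 1 R) h4
  have hLtR : R ≤ Real.log t := le_trans (le_max_right 1 R) h4
  have hLt0 : 0 < Real.log t := by linarith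
  have hxt0 : 0 < x t := hxposP t ht0
  have htc0 : ∀ c : ℝ, (0:ℝ) < t ^ (-c) := fun c => Real.rpow_pos_of_pos ht0 _
  -- upper log bound
  have hub : Real.log (x t) ≤ Real.log K₁ - c₁ * Real.log t := by
    have h5 : Real.log (x t) ≤ Real.log (K₁ * t ^ (-c₁)) :=
      (Real.log_le_log_iff hxt0 (mul_pos hK₁ (htc0 c₁))).mpr (hU₁ t h1)
    rw [Real.log_mul (ne_of_gt hK₁) (ne_of_gt (htc0 c₁)), Real.log_rpow ht0] at h5
    linarith
  have hlb : Real.log K₂ - c₂ * Real.log t ≤ Real.log (x t) := by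
    have h5 : Real.log (K₂ * t ^ (-c₂)) ≤ Real.log (x t) :=
      (Real.log_le_log_iff (mul_pos hK₂ (htc0 c₂)) hxt0).mpr (hL₁ t h2)
    rw [Real.log_mul (ne_of_gt hK₂) (ne_of_gt (htc0 c₂)), Real.log_rpow ht0] at h5
    linarith
  -- dividing by log t
  have hdivu : Real.log (x t) / Real.log t ≤ Real.log K₁ / Real.log t - c₁ := by
    have h6 : Real.log (x t) / Real.log t ≤ (Real.log K₁ - c₁ * Real.log t) / Real.log t :=
      div_le_div_of_nonneg_right hub hLt0.le
    have h7 : (Real.log K₁ - c₁ * Real.log t) / Real.log t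
        = Real.log K₁ / Real.log t - c₁ := by
      field_simp
    linarith [h6, h7.le, h7.ge]
  have hdivl : Real.log K₂ / Real.log t - c₂ ≤ Real.log (x t) / Real.log t := by
    have h6 : (Real.log K₂ - c₂ * Real.log t) / Real.log t ≤ Real.log (x t) / Real.log t :=
      div_le_div_of_nonneg_right hlb hLt0.le
    have h7 : (Real.log K₂ - c₂ * Real.log t) / Real.log t
        = Real.log K₂ / Real.log t - c₂ := by
      field_simp
    linarith [h6, h7.le, h7.ge]
  -- bounding the error terms
  have hRpos : (0:ℝ) < |Real.log K₁| + |Real.log K₂| + 1 := by positivity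
  have herr : (|Real.log K₁| + |Real.log K₂| + 1) / Real.log t ≤ ε / 4 := by
    rw [div_le_iff₀ hLt0]
    have h8 : (|Real.log K₁| + |Real.log K₂| + 1) = (ε / 4) * R := by
      rw [hRdef]; field_simp
    rw [h8]
    exact mul_le_mul_of_nonneg_left hLtR (by linarith)
  have habs1 : Real.log K₁ / Real.log t ≤ (|Real.log K₁| + |Real.log K₂| + 1) / Real.log t := by
    apply div_le_div_of_nonneg_right ?_ hLt0.le
    have := le_abs_self (Real.log K₁)
    have := abs_nonneg (Real.log K₂)
    linarith
  have habs2 : -((|Real.log K₁| + |Real.log K₂| + 1) / Real.log t) ≤ Real.log K₂ / Real.log t := by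
    rw [← neg_div]
    apply div_le_div_of_nonneg_right ?_ hLt0.le
    have := neg_abs_le (Real.log K₂)
    have := abs_nonneg (Real.log K₁)
    linarith
  rw [Real.dist_eq]
  have e : Real.log (x t) / Real.log t - -α = Real.log (x t) / Real.log t + α := by ring
  rw [e, abs_lt]
  constructor
  · linarith [hdivl, habs2, herr, hc₂def.le, hc₂def.ge]
  · linarith [hdivu, habs1, herr, hc₁close]
end

section
/- Let τ : [0,∞) → [0,∞) be continuous with t − τ(t) → ∞ as t → ∞, and let σ be a positive continuous function on [0,∞) such that ∫_{t−τ(t)}^t ds/σ(s) → 1 as t → ∞ and σ(t)/t → λ as t → ∞, where λ ∈ [0,∞] is an extended real. Then τ(t)/t → 1 − e^{−λ} as t → ∞ (with the convention e^{−∞} := 0, so τ(t)/t → 1 when λ = ∞). -/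
open Filter Set Real MeasureTheory

lemma aux_int_upper (σ : ℝ → ℝ) (hσcont : ContinuousOn σ (Set.Ici 0))
    (hσpos : ∀ t : ℝ, 0 ≤ t → 0 < σ t)
    {c u t : ℝ} (hc : 0 < c) (hu : 1 ≤ u) (hut : u ≤ t)
    (hb : ∀ s, u ≤ s → s ≤ t → σ s ≤ c * s) :
    Real.log (t / u) ≤ c * ∫ s in u..t, 1 / σ s := by
  have h0u : (0:ℝ) < u := by linarith
  have hsub : Set.Icc u t ⊆ Set.Ici (0:ℝ) := fun x hx => le_trans h0u.le hx.1
  have hsig : ∀ x ∈ Set.Icc u t, 0 < σ x := fun x hx => hσpos x (le_trans h0u.le hx.1)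
  have huIcc : Set.uIcc u t = Set.Icc u t := Set.uIcc_of_le hut
  have hint1 : IntervalIntegrable (fun s => 1 / σ s) MeasureTheory.volume u t := by
    apply ContinuousOn.intervalIntegrable
    rw [huIcc]
    exact continuousOn_const.div (hσcont.mono hsub) (fun x hx => (hsig x hx).ne')
  have hint2 : IntervalIntegrable (fun s => 1 / (c * s)) MeasureTheory.volume u t := by
    apply ContinuousOn.intervalIntegrable
    rw [huIcc]
    exact continuousOn_const.div (continuousOn_const.mul continuousOn_id)
      (fun x hx => by
        have hx0 : 0 < x := lt_of_lt_of_le h0u hx.1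
        positivity)
  have hmono : (∫ s in u..t, 1 / (c * s)) ≤ ∫ s in u..t, 1 / σ s := by
    apply intervalIntegral.integral_mono_on hut hint2 hint1
    intro x hx
    exact one_div_le_one_div_of_le (hsig x hx) (hb x hx.1 hx.2)
  have h0 : (0:ℝ) ∉ Set.uIcc u t := by
    rw [huIcc]; intro h; linarith [h.1]
  have hcomp : (∫ s in u..t, 1 / (c * s)) = c⁻¹ * Real.log (t / u) := by
    have : (fun s : ℝ => 1 / (c * s)) = fun s : ℝ => c⁻¹ * (1 / s) := by
      funext s; field_simp
    rw [this, intervalIntegral.integral_const_mul, integral_one_div h0]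
  rw [hcomp] at hmono
  calc Real.log (t / u) = c * (c⁻¹ * Real.log (t / u)) := by field_simp
    _ ≤ c * ∫ s in u..t, 1 / σ s := mul_le_mul_of_nonneg_left hmono hc.le

lemma aux_int_lower (σ : ℝ → ℝ) (hσcont : ContinuousOn σ (Set.Ici 0))
    (hσpos : ∀ t : ℝ, 0 ≤ t → 0 < σ t)
    {c u t : ℝ} (hc : 0 < c) (hu : 1 ≤ u) (hut : u ≤ t)
    (hb : ∀ s, u ≤ s → s ≤ t → c * s ≤ σ s) :
    c * (∫ s in u..t, 1 / σ s) ≤ Real.log (t / u) := by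
  have h0u : (0:ℝ) < u := by linarith
  have hsub : Set.Icc u t ⊆ Set.Ici (0:ℝ) := fun x hx => le_trans h0u.le hx.1
  have hsig : ∀ x ∈ Set.Icc u t, 0 < σ x := fun x hx => hσpos x (le_trans h0u.le hx.1)
  have huIcc : Set.uIcc u t = Set.Icc u t := Set.uIcc_of_le hut
  have hint1 : IntervalIntegrable (fun s => 1 / σ s) MeasureTheory.volume u t := by
    apply ContinuousOn.intervalIntegrable
    rw [huIcc]
    exact continuousOn_const.div (hσcont.mono hsub) (fun x hx => (hsig x hx).ne')
  have hint2 : IntervalIntegrable (fun s => 1 / (c * s)) MeasureTheory.volume u t := by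
    apply ContinuousOn.intervalIntegrable
    rw [huIcc]
    exact continuousOn_const.div (continuousOn_const.mul continuousOn_id)
      (fun x hx => by
        have hx0 : 0 < x := lt_of_lt_of_le h0u hx.1
        positivity)
  have hmono : (∫ s in u..t, 1 / σ s) ≤ ∫ s in u..t, 1 / (c * s) := by
    apply intervalIntegral.integral_mono_on hut hint1 hint2
    intro x hx
    have hx0 : 0 < x := lt_of_lt_of_le h0u hx.1
    exact one_div_le_one_div_of_le (by positivity) (hb x hx.1 hx.2)
  have h0 : (0:ℝ) ∉ Set.uIcc u t := by
    rw [huIcc]; intro h; linarith [h.1]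
  have hcomp : (∫ s in u..t, 1 / (c * s)) = c⁻¹ * Real.log (t / u) := by
    have : (fun s : ℝ => 1 / (c * s)) = fun s : ℝ => c⁻¹ * (1 / s) := by
      funext s; field_simp
    rw [this, intervalIntegral.integral_const_mul, integral_one_div h0]
  rw [hcomp] at hmono
  calc c * (∫ s in u..t, 1 / σ s) ≤ c * (c⁻¹ * Real.log (t / u)) :=
        mul_le_mul_of_nonneg_left hmono hc.le
    _ = Real.log (t / u) := by field_simp

open Classical in
theorem stmt10
    (τ σ : ℝ → ℝ) (lam : EReal)
    (hτcont : ContinuousOn τ (Set.Ici 0))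
    (hτnn : ∀ t : ℝ, 0 ≤ t → 0 ≤ τ t)
    (httau : Filter.Tendsto (fun t => t - τ t) Filter.atTop Filter.atTop)
    (hσcont : ContinuousOn σ (Set.Ici 0))
    (hσpos : ∀ t : ℝ, 0 ≤ t → 0 < σ t)
    (hστ : Filter.Tendsto (fun t => ∫ s in (t - τ t)..t, 1 / σ s)
      Filter.atTop (nhds 1))
    (hlam0 : 0 ≤ lam)
    (hσt : Filter.Tendsto (fun t => ((σ t / t : ℝ) : EReal)) Filter.atTop
      (nhds lam)) :
    Filter.Tendsto (fun t => τ t / t) Filter.atTop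
      (nhds (if lam = ⊤ then (1:ℝ) else 1 - Real.exp (-lam.toReal))) := by
  set L : ℝ → ℝ := fun t => Real.log (t / (t - τ t)) with hL
  set I : ℝ → ℝ := fun t => ∫ s in (t - τ t)..t, 1 / σ s with hI
  have hbasic : ∀ᶠ t in atTop, 1 ≤ t - τ t ∧ t - τ t ≤ t := by
    filter_upwards [httau.eventually_ge_atTop 1, eventually_ge_atTop (0:ℝ)] with t h1 h2
    exact ⟨h1, by linarith [hτnn t h2]⟩
  have key_eq : (fun t => τ t / t) =ᶠ[atTop] fun t => 1 - Real.exp (-(L t)) := by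
    filter_upwards [hbasic] with t ht
    obtain ⟨h1, h2⟩ := ht
    have ht0 : 0 < t := by linarith
    have hu0 : 0 < t - τ t := by linarith
    have hexp : Real.exp (-(L t)) = (t - τ t) / t := by
      have : -(L t) = Real.log ((t - τ t) / t) := by
        rw [hL]
        simp only
        rw [Real.log_div ht0.ne' hu0.ne', Real.log_div hu0.ne' ht0.ne']
        ring
      rw [this, Real.exp_log (by positivity)]
    rw [hexp]
    field_simp
    ring
  have hupper : ∀ c : ℝ, 0 < c → (∀ᶠ s in atTop, σ s ≤ c * s) →
      ∀ᶠ t in atTop, L t ≤ c * I t := by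
    intro c hc hev
    obtain ⟨S, hS⟩ := eventually_atTop.mp hev
    filter_upwards [hbasic, httau.eventually_ge_atTop (max S 1)] with t ht h3
    obtain ⟨h1, h2⟩ := ht
    exact aux_int_upper σ hσcont hσpos hc h1 h2
      (fun s hs1 hs2 => hS s (le_trans (le_max_left _ _) (le_trans h3 hs1)))
  have hlower : ∀ c : ℝ, 0 < c → (∀ᶠ s in atTop, c * s ≤ σ s) →
      ∀ᶠ t in atTop, c * I t ≤ L t := by
    intro c hc hev
    obtain ⟨S, hS⟩ := eventually_atTop.mp hev
    filter_upwards [hbasic, httau.eventually_ge_atTop (max S 1)] with t ht h3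
    obtain ⟨h1, h2⟩ := ht
    exact aux_int_lower σ hσcont hσpos hc h1 h2
      (fun s hs1 hs2 => hS s (le_trans (le_max_left _ _) (le_trans h3 hs1)))
  by_cases htop : lam = ⊤
  · rw [if_pos htop]
    have hLtop : Tendsto L atTop atTop := by
      rw [tendsto_atTop]
      intro M
      have hc0 : (0:ℝ) < 2 * max M 1 := by positivity
      have hev : ∀ᶠ s in atTop, (2 * max M 1) * s ≤ σ s := by
        have h := EReal.tendsto_nhds_top_iff_real.mp (htop ▸ hσt) (2 * max M 1)
        filter_upwards [h, eventually_ge_atTop (1:ℝ)] with s hs hs1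
        have hs0 : 0 < s := by linarith
        have : 2 * max M 1 < σ s / s := by exact_mod_cast hs
        have := (lt_div_iff₀ hs0).mp this
        linarith
      have h1 := hlower (2 * max M 1) hc0 hev
      have h2 : ∀ᶠ t in atTop, (1:ℝ)/2 < I t :=
        hστ.eventually_const_lt (by norm_num)
      filter_upwards [h1, h2] with t ha hb
      calc M ≤ max M 1 := le_max_left _ _
        _ = 2 * max M 1 * (1/2) := by ring
        _ ≤ 2 * max M 1 * I t := by nlinarith
        _ ≤ L t := ha
    have hexp0 : Tendsto (fun t => Real.exp (-(L t))) atTop (nhds 0) :=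
      Real.tendsto_exp_atBot.comp (tendsto_neg_atTop_atBot.comp hLtop)
    have hfin : Tendsto (fun t => 1 - Real.exp (-(L t))) atTop (nhds 1) := by
      have h := ((tendsto_const_nhds : Tendsto (fun _ : ℝ => (1:ℝ)) atTop (nhds 1)).sub hexp0)
      simpa using h
    exact Tendsto.congr' key_eq.symm hfin
  · rw [if_neg htop]
    have hbot : lam ≠ ⊥ := fun h => by simp [h] at hlam0
    set l := lam.toReal with hldef
    have hcoe : lam = ((l : ℝ) : EReal) := (EReal.coe_toReal htop hbot).symm
    have hl0 : 0 ≤ l := by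
      rw [hcoe] at hlam0
      exact_mod_cast hlam0
    have hσt' : Tendsto (fun t => σ t / t) atTop (nhds l) := by
      rw [hcoe] at hσt
      exact EReal.tendsto_coe.mp hσt
    have hLlim : Tendsto L atTop (nhds l) := by
      rw [Metric.tendsto_nhds]
      intro ε hε
      have he : (0:ℝ) < ε / 3 := by linarith
      have hub : ∀ᶠ t in atTop, L t < l + 2 * (ε / 3) := by
        have hev : ∀ᶠ s in atTop, σ s ≤ (l + ε / 3) * s := by
          filter_upwards [hσt'.eventually_lt_const (show l < l + ε / 3 by linarith),
            eventually_ge_atTop (1:ℝ)] with s hs hs1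
          have hs0 : 0 < s := by linarith
          have := (div_lt_iff₀ hs0).mp hs
          linarith
        have h1 := hupper (l + ε / 3) (by linarith) hev
        have h2 : ∀ᶠ t in atTop, (l + ε / 3) * I t < l + 2 * (ε / 3) := by
          have hm : Tendsto (fun t => (l + ε / 3) * I t) atTop (nhds ((l + ε / 3) * 1)) :=
            hστ.const_mul _
          exact hm.eventually_lt_const (by nlinarith)
        filter_upwards [h1, h2] with t ha hb
        exact lt_of_le_of_lt ha hb
      have hlb : ∀ᶠ t in atTop, l - 2 * (ε / 3) < L t := by
        rcases le_or_gt (l - ε / 3) 0 with h | h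
        · filter_upwards [hbasic] with t ht
          obtain ⟨h1, h2⟩ := ht
          have hu0 : 0 < t - τ t := by linarith
          have hLnn : 0 ≤ L t := Real.log_nonneg ((one_le_div hu0).mpr h2)
          linarith
        · have hev : ∀ᶠ s in atTop, (l - ε / 3) * s ≤ σ s := by
            filter_upwards [hσt'.eventually_const_lt (show l - ε / 3 < l by linarith),
              eventually_ge_atTop (1:ℝ)] with s hs hs1
            have hs0 : 0 < s := by linarith
            have := (lt_div_iff₀ hs0).mp hs
            linarith
          have h1 := hlower (l - ε / 3) h hev
          have h2 : ∀ᶠ t in atTop, l - 2 * (ε / 3) < (l - ε / 3) * I t := by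
            have hm : Tendsto (fun t => (l - ε / 3) * I t) atTop (nhds ((l - ε / 3) * 1)) :=
              hστ.const_mul _
            exact hm.eventually_const_lt (by nlinarith)
          filter_upwards [h1, h2] with t ha hb
          exact lt_of_lt_of_le hb ha
      filter_upwards [hub, hlb] with t ha hb
      rw [Real.dist_eq, abs_lt]
      constructor <;> linarith
    have hfin : Tendsto (fun t => 1 - Real.exp (-(L t))) atTop (nhds (1 - Real.exp (-l))) :=
      tendsto_const_nhds.sub ((Real.continuous_exp.tendsto _).comp hLlim.neg)
    exact Tendsto.congr' key_eq.symm hfin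
end

section
/- Let τ : [0,∞) → [0,∞) be continuous with τ̄ := −inf_{t≥0}(t − τ(t)) finite and positive, and suppose there is β ∈ (0,1) such that lim_{t→∞} log(t − τ(t)) / log t = β. Then there exists a function σ which is nonnegative and continuous on [−τ̄,∞) satisfying ∫_0^t ds/σ(s) → ∞ and σ(t) → ∞ as t → ∞ and ∫_{t−τ(t)}^t ds/σ(s) → 1 as t → ∞, and moreover lim_{t→∞} (∫_0^t ds/σ(s)) / log log t = 1/log(1/β). -/
open Filter Set Real MeasureTheory

theorem stmt11
    (β τb : ℝ) (τ : ℝ → ℝ)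
    (hτcont : ContinuousOn τ (Set.Ici 0))
    (hτnn : ∀ t : ℝ, 0 ≤ t → 0 ≤ τ t)
    (hτb : 0 < τb)
    (hτinf : IsGLB {y : ℝ | ∃ t : ℝ, 0 ≤ t ∧ y = t - τ t} (-τb))
    (hβ0 : 0 < β) (hβ1 : β < 1)
    (hlim : Filter.Tendsto (fun t => Real.log (t - τ t) / Real.log t)
      Filter.atTop (nhds β)) :
    ∃ σ : ℝ → ℝ,
      ContinuousOn σ (Set.Ici (-τb)) ∧
      (∀ t : ℝ, -τb ≤ t → 0 ≤ σ t) ∧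
      Filter.Tendsto (fun t => ∫ s in (0:ℝ)..t, 1 / σ s)
        Filter.atTop Filter.atTop ∧
      Filter.Tendsto σ Filter.atTop Filter.atTop ∧
      Filter.Tendsto (fun t => ∫ s in (t - τ t)..t, 1 / σ s)
        Filter.atTop (nhds 1) ∧
      Filter.Tendsto
        (fun t => (∫ s in (0:ℝ)..t, 1 / σ s) / Real.log (Real.log t))
        Filter.atTop (nhds (1 / Real.log (1 / β))) := by
  have hβne : (β:ℝ) ≠ 0 := hβ0.ne'
  set L : ℝ := Real.log (1/β) with hLdef
  have hL : 0 < L := Real.log_pos ((one_lt_div hβ0).mpr hβ1)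
  set e1 : ℝ := Real.exp 1 with he1
  have he1pos : 0 < e1 := Real.exp_pos 1
  set σ : ℝ → ℝ := fun s => L * (max e1 s * Real.log (max e1 s)) with hσdef
  have hmaxcont : Continuous fun s : ℝ => max e1 s := continuous_const.max continuous_id
  have hmaxpos : ∀ s : ℝ, 0 < max e1 s := fun s => lt_of_lt_of_le he1pos (le_max_left _ _)
  have hlogmax : ∀ s : ℝ, 1 ≤ Real.log (max e1 s) := fun s => by
    rw [Real.le_log_iff_exp_le (hmaxpos s)]; exact le_max_left _ _
  have hσcont : Continuous σ :=
    continuous_const.mul (hmaxcont.mul (hmaxcont.log fun s => (hmaxpos s).ne'))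
  have hσpos : ∀ s, 0 < σ s := fun s =>
    mul_pos hL (mul_pos (hmaxpos s) (zero_lt_one.trans_le (hlogmax s)))
  have hinvcont : Continuous fun s => 1 / σ s :=
    continuous_const.div hσcont fun s => (hσpos s).ne'
  -- key computation
  have hkey : ∀ a b : ℝ, e1 ≤ a → e1 ≤ b →
      (∫ s in a..b, 1 / σ s) = (Real.log (Real.log b) - Real.log (Real.log a)) / L := by
    intro a b ha hb
    rw [sub_div]
    apply intervalIntegral.integral_eq_sub_of_hasDerivAt
      (f := fun x => Real.log (Real.log x) / L)
    · intro x hx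
      have hxe : e1 ≤ x := le_trans (le_min ha hb) hx.1
      have hx0 : 0 < x := he1pos.trans_le hxe
      have hlx : 1 ≤ Real.log x := (Real.le_log_iff_exp_le hx0).mpr hxe
      have hlx0 : Real.log x ≠ 0 := (zero_lt_one.trans_le hlx).ne'
      have h1 : HasDerivAt Real.log x⁻¹ x := Real.hasDerivAt_log hx0.ne'
      have h2 : HasDerivAt Real.log (Real.log x)⁻¹ (Real.log x) := Real.hasDerivAt_log hlx0
      have h3 := (h2.comp x h1).div_const L
      convert h3 using 1
      · rfl
      · rfl
      have hmx : max e1 x = x := max_eq_right hxe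
      simp only [hσdef, hmx]
      field_simp
    · exact hinvcont.intervalIntegrable _ _
  set C : ℝ := ∫ s in (0:ℝ)..e1, 1 / σ s with hCdef
  have hC : ∀ t : ℝ, e1 ≤ t →
      (∫ s in (0:ℝ)..t, 1 / σ s) = C + Real.log (Real.log t) / L := by
    intro t ht
    rw [← intervalIntegral.integral_add_adjacent_intervals
        (hinvcont.intervalIntegrable 0 e1) (hinvcont.intervalIntegrable e1 t),
      hkey e1 t le_rfl ht]
    have h0 : Real.log (Real.log e1) = 0 := by
      rw [he1, Real.log_exp, Real.log_one]
    rw [h0, sub_zero]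
  have hev : ∀ᶠ t : ℝ in atTop, e1 ≤ t := eventually_ge_atTop e1
  have hll : Tendsto (fun t : ℝ => Real.log (Real.log t)) atTop atTop :=
    Real.tendsto_log_atTop.comp Real.tendsto_log_atTop
  -- component 3
  have h3 : Tendsto (fun t => ∫ s in (0:ℝ)..t, 1 / σ s) atTop atTop := by
    have hmodel : Tendsto (fun t : ℝ => C + Real.log (Real.log t) / L) atTop atTop :=
      tendsto_atTop_add_const_left _ C (hll.atTop_div_const hL)
    exact Tendsto.congr' (hev.mono fun t ht => (hC t ht).symm) hmodel
  -- component 4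
  have h4 : Tendsto σ atTop atTop := by
    have hlin : Tendsto (fun t : ℝ => L * t) atTop atTop :=
      Tendsto.const_mul_atTop hL tendsto_id
    apply tendsto_atTop_mono' atTop ?_ hlin
    filter_upwards [eventually_ge_atTop e1] with t ht
    have hmx : max e1 t = t := max_eq_right ht
    have ht0 : 0 < t := he1pos.trans_le ht
    have hl := hlogmax t
    simp only [hσdef, hmx]
    rw [hmx] at hl
    nlinarith [mul_nonneg (mul_nonneg hL.le ht0.le) (sub_nonneg.mpr hl)]
  -- eventual facts about delay
  have hratio : ∀ᶠ t in atTop, β/2 < Real.log (t - τ t) / Real.log t :=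
    hlim.eventually (eventually_gt_nhds (half_lt_self hβ0))
  set M : ℝ := max 1 τb with hMdef
  have hM1 : (1:ℝ) ≤ M := le_max_left _ _
  have hlogM : 0 ≤ Real.log M := Real.log_nonneg hM1
  have hdelay : ∀ᶠ t in atTop,
      e1 ≤ t - τ t ∧ 0 < Real.log (t - τ t) ∧ 0 < Real.log t ∧ e1 ≤ t := by
    have hb1 := Real.tendsto_log_atTop.eventually_ge_atTop (2/β)
    have hb2 := Real.tendsto_log_atTop.eventually_gt_atTop (2*Real.log M/β)
    filter_upwards [hratio, hb1, hb2, eventually_ge_atTop e1] with t hr h1 h2 hte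
    have hlt0 : 0 < Real.log t := lt_of_lt_of_le (by positivity) h1
    have hlog1 : β/2 * Real.log t < Real.log (t - τ t) := (lt_div_iff₀ hlt0).mp hr
    have hge1 : 1 ≤ β/2 * Real.log t := by
      have : β/2 * (2/β) = 1 := by field_simp
      calc (1:ℝ) = β/2 * (2/β) := this.symm
        _ ≤ β/2 * Real.log t := by
            apply mul_le_mul_of_nonneg_left h1 (by positivity)
    have hMlt : Real.log M < β/2 * Real.log t := by
      have := (div_lt_iff₀ hβ0).mp h2
      nlinarith
    -- positivity of t - τ t
    have ht0 : (0:ℝ) ≤ t := le_trans he1pos.le hte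
    have hlb : -τb ≤ t - τ t := hτinf.1 ⟨t, ht0, rfl⟩
    have hpos : 0 < t - τ t := by
      by_contra hne
      push_neg at hne
      have habs : |t - τ t| ≤ M := by
        rw [abs_le]
        constructor
        · linarith [le_max_right (1:ℝ) τb]
        · linarith [hM1]
      have hle : Real.log (t - τ t) ≤ Real.log M := by
        rw [← Real.log_abs]
        rcases eq_or_lt_of_le (abs_nonneg (t - τ t)) with h | h
        · rw [← h, Real.log_zero]; exact hlogM
        · exact Real.log_le_log h habs
      linarith
    have hloggt : 1 < Real.log (t - τ t) := lt_of_le_of_lt hge1 hlog1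
    have hee : e1 ≤ t - τ t := (Real.le_log_iff_exp_le hpos).mp hloggt.le
    exact ⟨hee, zero_lt_one.trans hloggt, hlt0, hte⟩
  -- component 5
  have h5 : Tendsto (fun t => ∫ s in (t - τ t)..t, 1 / σ s) atTop (nhds 1) := by
    have hc : ContinuousAt (fun x : ℝ => -Real.log x / L) β :=
      ((Real.continuousAt_log hβne).neg).div_const L
    have hcomp := hc.tendsto.comp hlim
    have hval : -Real.log β / L = 1 := by
      have hLeq : L = -Real.log β := by rw [hLdef, one_div, Real.log_inv]
      rw [← hLeq, div_self hL.ne']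
    rw [hval] at hcomp
    apply Tendsto.congr' _ hcomp
    filter_upwards [hdelay] with t ⟨h1, h2, h3', h4'⟩
    simp only [Function.comp]
    rw [hkey (t - τ t) t h1 h4', Real.log_div h2.ne' h3'.ne']
    ring
  -- component 6
  have hg : Tendsto (fun x : ℝ => (C + x / L) / x) atTop (nhds (1/L)) := by
    have h0 : Tendsto (fun x : ℝ => C / x + 1/L) atTop (nhds (0 + 1/L)) :=
      (tendsto_const_nhds.div_atTop tendsto_id).add tendsto_const_nhds
    rw [zero_add] at h0
    apply Tendsto.congr' _ h0
    filter_upwards [eventually_ne_atTop (0:ℝ)] with x hx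
    rw [add_div, div_div, mul_comm, ← div_div, div_self hx]
  have h6 : Tendsto
      (fun t => (∫ s in (0:ℝ)..t, 1 / σ s) / Real.log (Real.log t))
      atTop (nhds (1 / Real.log (1 / β))) := by
    have := hg.comp hll
    apply Tendsto.congr' _ this
    filter_upwards [hev] with t ht
    simp only [Function.comp]
    rw [hC t ht]
  exact ⟨σ, hσcont.continuousOn, fun t _ => (hσpos t).le, h3, h4, h5, h6⟩
end

section
/- Let τ : [0,∞) → [0,∞) be continuous with τ̄ := −inf_{t≥0}(t − τ(t)) finite and positive. Suppose φ : [0,∞) → ℝ is continuous, increasing with φ(t) → ∞ as t → ∞, φ ∈ RV_∞(0), the map x ↦ log φ(e^x) is in RV_∞(0), and lim_{t→∞} (t − τ(t)) / (t/φ(t)) = 1. Then there exists a function σ which is nonnegative and continuous on [−τ̄,∞) satisfying ∫_0^t ds/σ(s) → ∞ and σ(t) → ∞ as t → ∞ and ∫_{t−τ(t)}^t ds/σ(s) → 1 as t → ∞, and moreover lim_{t→∞} σ(t)/(t·log φ(t)) = 1 and lim_{t→∞} (∫_0^t ds/σ(s)) / (log t / log φ(t)) = 1. -/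
open Filter Set Real MeasureTheory


lemma aux_growth (h : ℝ → ℝ) (A : ℝ)
    (hmono : ∀ ⦃x y : ℝ⦄, A ≤ x → x ≤ y → h x ≤ h y)
    (hone : ∀ x, A ≤ x → 1 ≤ h x)
    (hslow : Tendsto (fun x => h (2 * x) / h x) atTop (nhds 1)) :
    Tendsto (fun x => h x / x) atTop (nhds 0) := by
  obtain ⟨N, hN⟩ := (hslow.eventually_lt_const (by norm_num : (1:ℝ) < 5/4)).exists_forall_of_atTop
  set x₀ : ℝ := max (max A N) 1 with hx₀def
  have hx₀A : A ≤ x₀ := le_max_of_le_left (le_max_left _ _)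
  have hx₀N : N ≤ x₀ := le_max_of_le_left (le_max_right _ _)
  have hx₀1 : (1:ℝ) ≤ x₀ := le_max_right _ _
  have hx₀pos : (0:ℝ) < x₀ := lt_of_lt_of_le one_pos hx₀1
  have hd : ∀ x, x₀ ≤ x → h (2 * x) ≤ 5/4 * h x := by
    intro x hx
    have h1 : h (2*x) / h x < 5/4 := hN x (le_trans hx₀N hx)
    have h2 : (0:ℝ) < h x := lt_of_lt_of_le one_pos (hone x (le_trans hx₀A hx))
    calc h (2*x) = h (2*x) / h x * h x := by field_simp
    _ ≤ 5/4 * h x := by nlinarith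
  have hpow : ∀ n : ℕ, (1:ℝ) ≤ 2^n := fun n => one_le_pow₀ (by norm_num)
  have hgeo : ∀ n : ℕ, h (2^n * x₀) ≤ (5/4)^n * h x₀ := by
    intro n
    induction n with
    | zero => simp
    | succ n ih =>
      have h1 : x₀ ≤ 2^n * x₀ := le_mul_of_one_le_left hx₀pos.le (hpow n)
      calc h (2^(n+1) * x₀) = h (2 * (2^n * x₀)) := by ring_nf
      _ ≤ 5/4 * h (2^n * x₀) := hd _ h1
      _ ≤ 5/4 * ((5/4)^n * h x₀) := by linarith
      _ = (5/4)^(n+1) * h x₀ := by ring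
  have hx0h : (0:ℝ) < h x₀ := lt_of_lt_of_le one_pos (hone _ hx₀A)
  set C := 5/4 * h x₀ with hC
  have hCpos : 0 < C := by positivity
  have key : ∀ (n : ℕ) (x : ℝ), 2^n * x₀ ≤ x → x ≤ 2^(n+1) * x₀ → h x / x ≤ C * (5/8)^n := by
    intro n x hxl hxu
    have hx1 : x₀ ≤ x := le_trans (le_mul_of_one_le_left hx₀pos.le (hpow n)) hxl
    have hxpos : 0 < x := lt_of_lt_of_le hx₀pos hx1
    have hhx : h x ≤ (5/4)^(n+1) * h x₀ := le_trans (hmono (le_trans hx₀A hx1) hxu) (hgeo (n+1))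
    have hxnn : 0 ≤ h x := le_trans one_pos.le (hone x (le_trans hx₀A hx1))
    have h2 : h x / x ≤ ((5/4)^(n+1) * h x₀) / (2^n * x₀) := by
      gcongr
    have h3 : ((5/4:ℝ)^(n+1) * h x₀) / (2^n * x₀) ≤ ((5/4)^(n+1) * h x₀) / (2^n * 1) := by
      gcongr
    calc h x / x ≤ ((5/4)^(n+1) * h x₀) / (2^n * 1) := le_trans h2 h3
    _ = C * ((5/4:ℝ)^n / 2^n) := by rw [hC, pow_succ]; field_simp
    _ = C * (5/8)^n := by rw [show (5:ℝ)/8 = (5/4)/2 by norm_num, div_pow, div_pow, div_pow]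
  rw [NormedAddCommGroup.tendsto_nhds_zero]
  intro ε hε
  have hgeo0 : Tendsto (fun n : ℕ => C * (5/8 : ℝ)^n) atTop (nhds 0) := by
    simpa using (tendsto_pow_atTop_nhds_zero_of_lt_one (by norm_num) (by norm_num)).const_mul C
  obtain ⟨n₀, hn₀⟩ := (hgeo0.eventually_lt_const hε).exists_forall_of_atTop
  rw [eventually_atTop]
  refine ⟨2^n₀ * x₀, fun x hx => ?_⟩
  obtain ⟨m, hm⟩ := pow_unbounded_of_one_lt (x / x₀) (one_lt_two)
  have hmx : x < 2^m * x₀ := by rw [div_lt_iff₀ hx₀pos] at hm; linarith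
  classical
  set P : ℕ → Prop := fun k => 2^k * x₀ ≤ x with hP
  have hPn₀ : P n₀ := hx
  have hn₀m : n₀ < m := by
    have h1 : (2:ℝ)^n₀ * x₀ < 2^m * x₀ := lt_of_le_of_lt hx hmx
    have h2 : (2:ℝ)^n₀ < 2^m := lt_of_mul_lt_mul_right h1 hx₀pos.le
    exact (pow_lt_pow_iff_right₀ one_lt_two).mp h2
  set n := Nat.findGreatest P m with hn
  have hPn : P n := Nat.findGreatest_spec hn₀m.le hPn₀
  have hn₀n : n₀ ≤ n := Nat.le_findGreatest hn₀m.le hPn₀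
  have hnm : n < m := by
    rcases lt_or_eq_of_le (Nat.findGreatest_le m : n ≤ m) with h | h
    · exact h
    · exact absurd (h ▸ hPn) (not_le.mpr hmx)
  have hnot : ¬ P (n+1) := Nat.findGreatest_is_greatest (lt_add_one n) hnm
  have hxu : x ≤ 2^(n+1) * x₀ := le_of_lt (not_le.mp hnot)
  have hb := key n x hPn hxu
  have hb2 : C * (5/8:ℝ)^n < ε := hn₀ n hn₀n
  have hx1 : x₀ ≤ x := le_trans (le_mul_of_one_le_left hx₀pos.le (hpow n₀)) hx
  have hxpos : 0 < x := lt_of_lt_of_le hx₀pos hx1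
  have hnn : 0 ≤ h x / x := div_nonneg (le_trans one_pos.le (hone x (le_trans hx₀A hx1))) hxpos.le
  rw [Real.norm_eq_abs, abs_of_nonneg hnn]
  linarith


section K
variable (h : ℝ → ℝ) (A : ℝ)

set_option maxHeartbeats 2000000 in
lemma aux_karamata (hA : 1 ≤ A)
    (hmono : ∀ ⦃x y : ℝ⦄, A ≤ x → x ≤ y → h x ≤ h y)
    (hone : ∀ x, A ≤ x → 1 ≤ h x)
    (hcont : ContinuousOn h (Set.Ici A))
    (hslow : ∀ lam : ℝ, 0 < lam → Tendsto (fun x => h (lam * x) / h x) atTop (nhds 1)) :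
    Tendsto (fun X => (∫ x in A..X, 1 / h x) * (h X / X)) atTop (nhds 1) := by
  have hpos : ∀ x, A ≤ x → 0 < h x := fun x hx => lt_of_lt_of_le one_pos (hone x hx)
  have hinv : ContinuousOn (fun x => 1 / h x) (Set.Ici A) :=
    ContinuousOn.div continuousOn_const hcont (fun x hx => ne_of_gt (hpos x hx))
  have hint : ∀ a b : ℝ, A ≤ a → A ≤ b → IntervalIntegrable (fun x => 1 / h x) volume a b := by
    intro a b ha hb
    apply ContinuousOn.intervalIntegrable
    exact hinv.mono (fun x hx => le_trans (le_inf ha hb) hx.1)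
  obtain ⟨J, hJ⟩ : ∃ J : ℝ → ℝ, J = fun X => ∫ x in A..X, 1 / h x := ⟨_, rfl⟩
  have hJa : ∀ X : ℝ, (∫ x in A..X, 1 / h x) = J X := fun X => by rw [hJ]
  simp only [hJa]
  have Jsplit : ∀ a b : ℝ, A ≤ a → A ≤ b → J b = J a + ∫ x in a..b, 1 / h x := by
    intro a b ha hb
    rw [hJ]
    exact (intervalIntegral.integral_add_adjacent_intervals (hint A a le_rfl ha)
      (hint a b ha hb)).symm
  have Jmono : ∀ a b : ℝ, A ≤ a → a ≤ b → J a ≤ J b := by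
    intro a b ha hab
    rw [Jsplit a b ha (le_trans ha hab)]
    have : 0 ≤ ∫ x in a..b, 1 / h x := by
      apply intervalIntegral.integral_nonneg hab
      intro u hu
      exact le_of_lt (one_div_pos.mpr (hpos u (le_trans ha hu.1)))
    linarith
  have Jnn : ∀ b : ℝ, A ≤ b → 0 ≤ J b := by
    intro b hb
    have : J A = 0 := by rw [hJ]; simp
    have := Jmono A b le_rfl hb
    linarith
  have Jlb : ∀ X, A ≤ X → (X - A) / h X ≤ J X := by
    intro X hX
    have hc : ∫ x in A..X, (fun _ => 1 / h X) x = (X - A) * (1 / h X) := by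
      rw [intervalIntegral.integral_const]; simp [smul_eq_mul]
    have hm : (∫ x in A..X, (fun _ => 1 / h X) x) ≤ ∫ x in A..X, 1 / h x := by
      apply intervalIntegral.integral_mono_on hX (by simp) (hint A X le_rfl hX)
      intro u hu
      have hu1 : A ≤ u := hu.1
      exact one_div_le_one_div_of_le (hpos u hu1) (hmono hu1 hu.2)
    rw [hc, hJa X] at hm
    calc (X - A) / h X = (X - A) * (1 / h X) := by ring
    _ ≤ J X := hm
  have Jub_seg : ∀ a b : ℝ, A ≤ a → a ≤ b → (∫ x in a..b, 1 / h x) ≤ (b - a) / h a := by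
    intro a b ha hab
    have hc : ∫ x in a..b, (fun _ => 1 / h a) x = (b - a) * (1 / h a) := by
      rw [intervalIntegral.integral_const]; simp [smul_eq_mul]
    have hm : (∫ x in a..b, 1 / h x) ≤ ∫ x in a..b, (fun _ => 1 / h a) x := by
      apply intervalIntegral.integral_mono_on hab (hint a b ha (le_trans ha hab)) (by simp)
      intro u hu
      exact one_div_le_one_div_of_le (hpos a ha) (hmono ha hu.1)
    rw [hc] at hm
    calc (∫ x in a..b, 1 / h x) ≤ (b - a) * (1 / h a) := hm
    _ = (b - a) / h a := by ring
  have Jstep : ∀ μ X : ℝ, 0 < μ → μ ≤ 1 → A ≤ μ * X → J X ≤ J (μ * X) + (X - μ * X) / h (μ * X) := by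
    intro μ X hμ0 hμ1 hAX
    have hXpos : 0 < X := by nlinarith
    have hμX : μ * X ≤ X := by nlinarith
    rw [Jsplit (μ * X) X hAX (le_trans hAX hμX)]
    have := Jub_seg (μ * X) X hAX hμX
    linarith
  obtain ⟨N, hN⟩ := ((hslow 2 two_pos).eventually_lt_const
    (by norm_num : (1:ℝ) < 5/4)).exists_forall_of_atTop
  set X₀ : ℝ := max A N with hX₀
  have hX₀A : A ≤ X₀ := le_max_left _ _
  have hX₀pos : 0 < X₀ := lt_of_lt_of_le (lt_of_lt_of_le one_pos hA) hX₀A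
  have hd2 : ∀ x, X₀ ≤ x → h (2 * x) ≤ 5/4 * h x := by
    intro x hx
    have h1 := hN x (le_trans (le_max_right A N) hx)
    have h2 := hpos x (le_trans hX₀A hx)
    calc h (2*x) = h (2*x)/h x * h x := by field_simp
    _ ≤ 5/4 * h x := by nlinarith
  set Cb : ℝ := J (2 * X₀) with hCb
  have hCb0 : 0 ≤ Cb := Jnn _ (by nlinarith)
  have small : ∀ X, X₀ ≤ X → X ≤ 2*X₀ → J X ≤ 3 * (X / h X) + Cb := by
    intro X hXl hXu
    have h1 : J X ≤ Cb := hCb ▸ Jmono X (2*X₀) (le_trans hX₀A hXl) hXu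
    have h2 : 0 ≤ 3 * (X / h X) := by
      have ha := hpos X (le_trans hX₀A hXl)
      have hb : (0:ℝ) < X := lt_of_lt_of_le hX₀pos hXl
      positivity
    linarith
  have base_n : ∀ n : ℕ, ∀ X, X₀ ≤ X → X ≤ 2^n * (2*X₀) → J X ≤ 3 * (X / h X) + Cb := by
    intro n
    induction n with
    | zero =>
      intro X hXl hXu
      exact small X hXl (by rw [pow_zero, one_mul] at hXu; exact hXu)
    | succ n ih =>
      intro X hXl hXu
      by_cases hc : X ≤ 2 * X₀
      · exact small X hXl hc
      · push_neg at hc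
        have hX2 : X₀ ≤ X / 2 := by linarith
        have hA2 : A ≤ X / 2 := le_trans hX₀A hX2
        have hAX : A ≤ X := le_trans hX₀A hXl
        have h2X : X / 2 ≤ X := by linarith
        have hXu2 : X / 2 ≤ 2^n * (2*X₀) := by rw [pow_succ] at hXu; linarith
        have hstep : J X ≤ J (X/2) + (X - X/2)/h (X/2) := by
          rw [Jsplit (X/2) X hA2 hAX]
          linarith [Jub_seg (X/2) X hA2 h2X]
        have hih := ih (X/2) hX2 hXu2
        have hhalf := hd2 (X/2) hX2
        rw [show (2:ℝ) * (X/2) = X by ring] at hhalf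
        have pa := hpos (X/2) hA2
        have pb := hpos X hAX
        have hXpos : (0:ℝ) < X := lt_of_lt_of_le hX₀pos hXl
        have h8 : 2*X/(h (X/2)) ≤ 3*X/(h X) := by
          rw [div_le_div_iff₀ pa pb]; nlinarith
        have h6 : (X - X/2)/h (X/2) + 3 * ((X/2) / h (X/2)) = 2*X/(h (X/2)) + (X/2)/h (X/2) - (X - X/2)/h (X/2) := by ring
        have h9 : 3 * (X / h X) = 3*X/(h X) := by ring
        rw [h9]
        have heq : (X - X/2)/h (X/2) + 3 * ((X/2) / h (X/2)) = 2*X/(h (X/2)) := by ring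
        linarith
  have base : ∀ X, X₀ ≤ X → J X ≤ 3 * (X / h X) + Cb := by
    intro X hX
    obtain ⟨n, hn⟩ := pow_unbounded_of_one_lt (X/(2*X₀)) one_lt_two
    have : X ≤ 2^n * (2*X₀) := by
      rw [div_lt_iff₀ (by positivity)] at hn; linarith
    exact base_n n X hX this
  have key : ∀ ε : ℝ, 0 < ε → ε ≤ 1 → ∃ C M : ℝ, 0 ≤ C ∧ A ≤ M ∧
      ∀ X, M ≤ X → J X ≤ (1+ε) * (X / h X) + C := by
    intro ε hε0 hε1
    obtain ⟨μ, hμ⟩ : ∃ x : ℝ, x = 1 - ε/8 := ⟨_, rfl⟩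
    obtain ⟨δ, hδ⟩ : ∃ x : ℝ, x = ε^2/64 := ⟨_, rfl⟩
    obtain ⟨θ, hθ⟩ : ∃ x : ℝ, x = (1+δ)*μ := ⟨_, rfl⟩
    have hμ0 : 0 < μ := by rw [hμ]; linarith
    have hμ1 : μ < 1 := by rw [hμ]; linarith
    have hδ0 : 0 < δ := by rw [hδ]; positivity
    have hθ1 : θ < 1 := by rw [hθ, hδ, hμ]; nlinarith
    have hθ0 : 0 < θ := by rw [hθ]; positivity
    obtain ⟨Bs, hBs⟩ : ∃ x : ℝ, x = (1+δ)*(1-μ)/(1-θ) := ⟨_, rfl⟩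
    have hBs0 : 0 < Bs := by
      rw [hBs]; apply div_pos (by nlinarith) (by linarith)
    have hBsle : Bs ≤ 1 + ε/4 := by
      rw [hBs, div_le_iff₀ (by linarith : (0:ℝ) < 1 - θ), hθ, hδ, hμ]; nlinarith
    have fix : (1+δ)*(μ*Bs + (1-μ)) = Bs := by
      have h1θ : (0:ℝ) < 1 - θ := by linarith
      have hBseq : Bs * (1-θ) = (1+δ)*(1-μ) := by
        rw [hBs]; field_simp
      linear_combination (-1 : ℝ) * hBseq + (-Bs) * hθ
    obtain ⟨M₁, hM₁⟩ := ((hslow μ hμ0).eventually_const_lt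
      (show 1/(1+δ) < 1 by rw [div_lt_one (by linarith)]; linarith)).exists_forall_of_atTop
    have hdμ : ∀ x, M₁ ≤ x → A ≤ x → h x ≤ (1+δ) * h (μ * x) := by
      intro x hx hAx
      have h1 := hM₁ x hx
      have h2 := hpos x hAx
      rw [div_lt_div_iff₀ (by linarith) h2] at h1
      linarith
    have improve : ∀ n : ℕ, ∃ C M : ℝ, 0 ≤ C ∧ A ≤ M ∧
        ∀ X, M ≤ X → J X ≤ (θ^n * 3 + Bs) * (X / h X) + C := by
      intro n
      induction n with
      | zero =>
        refine ⟨Cb, X₀, hCb0, hX₀A, fun X hX => ?_⟩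
        have h1 := base X hX
        have hXp : 0 < X / h X :=
          div_pos (lt_of_lt_of_le hX₀pos hX) (hpos X (le_trans hX₀A hX))
        nlinarith [hBs0]
      | succ n ih =>
        obtain ⟨C, M, hC0, hMA, hIH⟩ := ih
        set M' : ℝ := max (max (M/μ) (A/μ)) M₁ with hM'
        refine ⟨C, max M' A, hC0, le_max_right _ _, fun X hX => ?_⟩
        have hXM' : M' ≤ X := le_trans (le_max_left _ _) hX
        have hXA : A ≤ X := le_trans (le_max_right _ _) hX
        have hM1X : M₁ ≤ X := le_trans (le_max_right _ _) hXM'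
        have hMμX : M ≤ μ * X := by
          have h5 : M/μ ≤ X :=
            le_trans (le_trans (le_max_left _ _) (le_max_left _ _)) hXM'
          rw [div_le_iff₀ hμ0] at h5; linarith
        have hAμX : A ≤ μ * X := by
          have h5 : A/μ ≤ X :=
            le_trans (le_trans (le_max_right _ _) (le_max_left _ _)) hXM'
          rw [div_le_iff₀ hμ0] at h5; linarith
        have hXpos : 0 < X := lt_of_lt_of_le (lt_of_lt_of_le one_pos hA) hXA
        have hμXX : μ * X ≤ X := by nlinarith
        have hstep : J X ≤ J (μ*X) + (X - μ*X)/h (μ*X) := by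
          rw [Jsplit (μ*X) X hAμX hXA]
          linarith [Jub_seg (μ*X) X hAμX hμXX]
        have hih2 := hIH (μ*X) hMμX
        have hratio := hdμ X hM1X hXA
        have pa := hpos (μ*X) hAμX
        have pb := hpos X hXA
        obtain ⟨B, hB⟩ : ∃ x : ℝ, x = θ^n*3 + Bs := ⟨_, rfl⟩
        have hB0 : 0 < B := by
          have : (0:ℝ) < θ^n := pow_pos hθ0 n
          nlinarith
        have e1 : B * ((μ*X) / h (μ*X)) + (X - μ*X)/h (μ*X) = (B*μ + (1-μ)) * X / h (μ*X) := by
          ring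
        have hcoef : 0 ≤ (B*μ + (1-μ)) * X := by nlinarith
        have e2 : (B*μ + (1-μ)) * X / h (μ*X) ≤ (B*μ + (1-μ)) * X * (1+δ) / h X := by
          rw [div_le_div_iff₀ pa pb]
          nlinarith
        have e3 : (B*μ + (1-μ)) * X * (1+δ) / h X = ((1+δ)*(B*μ + (1-μ))) * (X / h X) := by
          ring
        have e4 : (1+δ)*(B*μ+(1-μ)) = θ^(n+1)*3 + Bs := by
          have h7 : (1+δ)*(B*μ+(1-μ)) = θ*(θ^n*3) + (1+δ)*(μ*Bs+(1-μ)) := by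
            rw [hB, hθ]; ring
          rw [h7, fix, pow_succ]; ring
        rw [← hB] at hih2
        calc J X ≤ J (μ*X) + (X - μ*X)/h (μ*X) := hstep
        _ ≤ B * ((μ*X) / h (μ*X)) + C + (X - μ*X)/h (μ*X) := by linarith
        _ = (B*μ + (1-μ)) * X / h (μ*X) + C := by linarith [e1]
        _ ≤ (B*μ + (1-μ)) * X * (1+δ) / h X + C := by linarith
        _ = ((1+δ)*(B*μ + (1-μ))) * (X / h X) + C := by rw [e3]
        _ = (θ^(n+1)*3 + Bs) * (X / h X) + C := by rw [e4]
        
    obtain ⟨n, hn⟩ := ((tendsto_pow_atTop_nhds_zero_of_lt_one hθ0.le hθ1).eventually_lt_const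
      (show (0:ℝ) < ε/4 by linarith)).exists
    obtain ⟨C, M, hC0, hMA, hKey⟩ := improve n
    refine ⟨C, M, hC0, hMA, fun X hX => ?_⟩
    have h1 := hKey X hX
    have hXp : 0 ≤ X / h X := by
      have hXA : A ≤ X := le_trans hMA hX
      exact le_of_lt (div_pos (lt_of_lt_of_le (lt_of_lt_of_le one_pos hA) hXA) (hpos X hXA))
    nlinarith
  have hgr : Tendsto (fun X => h X / X) atTop (nhds 0) :=
    aux_growth h A hmono hone (hslow 2 two_pos)
  rw [tendsto_order]
  constructor
  · intro b hb
    have h1 : Tendsto (fun X : ℝ => (X - A)/X) atTop (nhds 1) := by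
      have h2 : Tendsto (fun X : ℝ => 1 - A/X) atTop (nhds 1) := by
        have h5 : Tendsto (fun X : ℝ => A / X) atTop (nhds 0) :=
          tendsto_const_nhds.div_atTop tendsto_id
        have := h5.const_sub 1
        simpa using this
      apply h2.congr'
      filter_upwards [eventually_gt_atTop (0:ℝ)] with X hX
      field_simp
    filter_upwards [h1.eventually_const_lt hb, eventually_ge_atTop (max A 1)] with X h2 h3
    have hXA : A ≤ X := le_trans (le_max_left _ _) h3
    have hXpos : (0:ℝ) < X := lt_of_lt_of_le one_pos (le_trans (le_max_right _ _) h3)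
    have pb := hpos X hXA
    have h4 : (X - A)/h X * (h X / X) = (X - A)/X := by
      field_simp
    have h5 : (X - A)/h X * (h X / X) ≤ J X * (h X / X) :=
      mul_le_mul_of_nonneg_right (Jlb X hXA) (by positivity)
    rw [h4] at h5
    exact lt_of_lt_of_le h2 h5
  · intro b hb
    set ε : ℝ := min ((b-1)/2) 1 with hε
    have hε0 : 0 < ε := lt_min (by linarith) one_pos
    have hε1 : ε ≤ 1 := min_le_right _ _
    have hεb : ε ≤ (b-1)/2 := min_le_left _ _
    obtain ⟨C, M, hC0, hMA, hK⟩ := key ε hε0 hε1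
    have h2 : ∀ᶠ X in atTop, C * (h X / X) < (b-1)/2 := by
      have h3 : Tendsto (fun X => C * (h X / X)) atTop (nhds 0) := by
        simpa using hgr.const_mul C
      exact h3.eventually_lt_const (by linarith)
    filter_upwards [h2, eventually_ge_atTop M, eventually_ge_atTop (max A 1)] with X hX1 hX2 hX3
    have hXA : A ≤ X := le_trans (le_max_left _ _) hX3
    have hXpos : (0:ℝ) < X := lt_of_lt_of_le one_pos (le_trans (le_max_right _ _) hX3)
    have pb := hpos X hXA
    have h5 := hK X hX2
    have e : ((1+ε)*(X/h X)+C)*(h X / X) = (1+ε) + C*(h X/X) := by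
      field_simp
    have hm : J X * (h X / X) ≤ ((1+ε)*(X/h X)+C)*(h X / X) :=
      mul_le_mul_of_nonneg_right h5 (by positivity)
    rw [e] at hm
    linarith

end K

set_option maxHeartbeats 2000000 in
theorem stmt12
    (τb : ℝ) (τ φ : ℝ → ℝ)
    (hτcont : ContinuousOn τ (Set.Ici 0))
    (hτnn : ∀ t : ℝ, 0 ≤ t → 0 ≤ τ t)
    (hτb : 0 < τb)
    (hτinf : IsGLB {y : ℝ | ∃ t : ℝ, 0 ≤ t ∧ y = t - τ t} (-τb))
    -- hypotheses on φ
    (hφcont : ContinuousOn φ (Set.Ici 0))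
    (hφmono : StrictMonoOn φ (Set.Ici 0))
    (hφinf : Filter.Tendsto φ Filter.atTop Filter.atTop)
    (hφRV : RVatTop φ 0)
    (hφlogRV : RVatTop (fun y => Real.log (φ (Real.exp y))) 0)
    (hτφ : Filter.Tendsto (fun t => (t - τ t) / (t / φ t)) Filter.atTop
      (nhds 1)) :
    ∃ σ : ℝ → ℝ,
      ContinuousOn σ (Set.Ici (-τb)) ∧
      (∀ t : ℝ, -τb ≤ t → 0 ≤ σ t) ∧
      Filter.Tendsto (fun t => ∫ s in (0:ℝ)..t, 1 / σ s)
        Filter.atTop Filter.atTop ∧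
      Filter.Tendsto σ Filter.atTop Filter.atTop ∧
      Filter.Tendsto (fun t => ∫ s in (t - τ t)..t, 1 / σ s)
        Filter.atTop (nhds 1) ∧
      Filter.Tendsto (fun t => σ t / (t * Real.log (φ t)))
        Filter.atTop (nhds 1) ∧
      Filter.Tendsto
        (fun t => (∫ s in (0:ℝ)..t, 1 / σ s) / (Real.log t / Real.log (φ t)))
        Filter.atTop (nhds 1) := by
  obtain ⟨h, hh⟩ : ∃ h : ℝ → ℝ, h = fun y => Real.log (φ (Real.exp y)) := ⟨_, rfl⟩
  have hhx : ∀ x, h x = Real.log (φ (Real.exp x)) := fun x => by rw [hh]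
  have hslow' : ∀ lam : ℝ, 0 < lam →
      Tendsto (fun x => h (lam * x) / h x) atTop (nhds 1) := by
    intro lam hlam
    have := hφlogRV lam hlam
    rw [Real.rpow_zero] at this
    rw [hh]
    exact this
  obtain ⟨A₂, hA₂⟩ := ((hφinf.comp Real.tendsto_exp_atTop).eventually_ge_atTop
    (Real.exp 1)).exists_forall_of_atTop
  obtain ⟨A, hAdef⟩ : ∃ A : ℝ, A = max A₂ 1 := ⟨_, rfl⟩
  have hA1 : (1:ℝ) ≤ A := hAdef ▸ le_max_right _ _
  have hA0 : (0:ℝ) < A := lt_of_lt_of_le one_pos hA1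
  have hφA : ∀ x, A ≤ x → Real.exp 1 ≤ φ (Real.exp x) := by
    intro x hx
    exact hA₂ x (le_trans (hAdef ▸ le_max_left _ _) hx)
  have hφApos : ∀ x, A ≤ x → 0 < φ (Real.exp x) :=
    fun x hx => lt_of_lt_of_le (Real.exp_pos 1) (hφA x hx)
  have hone : ∀ x, A ≤ x → 1 ≤ h x := by
    intro x hx
    rw [hhx, Real.le_log_iff_exp_le (hφApos x hx)]
    exact hφA x hx
  have hmono : ∀ ⦃x y : ℝ⦄, A ≤ x → x ≤ y → h x ≤ h y := by
    intro x y hx hxy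
    rw [hhx, hhx]
    exact Real.log_le_log (hφApos x hx)
      (hφmono.monotoneOn (Real.exp_pos x).le (Real.exp_pos y).le (Real.exp_le_exp.2 hxy))
  have hcont : ContinuousOn h (Set.Ici A) := by
    rw [hh]
    intro x hx
    apply ContinuousAt.continuousWithinAt
    have h1 : ContinuousAt φ (Real.exp x) := hφcont.continuousAt (Ici_mem_nhds (Real.exp_pos x))
    have h2 : ContinuousAt (fun y => φ (Real.exp y)) x := h1.comp Real.continuous_exp.continuousAt
    exact ContinuousAt.comp (f := fun y => φ (Real.exp y)) (g := Real.log)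
      (Real.continuousAt_log (ne_of_gt (hφApos x hx))) h2
  have hposh : ∀ x, A ≤ x → 0 < h x := fun x hx => lt_of_lt_of_le one_pos (hone x hx)
  have hgr : Tendsto (fun X => h X / X) atTop (nhds 0) :=
    aux_growth h A hmono hone (hslow' 2 two_pos)
  have hKar : Tendsto (fun X => (∫ x in A..X, 1 / h x) * (h X / X)) atTop (nhds 1) :=
    aux_karamata h A hA1 hmono hone hcont hslow'
  obtain ⟨T, hTdef⟩ : ∃ T : ℝ, T = Real.exp A := ⟨_, rfl⟩
  have hTpos : (0:ℝ) < T := hTdef ▸ Real.exp_pos A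
  have hlogT : Real.log T = A := by rw [hTdef, Real.log_exp]
  have hlogge : ∀ u : ℝ, T ≤ u → A ≤ Real.log u := by
    intro u hu
    have hupos : 0 < u := lt_of_lt_of_le hTpos hu
    rw [Real.le_log_iff_exp_le hupos, ← hTdef]
    exact hu
  have hφT : ∀ u : ℝ, T ≤ u → Real.exp 1 ≤ φ u := by
    intro u hu
    have hupos : 0 < u := lt_of_lt_of_le hTpos hu
    have h1 := hφA _ (hlogge u hu)
    rwa [Real.exp_log hupos] at h1
  have hφTpos : ∀ u : ℝ, T ≤ u → 0 < φ u :=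
    fun u hu => lt_of_lt_of_le (Real.exp_pos 1) (hφT u hu)
  have hψT : ∀ u : ℝ, T ≤ u → 1 ≤ Real.log (φ u) := by
    intro u hu
    rw [Real.le_log_iff_exp_le (hφTpos u hu)]
    exact hφT u hu
  have hψh : ∀ u : ℝ, T ≤ u → Real.log (φ u) = h (Real.log u) := by
    intro u hu
    rw [hhx, Real.exp_log (lt_of_lt_of_le hTpos hu)]
  -- the function σ
  have hmaxT : ∀ t : ℝ, T ≤ max t T := fun t => le_max_right _ _
  have hmaxpos : ∀ t : ℝ, (0:ℝ) < max t T := fun t => lt_of_lt_of_le hTpos (hmaxT t)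
  have hσpos : ∀ t : ℝ, 0 < max t T * Real.log (φ (max t T)) := fun t =>
    mul_pos (hmaxpos t) (lt_of_lt_of_le one_pos (hψT _ (hmaxT t)))
  have hcmax : Continuous (fun t : ℝ => max t T) := continuous_id.max continuous_const
  have hσc : Continuous (fun t : ℝ => max t T * Real.log (φ (max t T))) := by
    apply hcmax.mul
    apply continuous_iff_continuousAt.2
    intro t
    have h1 : ContinuousAt φ (max t T) := hφcont.continuousAt (Ici_mem_nhds (hmaxpos t))
    have h2 : ContinuousAt (fun s : ℝ => φ (max s T)) t :=
      ContinuousAt.comp (f := fun s : ℝ => max s T) (g := φ) h1 hcmax.continuousAt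
    exact ContinuousAt.comp (f := fun s : ℝ => φ (max s T)) (g := Real.log)
      (Real.continuousAt_log (ne_of_gt (lt_of_lt_of_le (Real.exp_pos 1) (hφT _ (hmaxT t))))) h2
  have h1σc : Continuous (fun s : ℝ => 1 / (max s T * Real.log (φ (max s T)))) :=
    continuous_const.div hσc (fun t => ne_of_gt (hσpos t))
  have hInt : ∀ a b : ℝ,
      IntervalIntegrable (fun s : ℝ => 1 / (max s T * Real.log (φ (max s T)))) volume a b :=
    fun a b => h1σc.intervalIntegrable a b
  -- substitution lemma
  have SUB : ∀ a b : ℝ, T ≤ a → T ≤ b →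
      (∫ s in a..b, 1 / (max s T * Real.log (φ (max s T)))) =
        ∫ x in Real.log a..Real.log b, 1 / h x := by
    intro a b ha hb
    have hapos : 0 < a := lt_of_lt_of_le hTpos ha
    have hbpos : 0 < b := lt_of_lt_of_le hTpos hb
    have hsub := intervalIntegral.integral_comp_smul_deriv
      (f := Real.exp) (f' := Real.exp)
      (g := fun u => 1 / (max u T * Real.log (φ (max u T))))
      (a := Real.log a) (b := Real.log b)
      (fun x _ => Real.hasDerivAt_exp x) Real.continuous_exp.continuousOn h1σc
    rw [Real.exp_log hapos, Real.exp_log hbpos] at hsub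
    rw [← hsub]
    apply intervalIntegral.integral_congr
    intro x hx
    have hxA : A ≤ x := by
      have h1 : A ≤ Real.log a := hlogge a ha
      have h2 : A ≤ Real.log b := hlogge b hb
      exact le_trans (le_inf h1 h2) hx.1
    have hTex : T ≤ Real.exp x := by
      rw [hTdef]
      exact Real.exp_le_exp.2 hxA
    simp only [Function.comp_apply, smul_eq_mul]
    rw [max_eq_left hTex, hhx]
    have he : Real.exp x ≠ 0 := ne_of_gt (Real.exp_pos x)
    have hl : Real.log (φ (Real.exp x)) ≠ 0 := by
      have := hψT _ hTex
      intro hc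
      rw [hc] at this
      linarith
    field_simp
  -- G and its properties
  obtain ⟨G, hG⟩ : ∃ G : ℝ → ℝ, G = fun X => ∫ x in A..X, 1 / h x := ⟨_, rfl⟩
  have hGa : ∀ X : ℝ, (∫ x in A..X, 1 / h x) = G X := fun X => by rw [hG]
  have hKar' : Tendsto (fun X => G X * (h X / X)) atTop (nhds 1) := by
    rw [hG]; exact hKar
  have hinvc : ContinuousOn (fun x => 1 / h x) (Set.Ici A) :=
    ContinuousOn.div continuousOn_const hcont (fun x hx => ne_of_gt (hposh x hx))
  have hintA : ∀ a b : ℝ, A ≤ a → A ≤ b →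
      IntervalIntegrable (fun x => 1 / h x) volume a b := by
    intro a b ha hb
    apply ContinuousOn.intervalIntegrable
    exact hinvc.mono (fun x hx => le_trans (le_inf ha hb) hx.1)
  have intLB : ∀ Y X : ℝ, A ≤ Y → Y ≤ X → (X - Y)/h X ≤ ∫ x in Y..X, 1/h x := by
    intro Y X hY hYX
    have hXA : A ≤ X := le_trans hY hYX
    have hc : ∫ x in Y..X, (fun _ => 1 / h X) x = (X - Y) * (1 / h X) := by
      rw [intervalIntegral.integral_const]; simp [smul_eq_mul]
    have hm : (∫ x in Y..X, (fun _ => 1 / h X) x) ≤ ∫ x in Y..X, 1 / h x := by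
      apply intervalIntegral.integral_mono_on hYX (by simp) (hintA Y X hY hXA)
      intro u hu
      exact one_div_le_one_div_of_le (hposh u (le_trans hY hu.1)) (hmono (le_trans hY hu.1) hu.2)
    rw [hc] at hm
    calc (X - Y) / h X = (X - Y) * (1 / h X) := by ring
    _ ≤ _ := hm
  have intUB : ∀ Y X : ℝ, A ≤ Y → Y ≤ X → (∫ x in Y..X, 1/h x) ≤ (X - Y)/h Y := by
    intro Y X hY hYX
    have hXA : A ≤ X := le_trans hY hYX
    have hc : ∫ x in Y..X, (fun _ => 1 / h Y) x = (X - Y) * (1 / h Y) := by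
      rw [intervalIntegral.integral_const]; simp [smul_eq_mul]
    have hm : (∫ x in Y..X, 1 / h x) ≤ ∫ x in Y..X, (fun _ => 1 / h Y) x := by
      apply intervalIntegral.integral_mono_on hYX (hintA Y X hY hXA) (by simp)
      intro u hu
      exact one_div_le_one_div_of_le (hposh Y hY) (hmono hY hu.1)
    rw [hc] at hm
    calc (∫ x in Y..X, 1 / h x) ≤ (X - Y) * (1 / h Y) := hm
    _ = (X - Y) / h Y := by ring
  -- integral from 0
  obtain ⟨c, hc⟩ : ∃ c : ℝ, c = ∫ s in (0:ℝ)..T, 1 / (max s T * Real.log (φ (max s T))) :=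
    ⟨_, rfl⟩
  have Ieq : ∀ t : ℝ, T ≤ t →
      (∫ s in (0:ℝ)..t, 1 / (max s T * Real.log (φ (max s T)))) = c + G (Real.log t) := by
    intro t ht
    have h1 := intervalIntegral.integral_add_adjacent_intervals (hInt 0 T) (hInt T t)
    rw [SUB T t le_rfl ht, hlogT, hGa] at h1
    rw [← h1, hc]
  -- limit machinery
  have hXoverh : Tendsto (fun X => X / h X) atTop atTop := by
    have hmem : ∀ᶠ X in atTop, h X / X ∈ Set.Ioi (0:ℝ) := by
      filter_upwards [eventually_ge_atTop (max A 1)] with X hX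
      have hXA : A ≤ X := le_trans (le_max_left _ _) hX
      have hXpos : (0:ℝ) < X := lt_of_lt_of_le one_pos (le_trans (le_max_right _ _) hX)
      exact div_pos (hposh X hXA) hXpos
    have h1 : Tendsto (fun X => h X / X) atTop (nhdsWithin 0 (Set.Ioi 0)) :=
      tendsto_nhdsWithin_iff.2 ⟨hgr, hmem⟩
    have h2 := h1.inv_tendsto_nhdsGT_zero
    refine h2.congr (fun X => ?_)
    simp [inv_div]
  have hcG : Tendsto (fun X => (c + G X) * (h X / X)) atTop (nhds 1) := by
    have h1 := (hgr.const_mul c).add hKar'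
    have h2 : Tendsto (fun X => c * (h X / X) + G X * (h X / X)) atTop (nhds 1) := by
      simpa using h1
    exact h2.congr (fun X => by ring)
  have hcGtop : Tendsto (fun X => c + G X) atTop atTop := by
    have h4 := Tendsto.pos_mul_atTop one_pos hcG hXoverh
    apply h4.congr'
    filter_upwards [eventually_ge_atTop (max A 1)] with X hX
    have hXA : A ≤ X := le_trans (le_max_left _ _) hX
    have hXpos : (0:ℝ) < X := lt_of_lt_of_le one_pos (le_trans (le_max_right _ _) hX)
    have hhX := hposh X hXA
    field_simp
  have hgrlog : Tendsto (fun t => h (Real.log t) / Real.log t) atTop (nhds 0) :=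
    hgr.comp Real.tendsto_log_atTop
  have hq0 : Tendsto (fun t => Real.log ((t - τ t) / (t / φ t))) atTop (nhds 0) := by
    have h1 := (Real.continuousAt_log one_ne_zero).tendsto.comp hτφ
    simpa [Real.log_one, Function.comp_def] using h1
  have htphi : Tendsto (fun t => t / φ t) atTop atTop := by
    have hlow : Tendsto (fun t : ℝ => Real.exp (Real.log t / 2)) atTop atTop :=
      Real.tendsto_exp_atTop.comp (Real.tendsto_log_atTop.atTop_div_const two_pos)
    apply tendsto_atTop_mono' atTop ?_ hlow
    have hev := hgrlog.eventually_lt_const (show (0:ℝ) < 1/2 by norm_num)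
    filter_upwards [eventually_ge_atTop T, hev] with t htT hhf
    have htpos : (0:ℝ) < t := lt_of_lt_of_le hTpos htT
    have hlA : A ≤ Real.log t := hlogge t htT
    have hlpos : (0:ℝ) < Real.log t := lt_of_lt_of_le hA0 hlA
    have hφp := hφTpos t htT
    rw [div_lt_iff₀ hlpos] at hhf
    have h1 : φ t ≤ Real.exp (Real.log t / 2) := by
      have h2 : Real.log (φ t) ≤ Real.log t / 2 := by
        rw [hψh t htT]; linarith
      calc φ t = Real.exp (Real.log (φ t)) := (Real.exp_log hφp).symm
      _ ≤ _ := Real.exp_le_exp.2 h2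
    have h3 : Real.exp (Real.log t / 2) * Real.exp (Real.log t / 2) = t := by
      rw [← Real.exp_add, show Real.log t / 2 + Real.log t / 2 = Real.log t by ring,
        Real.exp_log htpos]
    show Real.exp (Real.log t / 2) ≤ t / φ t
    rw [le_div_iff₀ hφp]
    nlinarith [Real.exp_pos (Real.log t / 2)]
  have httau : Tendsto (fun t => t - τ t) atTop atTop := by
    have hlow := Tendsto.const_mul_atTop (show (0:ℝ) < 1/2 by norm_num) htphi
    apply tendsto_atTop_mono' atTop ?_ hlow
    filter_upwards [hτφ.eventually_const_lt (show (1:ℝ)/2 < 1 by norm_num),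
      htphi.eventually_ge_atTop 1] with t h1 h2
    have h3 : (0:ℝ) < t / φ t := lt_of_lt_of_le one_pos h2
    rw [lt_div_iff₀ h3] at h1
    show 1/2 * (t / φ t) ≤ t - τ t
    linarith
  have hhalfratio : Tendsto (fun X => h X / h ((1/2) * X)) atTop (nhds 1) := by
    have h1 := (hslow' (1/2) (by norm_num)).inv₀ one_ne_zero
    have h2 : Tendsto (fun x => (h ((1/2) * x) / h x)⁻¹) atTop (nhds 1) := by
      simpa using h1
    exact h2.congr (fun X => by rw [inv_div])
  have habs : ∀ᶠ t in atTop, |Real.log ((t - τ t) / (t / φ t))| ≤ 1 := by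
    have h1 : Tendsto (fun t => |Real.log ((t - τ t) / (t / φ t))|) atTop (nhds 0) := by
      simpa using hq0.abs
    exact (h1.eventually_lt_const one_pos).mono (fun t => le_of_lt)
  have hev4 : ∀ᶠ t in atTop, h (Real.log t) ≤ Real.log t / 4 := by
    have h1 := hgrlog.eventually_lt_const (show (0:ℝ) < 1/4 by norm_num)
    filter_upwards [h1, eventually_ge_atTop T] with t h2 h3
    have h4 : (0:ℝ) < Real.log t := lt_of_lt_of_le hA0 (hlogge t h3)
    rw [div_lt_iff₀ h4] at h2
    linarith
  have hID : ∀ᶠ t in atTop, Real.log (t - τ t) =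
      Real.log t - h (Real.log t) + Real.log ((t - τ t) / (t / φ t)) := by
    filter_upwards [eventually_ge_atTop T, httau.eventually_ge_atTop T] with t ht hts
    have htpos : 0 < t := lt_of_lt_of_le hTpos ht
    have hspos : 0 < t - τ t := lt_of_lt_of_le hTpos hts
    have hφp := hφTpos t ht
    have htφ : 0 < t / φ t := div_pos htpos hφp
    rw [Real.log_div (ne_of_gt hspos) (ne_of_gt htφ),
        Real.log_div (ne_of_gt htpos) (ne_of_gt hφp), hψh t ht]
    ring
  have hbig : ∀ᶠ t in atTop,
      (T ≤ t ∧ T ≤ t - τ t ∧ 0 ≤ t ∧ 4 ≤ Real.log t ∧ 2*A ≤ Real.log t) ∧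
      (Real.log (t - τ t) = Real.log t - h (Real.log t) + Real.log ((t - τ t) / (t / φ t)) ∧
       h (Real.log t) ≤ Real.log t / 4 ∧ |Real.log ((t - τ t) / (t / φ t))| ≤ 1) := by
    filter_upwards [eventually_ge_atTop T, httau.eventually_ge_atTop T,
      eventually_ge_atTop (0:ℝ), Real.tendsto_log_atTop.eventually_ge_atTop 4,
      Real.tendsto_log_atTop.eventually_ge_atTop (2*A), hID, hev4, habs]
      with t h1 h2 h3 h4 h5 h6 h7 h8
    exact ⟨⟨h1, h2, h3, h4, h5⟩, ⟨h6, h7, h8⟩⟩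
  have hlogq_div : Tendsto
      (fun t => Real.log ((t - τ t) / (t / φ t)) / h (Real.log t)) atTop (nhds 0) := by
    apply squeeze_zero_norm' ?_ (show Tendsto (fun t => |Real.log ((t - τ t) / (t / φ t))|)
      atTop (nhds 0) by simpa using hq0.abs)
    filter_upwards [eventually_ge_atTop T] with t ht
    have h1 : (1:ℝ) ≤ h (Real.log t) := hone _ (hlogge t ht)
    rw [Real.norm_eq_abs, abs_div]
    apply div_le_self (abs_nonneg _)
    rw [abs_of_nonneg (by linarith : (0:ℝ) ≤ h (Real.log t))]
    exact h1
  have hLo : Tendsto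
      (fun t => 1 - Real.log ((t - τ t) / (t / φ t)) / h (Real.log t)) atTop (nhds 1) := by
    simpa using tendsto_const_nhds.sub hlogq_div
  have hR : Tendsto (fun t => h (Real.log t) / h (Real.log (t - τ t))) atTop (nhds 1) := by
    have hup : Tendsto (fun t => h (Real.log t) / h ((1/2) * Real.log t)) atTop (nhds 1) :=
      hhalfratio.comp Real.tendsto_log_atTop
    apply tendsto_of_tendsto_of_tendsto_of_le_of_le' tendsto_const_nhds hup ?_ ?_
    · filter_upwards [hbig] with t hb
      obtain ⟨⟨h1, h2, h3, h4, h5⟩, ⟨h6, h7, h8⟩⟩ := hb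
      have hXA : A ≤ Real.log t := hlogge t h1
      have hY2 : (1/2) * Real.log t ≤ Real.log (t - τ t) := by
        rw [h6]
        have := abs_le.1 h8
        linarith
      have hAY : A ≤ Real.log (t - τ t) := le_trans (by linarith) hY2
      have hYX : Real.log (t - τ t) ≤ Real.log t :=
        Real.log_le_log (lt_of_lt_of_le hTpos h2) (by linarith [hτnn t h3])
      have hYpos : 0 < h (Real.log (t - τ t)) := hposh _ hAY
      rw [le_div_iff₀ hYpos, one_mul]
      exact hmono hAY hYX
    · filter_upwards [hbig] with t hb
      obtain ⟨⟨h1, h2, h3, h4, h5⟩, ⟨h6, h7, h8⟩⟩ := hb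
      have hXA : A ≤ Real.log t := hlogge t h1
      have hY2 : (1/2) * Real.log t ≤ Real.log (t - τ t) := by
        rw [h6]
        have := abs_le.1 h8
        linarith
      have hA2 : A ≤ (1/2) * Real.log t := by linarith
      have hAY : A ≤ Real.log (t - τ t) := le_trans hA2 hY2
      have hhalfpos : 0 < h ((1/2) * Real.log t) := hposh _ hA2
      have hXnn : 0 ≤ h (Real.log t) := (hposh _ hXA).le
      exact div_le_div_of_nonneg_left hXnn hhalfpos (hmono hA2 hY2)
  refine ⟨fun t => max t T * Real.log (φ (max t T)), hσc.continuousOn,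
    fun t _ => (hσpos t).le, ?_, ?_, ?_, ?_, ?_⟩
  · -- integral tendsto atTop
    apply (hcGtop.comp Real.tendsto_log_atTop).congr'
    filter_upwards [eventually_ge_atTop T] with t ht
    exact (Ieq t ht).symm
  · -- σ tendsto atTop
    apply tendsto_atTop_mono' atTop ?_ tendsto_id
    filter_upwards [eventually_ge_atTop T, eventually_ge_atTop 0] with t ht ht0
    show id t ≤ max t T * Real.log (φ (max t T))
    rw [max_eq_left ht]
    have h1 := hψT t ht
    have htpos : 0 < t := lt_of_lt_of_le hTpos ht
    simp only [id]
    nlinarith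
  · -- delay integral tendsto 1
    have hUp : Tendsto (fun t => (1 - Real.log ((t - τ t) / (t / φ t)) / h (Real.log t)) *
        (h (Real.log t) / h (Real.log (t - τ t)))) atTop (nhds 1) := by
      simpa using hLo.mul hR
    apply tendsto_of_tendsto_of_tendsto_of_le_of_le' hLo hUp ?_ ?_
    · filter_upwards [hbig] with t hb
      obtain ⟨⟨h1, h2, h3, h4, h5⟩, ⟨h6, h7, h8⟩⟩ := hb
      have hXA : A ≤ Real.log t := hlogge t h1
      have hY2 : (1/2) * Real.log t ≤ Real.log (t - τ t) := by
        rw [h6]; have := abs_le.1 h8; linarith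
      have hAY : A ≤ Real.log (t - τ t) := le_trans (by linarith) hY2
      have hYX : Real.log (t - τ t) ≤ Real.log t :=
        Real.log_le_log (lt_of_lt_of_le hTpos h2) (by linarith [hτnn t h3])
      rw [SUB (t - τ t) t h2 h1]
      have hlb := intLB (Real.log (t - τ t)) (Real.log t) hAY hYX
      have hhXpos : 0 < h (Real.log t) := hposh _ hXA
      have heq : (Real.log t - Real.log (t - τ t)) / h (Real.log t) =
          1 - Real.log ((t - τ t) / (t / φ t)) / h (Real.log t) := by
        rw [show Real.log t - Real.log (t - τ t) =
          h (Real.log t) - Real.log ((t - τ t) / (t / φ t)) by linarith, sub_div,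
          div_self (ne_of_gt hhXpos)]
      linarith
    · filter_upwards [hbig] with t hb
      obtain ⟨⟨h1, h2, h3, h4, h5⟩, ⟨h6, h7, h8⟩⟩ := hb
      have hXA : A ≤ Real.log t := hlogge t h1
      have hY2 : (1/2) * Real.log t ≤ Real.log (t - τ t) := by
        rw [h6]; have := abs_le.1 h8; linarith
      have hAY : A ≤ Real.log (t - τ t) := le_trans (by linarith) hY2
      have hYX : Real.log (t - τ t) ≤ Real.log t :=
        Real.log_le_log (lt_of_lt_of_le hTpos h2) (by linarith [hτnn t h3])
      rw [SUB (t - τ t) t h2 h1]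
      have hub := intUB (Real.log (t - τ t)) (Real.log t) hAY hYX
      have hhXpos : 0 < h (Real.log t) := hposh _ hXA
      have hhYpos : 0 < h (Real.log (t - τ t)) := hposh _ hAY
      have heq : (Real.log t - Real.log (t - τ t)) / h (Real.log (t - τ t)) =
          (1 - Real.log ((t - τ t) / (t / φ t)) / h (Real.log t)) *
            (h (Real.log t) / h (Real.log (t - τ t))) := by
        rw [show Real.log t - Real.log (t - τ t) =
          h (Real.log t) - Real.log ((t - τ t) / (t / φ t)) by linarith]
        field_simp
      linarith
  · -- σ t / (t * log φ t) → 1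
    apply Tendsto.congr' ?_ (tendsto_const_nhds : Tendsto (fun _ : ℝ => (1:ℝ)) atTop (nhds 1))
    filter_upwards [eventually_ge_atTop T] with t ht
    have h1 := hψT t ht
    have htpos : 0 < t := lt_of_lt_of_le hTpos ht
    rw [max_eq_left ht, eq_comm, div_eq_one_iff_eq]
    nlinarith
  · -- final ratio
    apply (hcG.comp Real.tendsto_log_atTop).congr'
    filter_upwards [eventually_ge_atTop T] with t ht
    simp only [Function.comp_apply]
    rw [Ieq t ht, ← hψh t ht, div_div_eq_mul_div, ← mul_div_assoc]
end

section
/- Let σ be a positive continuous function on [0,∞) such that σ(t)/t → ∞ as t → ∞. Then lim_{t→∞} (∫_0^t ds/σ(s)) / log σ(t) = 0. -/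
open Filter Set Real MeasureTheory

theorem stmt13
    (σ : ℝ → ℝ)
    (hσcont : ContinuousOn σ (Set.Ici 0))
    (hσpos : ∀ t : ℝ, 0 ≤ t → 0 < σ t)
    (hσt : Filter.Tendsto (fun t => σ t / t) Filter.atTop Filter.atTop) :
    Filter.Tendsto (fun t => (∫ s in (0:ℝ)..t, 1 / σ s) / Real.log (σ t))
      Filter.atTop (nhds 0) := by
  have hinv : ContinuousOn (fun s => 1 / σ s) (Set.Ici 0) :=
    continuousOn_const.div hσcont (fun x hx => (hσpos x hx).ne')
  have hInt : ∀ a b : ℝ, 0 ≤ a → a ≤ b →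
      IntervalIntegrable (fun s => 1 / σ s) volume a b := by
    intro a b ha hab
    apply ContinuousOn.intervalIntegrable
    rw [Set.uIcc_of_le hab]
    exact hinv.mono (Set.Icc_subset_Ici_self.trans (Set.Ici_subset_Ici.mpr ha))
  rw [NormedAddCommGroup.tendsto_nhds_zero]
  intro ε hε
  set M : ℝ := 2 / ε + 1 with hMdef
  have hMpos : 0 < M := by positivity
  have hM1 : 1 ≤ M := by
    have h2 : 0 < 2 / ε := by positivity
    rw [hMdef]
    linarith
  obtain ⟨s₁, hs₁⟩ := eventually_atTop.mp (hσt.eventually_ge_atTop M)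
  set s₀ : ℝ := max s₁ 1 with hs₀def
  have hs₀1 : (1:ℝ) ≤ s₀ := le_max_right _ _
  have hs₀pos : (0:ℝ) < s₀ := lt_of_lt_of_le one_pos hs₀1
  have hMs : ∀ s : ℝ, s₀ ≤ s → M * s ≤ σ s := by
    intro s hs
    have hspos : 0 < s := lt_of_lt_of_le hs₀pos hs
    have := hs₁ s (le_trans (le_max_left _ _) hs)
    calc M * s ≤ (σ s / s) * s := by
          apply mul_le_mul_of_nonneg_right this hspos.le
      _ = σ s := by field_simp
  set C : ℝ := ∫ s in (0:ℝ)..s₀, 1 / σ s with hCdef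
  have hCnonneg : 0 ≤ C := by
    apply intervalIntegral.integral_nonneg hs₀pos.le
    intro u hu
    exact (div_nonneg zero_le_one (hσpos u hu.1).le)
  filter_upwards [eventually_ge_atTop (max s₀ (Real.exp ((2 * C + 2) / ε)))] with t ht
  have hts₀ : s₀ ≤ t := le_trans (le_max_left _ _) ht
  have ht1 : (1:ℝ) ≤ t := le_trans hs₀1 hts₀
  have htpos : (0:ℝ) < t := lt_of_lt_of_le one_pos ht1
  have hlogt : (2 * C + 2) / ε ≤ Real.log t :=
    (Real.le_log_iff_exp_le htpos).mpr (le_trans (le_max_right _ _) ht)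
  have hlogt' : 2 * C + 2 ≤ Real.log t * ε := (div_le_iff₀ hε).mp hlogt
  have hlogtpos : 0 < Real.log t := by nlinarith
  have hσtM : M * t ≤ σ t := hMs t hts₀
  have htσ : t ≤ σ t := by nlinarith
  have hlogσ : Real.log t ≤ Real.log (σ t) := Real.log_le_log htpos htσ
  have hlogσpos : 0 < Real.log (σ t) := lt_of_lt_of_le hlogtpos hlogσ
  -- split the integral
  have hsplit : (∫ s in (0:ℝ)..t, 1 / σ s) = C + ∫ s in s₀..t, 1 / σ s :=
    (intervalIntegral.integral_add_adjacent_intervals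
      (hInt 0 s₀ le_rfl hs₀pos.le) (hInt s₀ t hs₀pos.le hts₀)).symm
  -- bound the tail
  have hgInt : IntervalIntegrable (fun s : ℝ => (1 / M) * (1 / s)) volume s₀ t := by
    apply ContinuousOn.intervalIntegrable
    rw [Set.uIcc_of_le hts₀]
    apply continuousOn_const.mul
    exact continuousOn_const.div continuousOn_id
      (fun x hx => (lt_of_lt_of_le hs₀pos hx.1).ne')
  have htail : (∫ s in s₀..t, 1 / σ s) ≤ (1 / M) * Real.log t := by
    have h1 : (∫ s in s₀..t, 1 / σ s) ≤ ∫ s in s₀..t, (1 / M) * (1 / s) := by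
      apply intervalIntegral.integral_mono_on hts₀ (hInt s₀ t hs₀pos.le hts₀) hgInt
      intro x hx
      have hx0 : 0 < x := lt_of_lt_of_le hs₀pos hx.1
      have hMx : M * x ≤ σ x := hMs x hx.1
      have : 1 / σ x ≤ 1 / (M * x) :=
        one_div_le_one_div_of_le (by positivity) hMx
      calc 1 / σ x ≤ 1 / (M * x) := this
        _ = (1 / M) * (1 / x) := by rw [div_mul_div_comm, one_mul]
    have h2 : (∫ s in s₀..t, (1 / M) * (1 / s)) = (1 / M) * Real.log (t / s₀) := by
      rw [intervalIntegral.integral_const_mul, integral_one_div]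
      rw [Set.uIcc_of_le hts₀]
      intro h0
      exact absurd h0.1 (not_le.mpr hs₀pos)
    have h3 : Real.log (t / s₀) ≤ Real.log t :=
      Real.log_le_log (by positivity) (div_le_self htpos.le hs₀1)
    calc (∫ s in s₀..t, 1 / σ s) ≤ (1 / M) * Real.log (t / s₀) := h2 ▸ h1
      _ ≤ (1 / M) * Real.log t := by
          apply mul_le_mul_of_nonneg_left h3 (by positivity)
  have hnum : 0 ≤ ∫ s in (0:ℝ)..t, 1 / σ s := by
    apply intervalIntegral.integral_nonneg htpos.le
    intro u hu
    exact (div_nonneg zero_le_one (hσpos u hu.1).le)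
  have hbound : (∫ s in (0:ℝ)..t, 1 / σ s) / Real.log (σ t)
      ≤ (C + (1 / M) * Real.log t) / Real.log t := by
    apply div_le_div₀ (by positivity) _ hlogtpos hlogσ
    rw [hsplit]
    linarith [htail]
  have heq : (C + (1 / M) * Real.log t) / Real.log t = C / Real.log t + 1 / M := by
    rw [add_div, mul_div_assoc, div_self hlogtpos.ne', mul_one]
  have hC2 : C / Real.log t < ε / 2 := by
    rw [div_lt_iff₀ hlogtpos]
    nlinarith
  have hM2 : 1 / M < ε / 2 := by
    rw [div_lt_iff₀ hMpos, hMdef]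
    have h2ε : ε / 2 * (2 / ε) = 1 := by field_simp
    nlinarith
  have hfin : (∫ s in (0:ℝ)..t, 1 / σ s) / Real.log (σ t) < ε := by
    calc (∫ s in (0:ℝ)..t, 1 / σ s) / Real.log (σ t)
        ≤ C / Real.log t + 1 / M := heq ▸ hbound
      _ < ε / 2 + ε / 2 := by linarith
      _ = ε := by ring
  rw [Real.norm_eq_abs, abs_of_nonneg (div_nonneg hnum hlogσpos.le)]
  exact hfin
end
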